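/- arXiv:1206.4066 — 3 statements merged into one kernel-verified Lean document; each statement's English description precedes it below -/
import Mathlib

section
/- Let A_i = c^{−1}(i) for i = 1, …, k. Then for every integer m ≥ k, (−1)^{|V ∖ A|} · χ_{G,c}(−m) equals the number of pairs (ĉ, σ) where ĉ : V → {1,…,m} is a (not necessarily proper) extension of c of size m and σ is an acyclic orientation of G weakly compatible with ĉ such that for every i ∈ {1,…,k} there is no directed path of σ with both endpoints in A_i. -/
open Relation Set Function

namespace Stmt17

section RelLemmas
variable {α : Type*} {r : α → α → Prop} {u v : α}

lemma transGen_addEdge {x y : α}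
    (h : TransGen (fun a b => r a b ∨ (a = u ∧ b = v)) x y) :
    TransGen r x y ∨ (ReflTransGen r x u ∧ ReflTransGen r v y) := by
  induction h with
  | single h =>
    rcases h with h | ⟨rfl, rfl⟩
    · exact Or.inl (TransGen.single h)
    · exact Or.inr ⟨ReflTransGen.refl, ReflTransGen.refl⟩
  | tail h₁ h₂ ih =>
    rcases h₂ with h₂ | ⟨rfl, rfl⟩
    · rcases ih with ih | ⟨h3, h4⟩
      · exact Or.inl (ih.tail h₂)
      · exact Or.inr ⟨h3, h4.tail h₂⟩
    · rcases ih with ih | ⟨h3, _⟩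
      · exact Or.inr ⟨ih.to_reflTransGen, ReflTransGen.refl⟩
      · exact Or.inr ⟨h3, ReflTransGen.refl⟩

lemma transGen_addEdge_of_left {x y : α} (h : TransGen r x y) :
    TransGen (fun a b => r a b ∨ (a = u ∧ b = v)) x y :=
  TransGen.mono (fun _ _ h => Or.inl h) _ _ h

lemma transGen_addEdge_of_mid {x y : α} (h1 : ReflTransGen r x u) (h2 : ReflTransGen r v y) :
    TransGen (fun a b => r a b ∨ (a = u ∧ b = v)) x y := by
  have hm1 : ReflTransGen (fun a b => r a b ∨ (a = u ∧ b = v)) x u :=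
    ReflTransGen.mono (fun _ _ h => Or.inl h) _ _ h1
  have hm2 : ReflTransGen (fun a b => r a b ∨ (a = u ∧ b = v)) v y :=
    ReflTransGen.mono (fun _ _ h => Or.inl h) _ _ h2
  have hstep : TransGen (fun a b => r a b ∨ (a = u ∧ b = v)) u v :=
    TransGen.single (Or.inr ⟨rfl, rfl⟩)
  exact (TransGen.trans_right hm1 hstep).trans_left hm2

lemma rtg_antisymm (hacyc : ∀ x, ¬ TransGen r x x) {a b : α}
    (h1 : ReflTransGen r a b) (h2 : ReflTransGen r b a) : a = b := by
  rcases (reflTransGen_iff_eq_or_transGen.1 h1) with rfl | h1'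
  · rfl
  rcases (reflTransGen_iff_eq_or_transGen.1 h2) with rfl | h2'
  · rfl
  exact absurd (h1'.trans h2') (hacyc a)

/-- the "bridged" step relation used to analyse paths in the contracted graph -/
def SRel (r : α → α → Prop) (u v : α) : α → α → Prop :=
  fun p q => ∃ p₁ q₁, (p₁ = p ∨ (u = p₁ ∧ v = p) ∨ (v = p₁ ∧ u = p)) ∧ r p₁ q₁ ∧
    (q₁ = q ∨ (u = q₁ ∧ v = q) ∨ (v = q₁ ∧ u = q))

/-- the five-fold disjunction describing paths in the bridged relation -/
def DRel (r : α → α → Prop) (u v : α) : α → α → Prop := fun x y =>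
  TransGen r x y ∨
  (ReflTransGen r x u ∧ TransGen r v y) ∨ (TransGen r x u ∧ ReflTransGen r v y) ∨
  (ReflTransGen r x v ∧ TransGen r u y) ∨ (TransGen r x v ∧ ReflTransGen r u y)

lemma sRel_step (hacyc : ∀ x, ¬ TransGen r x x)
    (h1 : ¬ TransGen r u v) (h2 : ¬ TransGen r v u) {x y : α}
    (h : SRel r u v x y) : DRel r u v x y := by
  obtain ⟨p₁, q₁, hp, hr, hq⟩ := h
  rcases hp with rfl | ⟨rfl, rfl⟩ | ⟨rfl, rfl⟩
  · rcases hq with rfl | ⟨rfl, rfl⟩ | ⟨rfl, rfl⟩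
    · exact Or.inl (TransGen.single hr)
    · exact Or.inr (Or.inr (Or.inl ⟨TransGen.single hr, ReflTransGen.refl⟩))
    · exact Or.inr (Or.inr (Or.inr (Or.inr ⟨TransGen.single hr, ReflTransGen.refl⟩)))
  · rcases hq with rfl | ⟨rfl, rfl⟩ | ⟨rfl, rfl⟩
    · exact Or.inr (Or.inr (Or.inr (Or.inl ⟨ReflTransGen.refl, TransGen.single hr⟩)))
    · exact absurd (TransGen.single hr) (hacyc _)
    · exact absurd (TransGen.single hr) h1
  · rcases hq with rfl | ⟨rfl, rfl⟩ | ⟨rfl, rfl⟩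
    · exact Or.inr (Or.inl ⟨ReflTransGen.refl, TransGen.single hr⟩)
    · exact absurd (TransGen.single hr) h2
    · exact absurd (TransGen.single hr) (hacyc _)

lemma dRel_comp (hne : u ≠ v) (hacyc : ∀ x, ¬ TransGen r x x)
    (h1 : ¬ TransGen r u v) (h2 : ¬ TransGen r v u) {x z y : α}
    (hxz : DRel r u v x z) (hzy : DRel r u v z y) : DRel r u v x y := by
  have hanti := fun {a b : α} => rtg_antisymm (r := r) hacyc (a := a) (b := b)
  rcases hxz with hP | ⟨hPa, hPb⟩ | ⟨hPa, hPb⟩ | ⟨hPa, hPb⟩ | ⟨hPa, hPb⟩ <;>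
    rcases hzy with hQ | ⟨hQa, hQb⟩ | ⟨hQa, hQb⟩ | ⟨hQa, hQb⟩ | ⟨hQa, hQb⟩
  -- P = D1 : TransGen r x z
  · exact Or.inl (hP.trans hQ)
  · exact Or.inr (Or.inr (Or.inl ⟨hP.trans_left hQa, hQb.to_reflTransGen⟩))
  · exact Or.inr (Or.inr (Or.inl ⟨hP.trans hQa, hQb⟩))
  · exact Or.inr (Or.inr (Or.inr (Or.inr ⟨hP.trans_left hQa, hQb.to_reflTransGen⟩)))
  · exact Or.inr (Or.inr (Or.inr (Or.inr ⟨hP.trans hQa, hQb⟩)))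
  -- P = D2 : RTG x u ∧ TG v z
  · exact Or.inr (Or.inl ⟨hPa, hPb.trans hQ⟩)
  · exact absurd (hPb.trans_left hQa) h2
  · exact absurd (hPb.trans hQa) h2
  · exact absurd (hPb.trans_left hQa) (hacyc v)
  · exact absurd (hPb.trans hQa) (hacyc v)
  -- P = D3 : TG x u ∧ RTG v z
  · exact Or.inr (Or.inl ⟨hPa.to_reflTransGen, TransGen.trans_right hPb hQ⟩)
  · rcases (reflTransGen_iff_eq_or_transGen.1 (hPb.trans hQa)) with heq | ht
    · exact absurd heq hne
    · exact absurd ht h2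
  · exact absurd (TransGen.trans_right hPb hQa) h2
  · have hzv : z = v := hanti hQa hPb
    subst hzv
    exact Or.inl (hPa.trans hQb)
  · exact absurd (TransGen.trans_right hPb hQa) (hacyc v)
  -- P = D4 : RTG x v ∧ TG u z
  · exact Or.inr (Or.inr (Or.inr (Or.inl ⟨hPa, hPb.trans hQ⟩)))
  · exact absurd (hPb.trans_left hQa) (hacyc u)
  · exact absurd (hPb.trans hQa) (hacyc u)
  · exact absurd (hPb.trans_left hQa) h1
  · exact absurd (hPb.trans hQa) h1
  -- P = D5 : TG x v ∧ RTG u z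
  · exact Or.inr (Or.inr (Or.inr (Or.inl ⟨hPa.to_reflTransGen, TransGen.trans_right hPb hQ⟩)))
  · have hzu : z = u := hanti hQa hPb
    subst hzu
    exact Or.inl (hPa.trans hQb)
  · exact absurd (TransGen.trans_right hPb hQa) (hacyc u)
  · rcases (reflTransGen_iff_eq_or_transGen.1 (hPb.trans hQa)) with heq | ht
    · exact absurd heq hne.symm
    · exact absurd ht h1
  · exact absurd (TransGen.trans_right hPb hQa) h1

lemma transGen_sRel (hne : u ≠ v) (hacyc : ∀ x, ¬ TransGen r x x)
    (h1 : ¬ TransGen r u v) (h2 : ¬ TransGen r v u) {x y : α}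
    (h : TransGen (SRel r u v) x y) : DRel r u v x y := by
  induction h with
  | single h => exact sRel_step hacyc h1 h2 h
  | tail _ h₂ ih => exact dRel_comp hne hacyc h1 h2 ih (sRel_step hacyc h1 h2 h₂)

end RelLemmas

section GraphDefs

open SimpleGraph

variable {V : Type*}

/-- coloring conditions apart from properness -/
def Ext (A : Set V) (c : V → ℕ) (rp : V → V) (m : ℕ) (cc : V → ℕ) : Prop :=
  (∀ x, 1 ≤ cc x ∧ cc x ≤ m) ∧ (∀ a ∈ A, cc a = c a) ∧ (∀ x, cc x = cc (rp x))

/-- conditions on a weakly compatible acyclic orientation with no monochromatic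
`A`-to-`A` directed path -/
def Orient (G : SimpleGraph V) (A : Set V) (c : V → ℕ) (cc : V → ℕ) (o : V → V → Prop) : Prop :=
  (∀ x y, o x y → G.Adj x y) ∧ (∀ x y, G.Adj x y → (o x y ↔ ¬ o y x)) ∧
  (∀ x, ¬ Relation.TransGen o x x) ∧ (∀ x y, G.Adj x y → cc x < cc y → o x y) ∧
  (∀ a ∈ A, ∀ b ∈ A, c a = c b → ¬ Relation.TransGen o a b)

def colSet (G : SimpleGraph V) (A : Set V) (c : V → ℕ) (rp : V → V) (m : ℕ) : Set (V → ℕ) :=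
  {cc | Ext A c rp m cc ∧ ∀ x y, G.Adj x y → cc x ≠ cc y}

def pairSet (G : SimpleGraph V) (A : Set V) (c : V → ℕ) (rp : V → V) (m : ℕ) :
    Set ((V → ℕ) × (V → V → Prop)) :=
  {p | Ext A c rp m p.1 ∧ Orient G A c p.1 p.2}

lemma colSet_finite [Finite V] (G : SimpleGraph V) (A : Set V) (c : V → ℕ) (rp : V → V)
    (m : ℕ) : (colSet G A c rp m).Finite := by
  apply Set.Finite.subset (Set.finite_range
    (fun g : V → Fin (m + 1) => fun x => ((g x : ℕ))))
  rintro cc ⟨⟨h1, -, -⟩, -⟩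
  exact ⟨fun x => ⟨cc x, Nat.lt_succ_of_le (h1 x).2⟩, rfl⟩

lemma pairSet_finite [Finite V] (G : SimpleGraph V) (A : Set V) (c : V → ℕ) (rp : V → V)
    (m : ℕ) : (pairSet G A c rp m).Finite := by
  classical
  apply Set.Finite.subset (Set.finite_range
    (fun g : (V → Fin (m + 1)) × (V → V → Bool) =>
      ((fun x => ((g.1 x : ℕ))), (fun x y => g.2 x y = true))))
  rintro ⟨cc, o⟩ ⟨⟨h1, -, -⟩, -⟩
  refine ⟨⟨fun x => ⟨cc x, Nat.lt_succ_of_le (h1 x).2⟩, fun x y => if o x y then true else false⟩, ?_⟩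
  refine Prod.ext rfl ?_
  funext x y
  by_cases h : o x y <;> simp [h]

lemma orient_le {G : SimpleGraph V} {A : Set V} {c cc : V → ℕ} {o : V → V → Prop}
    (h : Orient G A c cc o) {x y : V} (hxy : o x y) : cc x ≤ cc y := by
  by_contra hlt
  have hadj := h.1 x y hxy
  have : o y x := h.2.2.2.1 y x hadj.symm (by omega)
  exact ((h.2.1 x y hadj).1 hxy) this

lemma orient_le_trans {G : SimpleGraph V} {A : Set V} {c cc : V → ℕ} {o : V → V → Prop}
    (h : Orient G A c cc o) {x y : V} (hxy : Relation.TransGen o x y) : cc x ≤ cc y := by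
  induction hxy with
  | single h1 => exact orient_le h h1
  | tail _ h2 ih => exact le_trans ih (orient_le h h2)

lemma orient_le_rtg {G : SimpleGraph V} {A : Set V} {c cc : V → ℕ} {o : V → V → Prop}
    (h : Orient G A c cc o) {x y : V} (hxy : Relation.ReflTransGen o x y) : cc x ≤ cc y := by
  rcases reflTransGen_iff_eq_or_transGen.1 hxy with rfl | h'
  · exact le_rfl
  · exact orient_le_trans h h'

/-- the interface between the literal statement and our bundled sets, `rp = id` -/
lemma colSet_id_eq (G : SimpleGraph V) (A : Set V) (c : V → ℕ) (m : ℕ) :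
    {cc : V → ℕ | (∀ v, 1 ≤ cc v ∧ cc v ≤ m) ∧ (∀ a ∈ A, cc a = c a) ∧
      ∀ u v : V, G.Adj u v → cc u ≠ cc v} = colSet G A c id m := by
  ext cc
  simp only [colSet, Ext, Set.mem_setOf_eq, id]
  tauto

lemma pairSet_id_eq (G : SimpleGraph V) (A : Set V) (k : ℕ) (c : V → ℕ)
    (hc : ∀ a ∈ A, 1 ≤ c a ∧ c a ≤ k) (m : ℕ) :
    {p : (V → ℕ) × (V → V → Prop) |
      (∀ v, 1 ≤ p.1 v ∧ p.1 v ≤ m) ∧ (∀ a ∈ A, p.1 a = c a) ∧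
      (∀ u v : V, p.2 u v → G.Adj u v) ∧
      (∀ u v : V, G.Adj u v → (p.2 u v ↔ ¬ p.2 v u)) ∧
      (∀ v : V, ¬ Relation.TransGen p.2 v v) ∧
      (∀ u v : V, G.Adj u v → p.1 u < p.1 v → p.2 u v) ∧
      (∀ i : ℕ, 1 ≤ i → i ≤ k →
        ¬ ∃ a ∈ A, ∃ b ∈ A, c a = i ∧ c b = i ∧ Relation.TransGen p.2 a b)} =
      pairSet G A c id m := by
  ext ⟨cc, o⟩
  simp only [pairSet, Ext, Orient, Set.mem_setOf_eq, id]
  constructor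
  · rintro ⟨h1, h2, h3, h4, h5, h6, h7⟩
    refine ⟨⟨h1, h2, fun _ => trivial⟩, h3, h4, h5, h6, ?_⟩
    intro a ha b hb hab htg
    exact h7 (c a) (hc a ha).1 (hc a ha).2 ⟨a, ha, b, hb, rfl, hab.symm, htg⟩
  · rintro ⟨⟨h1, h2, -⟩, h3, h4, h5, h6, h7⟩
    refine ⟨h1, h2, h3, h4, h5, h6, ?_⟩
    rintro i - - ⟨a, ha, b, hb, hca, hcb, htg⟩
    exact h7 a ha b hb (by omega) htg

end GraphDefs


section Contract

open SimpleGraph Relation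

variable {V : Type*}

def delG (G : SimpleGraph V) (u v : V) : SimpleGraph V := G.deleteEdges {s(u, v)}

open scoped Classical in
noncomputable def fmap (u v : V) : V → V := fun w => if w = v then u else w

def conG (G : SimpleGraph V) (u v : V) : SimpleGraph V :=
  SimpleGraph.fromRel (fun a b => ∃ x y, fmap u v x = a ∧ fmap u v y = b ∧ (delG G u v).Adj x y)

open scoped Classical in
noncomputable def conRp (rp : V → V) (u v : V) : V → V := fun x => if rp x = v then u else rp x

def Bad (A : Set V) (c : V → ℕ) (u v : V) (cc : V → ℕ) (o : V → V → Prop) : Prop :=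
  cc v < cc u ∨ Relation.TransGen o v u ∨
    ∃ a ∈ A, ∃ b ∈ A, c a = c b ∧ Relation.ReflTransGen o a u ∧ Relation.ReflTransGen o v b

def resO (u v : V) (o : V → V → Prop) : V → V → Prop :=
  fun x y => o x y ∧ ¬((x = u ∧ y = v) ∨ (x = v ∧ y = u))

def addO (u v : V) (o : V → V → Prop) : V → V → Prop := fun x y => o x y ∨ (x = u ∧ y = v)

def conO (u v : V) (τ : V → V → Prop) : V → V → Prop :=
  fun a b => ∃ x y, fmap u v x = a ∧ fmap u v y = b ∧ τ x y

def pullO (G : SimpleGraph V) (u v : V) (τ' : V → V → Prop) : V → V → Prop :=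
  fun x y => (delG G u v).Adj x y ∧ τ' (fmap u v x) (fmap u v y)

variable {G : SimpleGraph V} {A : Set V} {c : V → ℕ} {rp : V → V} {u v : V} {m : ℕ}

lemma delG_adj {x y : V} :
    (delG G u v).Adj x y ↔ G.Adj x y ∧ ¬((x = u ∧ y = v) ∨ (x = v ∧ y = u)) := by
  rw [delG, SimpleGraph.deleteEdges_adj, Set.mem_singleton_iff, Sym2.eq_iff]

lemma adj_del_or (hadj : G.Adj u v) {x y : V} (h : G.Adj x y) :
    (delG G u v).Adj x y ∨ ((x = u ∧ y = v) ∨ (x = v ∧ y = u)) := by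
  by_cases hc : (x = u ∧ y = v) ∨ (x = v ∧ y = u)
  · exact Or.inr hc
  · exact Or.inl (delG_adj.2 ⟨h, hc⟩)

lemma delG_le {x y : V} (h : (delG G u v).Adj x y) : G.Adj x y := (delG_adj.1 h).1

lemma fmap_v : fmap u v v = u := by
  classical
  simp [fmap]

lemma fmap_ne {x : V} (hxv : x ≠ v) : fmap u v x = x := by
  classical
  simp [fmap, hxv]

lemma fmap_ne_v (hne : u ≠ v) (x : V) : fmap u v x ≠ v := by
  classical
  unfold fmap
  split <;> simp_all

lemma fmap_eq_iff (hne : u ≠ v) {a b : V} :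
    fmap u v a = fmap u v b ↔ a = b ∨ (a = u ∧ b = v) ∨ (a = v ∧ b = u) := by
  classical
  unfold fmap
  split <;> split <;> rename_i h1 h2 <;> simp_all <;> tauto

lemma conG_adj_of (hne : u ≠ v) {x y : V} (h : (delG G u v).Adj x y) :
    (conG G u v).Adj (fmap u v x) (fmap u v y) := by
  rw [conG, SimpleGraph.fromRel_adj]
  constructor
  · intro heq
    rcases (fmap_eq_iff hne).1 heq with rfl | ⟨rfl, rfl⟩ | ⟨rfl, rfl⟩
    · exact h.ne rfl
    · exact (delG_adj.1 h).2 (Or.inl ⟨rfl, rfl⟩)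
    · exact (delG_adj.1 h).2 (Or.inr ⟨rfl, rfl⟩)
  · exact Or.inl ⟨x, y, rfl, rfl, h⟩

lemma conG_adj_elim (h : (conG G u v).Adj a b) :
    ∃ x y, fmap u v x = a ∧ fmap u v y = b ∧ (delG G u v).Adj x y := by
  rw [conG, SimpleGraph.fromRel_adj] at h
  rcases h.2 with ⟨x, y, hx, hy, hxy⟩ | ⟨x, y, hx, hy, hxy⟩
  · exact ⟨x, y, hx, hy, hxy⟩
  · exact ⟨y, x, hy, hx, hxy.symm⟩

lemma cc_fmap {cc : V → ℕ} (hcc : cc u = cc v) (x : V) : cc (fmap u v x) = cc x := by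
  classical
  unfold fmap
  split <;> simp_all

end Contract


section Deletion

open SimpleGraph Relation

variable {V : Type*} {G : SimpleGraph V} {A : Set V} {c : V → ℕ} {rp : V → V} {u v : V} {m : ℕ}

lemma res_mem {p : (V → ℕ) × (V → V → Prop)} (hp : p ∈ pairSet G A c rp m) :
    (p.1, resO u v p.2) ∈ pairSet (delG G u v) A c rp m := by
  obtain ⟨hext, h1, h2, h3, h4, h5⟩ := hp
  refine ⟨hext, ?_, ?_, ?_, ?_, ?_⟩
  · rintro x y ⟨hxy, hnp⟩
    exact delG_adj.2 ⟨h1 x y hxy, hnp⟩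
  · intro x y hxy
    obtain ⟨hadjG, hnp⟩ := delG_adj.1 hxy
    have hnp' : ¬((y = u ∧ x = v) ∨ (y = v ∧ x = u)) := by tauto
    constructor
    · rintro ⟨ho, -⟩ ⟨ho', -⟩
      exact (h2 x y hadjG).1 ho ho'
    · intro hno
      refine ⟨(h2 x y hadjG).2 ?_, hnp⟩
      intro ho'
      exact hno ⟨ho', hnp'⟩
  · intro x hx
    exact h3 x (TransGen.mono (fun a b hab => hab.1) _ _ hx)
  · intro x y hxy hlt
    obtain ⟨hadjG, hnp⟩ := delG_adj.1 hxy
    exact ⟨h4 x y hadjG hlt, hnp⟩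
  · intro a ha b hb hab htg
    exact h5 a ha b hb hab (TransGen.mono (fun a b hab => hab.1) _ _ htg)

lemma notBad_res {p : (V → ℕ) × (V → V → Prop)} (hp : p ∈ pairSet G A c rp m)
    (ho : p.2 u v) : ¬ Bad A c u v p.1 (resO u v p.2) := by
  obtain ⟨hext, h1, h2, h3, h4, h5⟩ := hp
  have hadj : G.Adj u v := h1 u v ho
  rintro (hd1 | hd2 | ⟨a, ha, b, hb, hab, hau, hvb⟩)
  · exact (h2 u v hadj).1 ho (h4 v u hadj.symm hd1)
  · exact h3 v ((TransGen.mono (fun a b hab => hab.1) _ _ hd2).tail ho)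
  · have hau' : ReflTransGen p.2 a u := ReflTransGen.mono (fun a b hab => hab.1) _ _ hau
    have hvb' : ReflTransGen p.2 v b := ReflTransGen.mono (fun a b hab => hab.1) _ _ hvb
    exact h5 a ha b hb hab
      (TransGen.trans_right hau' ((TransGen.single ho).trans_left hvb'))

lemma add_mem {cc : V → ℕ} {τ : V → V → Prop} (hadj : G.Adj u v)
    (hτ : (cc, τ) ∈ pairSet (delG G u v) A c rp m) (hnb : ¬ Bad A c u v cc τ) :
    (cc, addO u v τ) ∈ pairSet G A c rp m := by
  obtain ⟨hext, h1, h2, h3, h4, h5⟩ := hτ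
  have hd1 : ¬ (cc v < cc u) := fun h => hnb (Or.inl h)
  have hd2 : ¬ TransGen τ v u := fun h => hnb (Or.inr (Or.inl h))
  have hd3 : ¬ ∃ a ∈ A, ∃ b ∈ A, c a = c b ∧ ReflTransGen τ a u ∧ ReflTransGen τ v b :=
    fun h => hnb (Or.inr (Or.inr h))
  have hτvu : ¬ τ v u := fun h => (delG_adj.1 (h1 v u h)).2 (Or.inr ⟨rfl, rfl⟩)
  have hτuv : ¬ τ u v := fun h => (delG_adj.1 (h1 u v h)).2 (Or.inl ⟨rfl, rfl⟩)
  refine ⟨hext, ?_, ?_, ?_, ?_, ?_⟩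
  · rintro x y (hxy | ⟨rfl, rfl⟩)
    · exact delG_le (h1 x y hxy)
    · exact hadj
  · intro x y hxy
    rcases adj_del_or hadj hxy with hdel | ⟨rfl, rfl⟩ | ⟨rfl, rfl⟩
    · obtain ⟨-, hnp⟩ := delG_adj.1 hdel
      constructor
      · rintro (ho | hp) (ho' | hp')
        · exact (h2 x y hdel).1 ho ho'
        · exact hnp (Or.inr ⟨hp'.2, hp'.1⟩)
        · exact hnp (Or.inl hp)
        · exact hnp (Or.inl hp)
      · intro hno
        exact Or.inl ((h2 x y hdel).2 fun ho' => hno (Or.inl ho'))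
    · constructor
      · rintro - (ho' | ⟨h, -⟩)
        · exact hτvu ho'
        · exact hadj.ne h.symm
      · intro _
        exact Or.inr ⟨rfl, rfl⟩
    · constructor
      · rintro (ho | ⟨h, -⟩)
        · exact absurd ho hτvu
        · exact absurd h.symm hadj.ne
      · intro hno
        exact absurd (Or.inr ⟨rfl, rfl⟩) hno
  · intro x hx
    rcases transGen_addEdge hx with hcyc | ⟨hxu, hvx⟩
    · exact h3 x hcyc
    · rcases reflTransGen_iff_eq_or_transGen.1 (hvx.trans hxu) with heq | ht
      · exact hadj.ne heq
      · exact hd2 ht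
  · intro x y hxy hlt
    rcases adj_del_or hadj hxy with hdel | ⟨rfl, rfl⟩ | ⟨rfl, rfl⟩
    · exact Or.inl (h4 x y hdel hlt)
    · exact Or.inr ⟨rfl, rfl⟩
    · exact absurd hlt hd1
  · intro a ha b hb hab htg
    rcases transGen_addEdge htg with ht | ⟨hau, hvb⟩
    · exact h5 a ha b hb hab ht
    · exact hd3 ⟨a, ha, b, hb, hab, hau, hvb⟩

lemma resO_addO {τ : V → V → Prop} (hsub : ∀ x y, τ x y → (delG G u v).Adj x y) :
    resO u v (addO u v τ) = τ := by
  funext x y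
  apply propext
  constructor
  · rintro ⟨(h | ⟨rfl, rfl⟩), hnp⟩
    · exact h
    · exact absurd (Or.inl ⟨rfl, rfl⟩) hnp
  · intro h
    exact ⟨Or.inl h, (delG_adj.1 (hsub x y h)).2⟩

lemma addO_resO {o : V → V → Prop} (ho : o u v) (hsub : ∀ x y, o x y → G.Adj x y)
    (hiff : ∀ x y, G.Adj x y → (o x y ↔ ¬ o y x)) : addO u v (resO u v o) = o := by
  funext x y
  apply propext
  constructor
  · rintro (⟨h, -⟩ | ⟨rfl, rfl⟩)
    · exact h
    · exact ho
  · intro h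
    by_cases hp : (x = u ∧ y = v) ∨ (x = v ∧ y = u)
    · rcases hp with ⟨rfl, rfl⟩ | ⟨rfl, rfl⟩
      · exact Or.inr ⟨rfl, rfl⟩
      · exact absurd ho ((hiff x y (hsub x y h)).1 h)
    · exact Or.inl ⟨h, hp⟩

lemma card_dir [Finite V] (hadj : G.Adj u v) :
    {p ∈ pairSet G A c rp m | p.2 u v}.ncard
      = {p ∈ pairSet (delG G u v) A c rp m | ¬ Bad A c u v p.1 p.2}.ncard := by
  have himg : {p ∈ pairSet (delG G u v) A c rp m | ¬ Bad A c u v p.1 p.2}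
      = (fun p : (V → ℕ) × (V → V → Prop) => (p.1, resO u v p.2)) ''
        {p ∈ pairSet G A c rp m | p.2 u v} := by
    ext ⟨cc, τ⟩
    constructor
    · rintro ⟨hτ, hnb⟩
      refine ⟨(cc, addO u v τ), ⟨add_mem hadj hτ hnb, Or.inr ⟨rfl, rfl⟩⟩, ?_⟩
      show (cc, resO u v (addO u v τ)) = (cc, τ)
      rw [resO_addO hτ.2.1]
    · rintro ⟨⟨cc', o⟩, ⟨hp, ho⟩, heq⟩
      simp only [Prod.mk.injEq] at heq
      obtain ⟨rfl, rfl⟩ := heq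
      exact ⟨res_mem hp, notBad_res hp ho⟩
  rw [himg, Set.ncard_image_of_injOn]
  rintro ⟨cc, o⟩ ⟨hp, ho⟩ ⟨cc', o'⟩ ⟨hp', ho'⟩ heq
  simp only [Prod.mk.injEq] at heq
  obtain ⟨rfl, hres⟩ := heq
  have : addO u v (resO u v o) = addO u v (resO u v o') := by rw [hres]
  rw [addO_resO ho hp.2.1 hp.2.2.1, addO_resO ho' hp'.2.1 hp'.2.2.1] at this
  exact Prod.ext rfl this

end Deletion


section ClaimX

open SimpleGraph Relation

variable {V : Type*} {G : SimpleGraph V} {A : Set V} {c : V → ℕ} {rp : V → V} {u v : V} {m : ℕ}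

lemma claimX (hadj : G.Adj u v) (hX : ¬(u ∈ A ∧ v ∈ A ∧ c u = c v))
    {p : (V → ℕ) × (V → V → Prop)} (hp : p ∈ pairSet (delG G u v) A c rp m) :
    ¬(Bad A c u v p.1 p.2 ∧ Bad A c v u p.1 p.2) := by
  obtain ⟨hext, hor⟩ := hp
  obtain ⟨hb, hA, hrp⟩ := hext
  have h3 := hor.2.2.1
  have h5 := hor.2.2.2.2
  rintro ⟨hd1 | hd2 | ⟨a, ha, b, hb', hab, hau, hvb⟩, he1 | he2 | ⟨a', ha', b', hb'', hab', hav, hub⟩⟩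
  · omega
  · have := orient_le_trans hor he2
    omega
  · have h1 := orient_le_rtg hor hav
    have h2 := orient_le_rtg hor hub
    have e1 : p.1 a' = c a' := hA a' ha'
    have e2 : p.1 b' = c b' := hA b' hb''
    omega
  · have := orient_le_trans hor hd2
    omega
  · exact h3 v (hd2.trans he2)
  · exact h5 a' ha' b' hb'' hab' (TransGen.trans_right hav (hd2.trans_left hub))
  · have h1 := orient_le_rtg hor hau
    have h2 := orient_le_rtg hor hvb
    have e1 : p.1 a = c a := hA a ha
    have e2 : p.1 b = c b := hA b hb'
    omega
  · exact h5 a ha b hb' hab (TransGen.trans_right hau (he2.trans_left hvb))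
  · -- both path-type obstructions: forces u, v ∈ A with equal colors
    have eab : p.1 a = p.1 b := by rw [hA a ha, hA b hb', hab]
    have eab' : p.1 a' = p.1 b' := by rw [hA a' ha', hA b' hb'', hab']
    have l1 := orient_le_rtg hor hau
    have l2 := orient_le_rtg hor hvb
    have l3 := orient_le_rtg hor hav
    have l4 := orient_le_rtg hor hub
    have hcc : p.1 a = p.1 a' := by omega
    have hab2 : ReflTransGen p.2 a b' := hau.trans hub
    have hab2' : ReflTransGen p.2 a' b := hav.trans hvb
    have hca_b' : c a = c b' := by
      have := hA a ha; have := hA b' hb''; omega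
    have hca'_b : c a' = c b := by
      have := hA a' ha'; have := hA b hb'; omega
    rcases reflTransGen_iff_eq_or_transGen.1 hab2 with heq1 | ht1
    · rcases reflTransGen_iff_eq_or_transGen.1 hab2' with heq2 | ht2
      · -- b' = a and b = a'
        have hub' : ReflTransGen p.2 u a := heq1 ▸ hub
        have hvb' : ReflTransGen p.2 v a' := heq2 ▸ hvb
        have hua : u = a := rtg_antisymm h3 hub' hau
        have hva' : v = a' := rtg_antisymm h3 hvb' hav
        refine hX ⟨?_, ?_, ?_⟩
        · rw [hua]; exact ha
        · rw [hva']; exact ha'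
        · rw [hua, hva']
          have := hA a ha; have := hA a' ha'; omega
      · exact h5 a' ha' b hb' hca'_b ht2
    · exact h5 a ha b' hb'' hca_b' ht1

end ClaimX


section Splits

open SimpleGraph Relation

variable {V : Type*} {G : SimpleGraph V} {A : Set V} {c : V → ℕ} {rp : V → V} {u v : V} {m : ℕ}

lemma delG_swap : delG G v u = delG G u v := by
  unfold delG
  rw [Sym2.eq_swap]

lemma card_pair_del [Finite V] (hadj : G.Adj u v) (hX : ¬(u ∈ A ∧ v ∈ A ∧ c u = c v)) :
    (pairSet G A c rp m).ncard = (pairSet (delG G u v) A c rp m).ncard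
      + {p ∈ pairSet (delG G u v) A c rp m |
          ¬ Bad A c u v p.1 p.2 ∧ ¬ Bad A c v u p.1 p.2}.ncard := by
  classical
  have hfinG := pairSet_finite G A c rp m
  have hfinD := pairSet_finite (delG G u v) A c rp m
  have hS : {p ∈ pairSet G A c rp m | p.2 u v} ∪ {p ∈ pairSet G A c rp m | p.2 v u}
      = pairSet G A c rp m := by
    ext p
    constructor
    · rintro (⟨hp, -⟩ | ⟨hp, -⟩) <;> exact hp
    · intro hp
      by_cases ho : p.2 u v
      · exact Or.inl ⟨hp, ho⟩
      · exact Or.inr ⟨hp, (hp.2.2.1 v u hadj.symm).2 ho⟩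
  have hSdisj : Disjoint {p ∈ pairSet G A c rp m | p.2 u v}
      {p ∈ pairSet G A c rp m | p.2 v u} := by
    rw [Set.disjoint_left]
    rintro p ⟨hp, h1⟩ ⟨-, h2⟩
    exact (hp.2.2.1 u v hadj).1 h1 h2
  have hB : {p ∈ pairSet (delG G u v) A c rp m | ¬ Bad A c u v p.1 p.2}
      ∪ {p ∈ pairSet (delG G u v) A c rp m | ¬ Bad A c v u p.1 p.2}
      = pairSet (delG G u v) A c rp m := by
    ext p
    constructor
    · rintro (⟨hp, -⟩ | ⟨hp, -⟩) <;> exact hp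
    · intro hp
      by_cases hb1 : Bad A c u v p.1 p.2
      · exact Or.inr ⟨hp, fun hb2 => claimX hadj hX hp ⟨hb1, hb2⟩⟩
      · exact Or.inl ⟨hp, hb1⟩
  have hBint : {p ∈ pairSet (delG G u v) A c rp m | ¬ Bad A c u v p.1 p.2}
      ∩ {p ∈ pairSet (delG G u v) A c rp m | ¬ Bad A c v u p.1 p.2}
      = {p ∈ pairSet (delG G u v) A c rp m |
          ¬ Bad A c u v p.1 p.2 ∧ ¬ Bad A c v u p.1 p.2} := by
    ext p
    simp only [Set.mem_inter_iff, Set.mem_setOf_eq]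
    tauto
  have hdir2 : {p ∈ pairSet G A c rp m | p.2 v u}.ncard
      = {p ∈ pairSet (delG G u v) A c rp m | ¬ Bad A c v u p.1 p.2}.ncard := by
    have := card_dir (G := G) (A := A) (c := c) (rp := rp) (m := m) hadj.symm
    rwa [delG_swap] at this
  calc (pairSet G A c rp m).ncard
      = ({p ∈ pairSet G A c rp m | p.2 u v} ∪ {p ∈ pairSet G A c rp m | p.2 v u}).ncard := by
        rw [hS]
    _ = {p ∈ pairSet G A c rp m | p.2 u v}.ncard
        + {p ∈ pairSet G A c rp m | p.2 v u}.ncard := by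
        exact Set.ncard_union_eq hSdisj (hfinG.subset (fun p hp => hp.1))
          (hfinG.subset (fun p hp => hp.1))
    _ = {p ∈ pairSet (delG G u v) A c rp m | ¬ Bad A c u v p.1 p.2}.ncard
        + {p ∈ pairSet (delG G u v) A c rp m | ¬ Bad A c v u p.1 p.2}.ncard := by
        rw [card_dir hadj, hdir2]
    _ = (pairSet (delG G u v) A c rp m).ncard
        + {p ∈ pairSet (delG G u v) A c rp m |
            ¬ Bad A c u v p.1 p.2 ∧ ¬ Bad A c v u p.1 p.2}.ncard := by
        rw [← Set.ncard_union_add_ncard_inter _ _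
          (hfinD.subset (fun p hp => hp.1)) (hfinD.subset (fun p hp => hp.1)), hB, hBint]

lemma colSet_del_eq (hadj : G.Adj u v) :
    colSet G A c rp m = {cc ∈ colSet (delG G u v) A c rp m | cc u ≠ cc v} := by
  ext cc
  constructor
  · rintro ⟨hext, hprop⟩
    exact ⟨⟨hext, fun x y hxy => hprop x y (delG_le hxy)⟩, hprop u v hadj⟩
  · rintro ⟨⟨hext, hprop⟩, hne⟩
    refine ⟨hext, fun x y hxy => ?_⟩
    rcases adj_del_or hadj hxy with hdel | ⟨rfl, rfl⟩ | ⟨rfl, rfl⟩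
    · exact hprop x y hdel
    · exact hne
    · exact fun h => hne h.symm

lemma colSet_con_eq (hadj : G.Adj u v) (hrv : rp v = v) :
    colSet (conG G u v) A c (conRp rp u v) m
      = {cc ∈ colSet (delG G u v) A c rp m | cc u = cc v} := by
  classical
  have hne : u ≠ v := hadj.ne
  ext cc
  constructor
  · rintro ⟨⟨hb, hA, hrp'⟩, hprop'⟩
    have hcuv : cc u = cc v := by
      have := hrp' v
      rw [show conRp rp u v v = u by simp [conRp, hrv]] at this
      omega
    refine ⟨⟨⟨hb, hA, ?_⟩, ?_⟩, hcuv⟩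
    · intro x
      have hx := hrp' x
      by_cases hxv : rp x = v
      · rw [show conRp rp u v x = u by simp [conRp, hxv]] at hx
        rw [hxv]
        omega
      · rwa [show conRp rp u v x = rp x by simp [conRp, hxv]] at hx
    · intro x y hxy h
      refine hprop' (fmap u v x) (fmap u v y) (conG_adj_of hne hxy) ?_
      rw [cc_fmap hcuv, cc_fmap hcuv, h]
  · rintro ⟨⟨⟨hb, hA, hrp'⟩, hprop⟩, hcuv⟩
    refine ⟨⟨hb, hA, ?_⟩, ?_⟩
    · intro x
      by_cases hxv : rp x = v
      · rw [show conRp rp u v x = u by simp [conRp, hxv]]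
        have := hrp' x
        rw [hxv] at this
        omega
      · rw [show conRp rp u v x = rp x by simp [conRp, hxv]]
        exact hrp' x
    · intro a b hab h
      obtain ⟨x, y, rfl, rfl, hdel⟩ := conG_adj_elim hab
      rw [cc_fmap hcuv, cc_fmap hcuv] at h
      exact hprop x y hdel h

lemma card_col_del [Finite V] (hadj : G.Adj u v) (hrv : rp v = v) :
    (colSet (delG G u v) A c rp m).ncard
      = (colSet G A c rp m).ncard + (colSet (conG G u v) A c (conRp rp u v) m).ncard := by
  classical
  have hfinD := colSet_finite (delG G u v) A c rp m
  have hU : colSet G A c rp m ∪ colSet (conG G u v) A c (conRp rp u v) m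
      = colSet (delG G u v) A c rp m := by
    rw [colSet_del_eq hadj, colSet_con_eq hadj hrv]
    ext cc
    simp only [Set.mem_union, Set.mem_setOf_eq]
    by_cases h : cc u = cc v <;> tauto
  have hdisj : Disjoint (colSet G A c rp m) (colSet (conG G u v) A c (conRp rp u v) m) := by
    rw [colSet_del_eq hadj, colSet_con_eq hadj hrv, Set.disjoint_left]
    rintro cc ⟨-, h1⟩ ⟨-, h2⟩
    exact h1 h2
  have hf1 : (colSet G A c rp m).Finite := colSet_finite G A c rp m
  have hf2 : (colSet (conG G u v) A c (conRp rp u v) m).Finite :=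
    colSet_finite (conG G u v) A c (conRp rp u v) m
  rw [← hU, Set.ncard_union_eq hdisj hf1 hf2]

end Splits


section ConPairs

open SimpleGraph Relation

variable {V : Type*} {G : SimpleGraph V} {A : Set V} {c : V → ℕ} {rp : V → V} {u v : V} {m : ℕ}

lemma bIff (hne : u ≠ v) {p₁ p : V} :
    (p₁ = p ∨ (u = p₁ ∧ v = p) ∨ (v = p₁ ∧ u = p)) ↔ fmap u v p₁ = fmap u v p := by
  rw [fmap_eq_iff hne]
  constructor
  · rintro (h | ⟨h1, h2⟩ | ⟨h1, h2⟩)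
    · exact Or.inl h
    · exact Or.inr (Or.inl ⟨h1.symm, h2.symm⟩)
    · exact Or.inr (Or.inr ⟨h1.symm, h2.symm⟩)
  · rintro (h | ⟨h1, h2⟩ | ⟨h1, h2⟩)
    · exact Or.inl h
    · exact Or.inr (Or.inl ⟨h1.symm, h2.symm⟩)
    · exact Or.inr (Or.inr ⟨h1.symm, h2.symm⟩)

lemma fmap_cases (hne : u ≠ v) {x a : V} (h : fmap u v x = a) :
    x = a ∨ (x = v ∧ a = u) := by
  classical
  by_cases hx : x = v
  · subst hx
    rw [fmap_v] at h
    exact Or.inr ⟨rfl, h.symm⟩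
  · rw [fmap_ne hx] at h
    exact Or.inl h

lemma transGen_conO_lift (hne : u ≠ v) {τ : V → V → Prop} {a b : V}
    (h : TransGen (conO u v τ) a b) :
    ∃ x y, fmap u v x = a ∧ fmap u v y = b ∧ TransGen (SRel τ u v) x y := by
  induction h with
  | single h =>
    obtain ⟨x, y, hx, hy, hτ⟩ := h
    exact ⟨x, y, hx, hy, TransGen.single ⟨x, y, Or.inl rfl, hτ, Or.inl rfl⟩⟩
  | tail h1 h2 ih =>
    obtain ⟨x, y₁, hx, hy₁, hS⟩ := ih
    obtain ⟨x₂, y₂, hx₂, hy₂, hτ⟩ := h2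
    refine ⟨x, y₂, hx, hy₂, hS.tail ⟨x₂, y₂, (bIff hne).2 (by rw [hx₂, hy₁]), hτ, Or.inl rfl⟩⟩

lemma rtg_ne_tg {r : V → V → Prop} {a b : V} (h : ReflTransGen r a b) (hne : a ≠ b) :
    TransGen r a b := by
  rcases reflTransGen_iff_eq_or_transGen.1 h with rfl | h'
  · exact absurd rfl hne
  · exact h'

lemma con_mem {cc : V → ℕ} {τ : V → V → Prop} (hadj : G.Adj u v) (hvA : v ∉ A)
    (hrv : rp v = v)
    (hmem : (cc, τ) ∈ pairSet (delG G u v) A c rp m)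
    (hnb1 : ¬ Bad A c u v cc τ) (hnb2 : ¬ Bad A c v u cc τ) :
    (cc, conO u v τ) ∈ pairSet (conG G u v) A c (conRp rp u v) m := by
  classical
  have hne : u ≠ v := hadj.ne
  obtain ⟨⟨hb, hA, hrp⟩, h1, h2, h3, h4, h5⟩ := hmem
  have hb' : ∀ x, 1 ≤ cc x ∧ cc x ≤ m := hb
  have hA' : ∀ a ∈ A, cc a = c a := hA
  have hrp' : ∀ x, cc x = cc (rp x) := hrp
  have h1' : ∀ x y, τ x y → (delG G u v).Adj x y := h1
  have h2' : ∀ x y, (delG G u v).Adj x y → (τ x y ↔ ¬ τ y x) := h2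
  have h3' : ∀ x, ¬ TransGen τ x x := h3
  have h4' : ∀ x y, (delG G u v).Adj x y → cc x < cc y → τ x y := h4
  have h5' : ∀ a ∈ A, ∀ b ∈ A, c a = c b → ¬ TransGen τ a b := h5
  have hcuv : cc u = cc v := by
    have d1 : ¬ (cc v < cc u) := fun h => hnb1 (Or.inl h)
    have d2 : ¬ (cc u < cc v) := fun h => hnb2 (Or.inl h)
    omega
  have hτuv : ¬ TransGen τ u v := fun h => hnb2 (Or.inr (Or.inl h))
  have hτvu : ¬ TransGen τ v u := fun h => hnb1 (Or.inr (Or.inl h))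
  have hDfull : ∀ x y : V, TransGen (SRel τ u v) x y → DRel τ u v x y :=
    fun x y h => transGen_sRel hne h3' hτuv hτvu h
  have hacyc' : ∀ a : V, ¬ TransGen (conO u v τ) a a := by
    intro a ha
    obtain ⟨x, y, hx, hy, hS⟩ := transGen_conO_lift hne ha
    have hfxy : fmap u v x = fmap u v y := by rw [hx, hy]
    have hD := hDfull x y hS
    rcases (fmap_eq_iff hne).1 hfxy with heq | ⟨hxu, hyv⟩ | ⟨hxv, hyu⟩
    · rw [heq] at hD
      rcases hD with hD | ⟨hDa, hDb⟩ | ⟨hDa, hDb⟩ | ⟨hDa, hDb⟩ | ⟨hDa, hDb⟩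
      · exact h3' y hD
      · exact hτvu (hDb.trans_left hDa)
      · exact hτvu (TransGen.trans_right hDb hDa)
      · exact hτuv (hDb.trans_left hDa)
      · exact hτuv (TransGen.trans_right hDb hDa)
    · rw [hxu, hyv] at hD
      rcases hD with hD | ⟨hDa, hDb⟩ | ⟨hDa, hDb⟩ | ⟨hDa, hDb⟩ | ⟨hDa, hDb⟩
      · exact hτuv hD
      · exact h3' v hDb
      · exact h3' u hDa
      · exact hτuv hDb
      · exact hτuv hDa
    · rw [hxv, hyu] at hD
      rcases hD with hD | ⟨hDa, hDb⟩ | ⟨hDa, hDb⟩ | ⟨hDa, hDb⟩ | ⟨hDa, hDb⟩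
      · exact hτvu hD
      · exact hτvu hDb
      · exact hτvu hDa
      · exact h3' u hDb
      · exact h3' v hDa
  refine ⟨⟨hb, hA, ?_⟩, ?_, ?_, hacyc', ?_, ?_⟩
  · intro x
    show cc x = cc (conRp rp u v x)
    by_cases hxv : rp x = v
    · rw [show conRp rp u v x = u by simp [conRp, hxv]]
      have hx := hrp' x
      rw [hxv] at hx
      omega
    · rw [show conRp rp u v x = rp x by simp [conRp, hxv]]
      exact hrp' x
  · rintro a b ⟨x, y, rfl, rfl, hτ⟩
    exact conG_adj_of hne (h1' x y hτ)
  · intro a b hab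
    constructor
    · intro h h'
      exact hacyc' a ((TransGen.single h).tail h')
    · intro hno
      obtain ⟨x, y, hx, hy, hdel⟩ := conG_adj_elim hab
      by_cases hτxy : τ x y
      · exact hx ▸ hy ▸ ⟨x, y, rfl, rfl, hτxy⟩
      · have : τ y x := (h2' y x hdel.symm).2 hτxy
        exact absurd (hx ▸ hy ▸ ⟨y, x, rfl, rfl, this⟩) hno
  · intro a b hab hlt
    obtain ⟨x, y, hx, hy, hdel⟩ := conG_adj_elim hab
    have hlt' : cc a < cc b := hlt
    have e1 : cc a = cc x := hx ▸ cc_fmap hcuv x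
    have e2 : cc b = cc y := hy ▸ cc_fmap hcuv y
    exact hx ▸ hy ▸ ⟨x, y, rfl, rfl, h4' x y hdel (by omega)⟩
  · intro a ha b hb2 hab htg
    obtain ⟨x, y, hx, hy, hS⟩ := transGen_conO_lift hne htg
    have hD := hDfull x y hS
    have hab' : c a = c b := hab
    rcases fmap_cases hne hx with hxa | ⟨hxv, hau⟩ <;>
      rcases fmap_cases hne hy with hyb | ⟨hyv, hbu⟩
    · -- x = a, y = b
      rw [hxa, hyb] at hD
      rcases hD with hD | ⟨hDa, hDb⟩ | ⟨hDa, hDb⟩ | ⟨hDa, hDb⟩ | ⟨hDa, hDb⟩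
      · exact h5' a ha b hb2 hab' hD
      · exact hnb1 (Or.inr (Or.inr ⟨a, ha, b, hb2, hab', hDa, hDb.to_reflTransGen⟩))
      · exact hnb1 (Or.inr (Or.inr ⟨a, ha, b, hb2, hab', hDa.to_reflTransGen, hDb⟩))
      · exact hnb2 (Or.inr (Or.inr ⟨a, ha, b, hb2, hab', hDa, hDb.to_reflTransGen⟩))
      · exact hnb2 (Or.inr (Or.inr ⟨a, ha, b, hb2, hab', hDa.to_reflTransGen, hDb⟩))
    · -- x = a, y = v, b = u
      rw [hxa, hyv] at hD
      rw [hbu] at hb2 hab'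
      rcases hD with hD | ⟨hDa, hDb⟩ | ⟨hDa, hDb⟩ | ⟨hDa, hDb⟩ | ⟨hDa, hDb⟩
      · exact hnb2 (Or.inr (Or.inr ⟨a, ha, u, hb2, hab', hD.to_reflTransGen, ReflTransGen.refl⟩))
      · exact h3' v hDb
      · exact h5' a ha u hb2 hab' hDa
      · exact hτuv hDb
      · exact hnb2 (Or.inr (Or.inr ⟨a, ha, u, hb2, hab', hDa.to_reflTransGen, ReflTransGen.refl⟩))
    · -- x = v, a = u, y = b
      rw [hxv, hyb] at hD
      rw [hau] at ha hab'
      rcases hD with hD | ⟨hDa, hDb⟩ | ⟨hDa, hDb⟩ | ⟨hDa, hDb⟩ | ⟨hDa, hDb⟩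
      · exact hnb1 (Or.inr (Or.inr ⟨u, ha, b, hb2, hab', ReflTransGen.refl, hD.to_reflTransGen⟩))
      · exact hτvu (rtg_ne_tg hDa (Ne.symm hne))
      · exact hτvu hDa
      · exact h5' u ha b hb2 hab' hDb
      · exact h3' v hDa
    · -- x = v, a = u, y = v, b = u
      rw [hxv, hyv] at hD
      rcases hD with hD | ⟨hDa, hDb⟩ | ⟨hDa, hDb⟩ | ⟨hDa, hDb⟩ | ⟨hDa, hDb⟩
      · exact h3' v hD
      · exact h3' v hDb
      · exact hτvu hDa
      · exact hτuv hDb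
      · exact h3' v hDa

end ConPairs


section PullPairs

open SimpleGraph Relation

variable {V : Type*} {G : SimpleGraph V} {A : Set V} {c : V → ℕ} {rp : V → V} {u v : V} {m : ℕ}

lemma pull_mem {cc : V → ℕ} {τ' : V → V → Prop} (hadj : G.Adj u v) (hvA : v ∉ A)
    (hrv : rp v = v)
    (hmem : (cc, τ') ∈ pairSet (conG G u v) A c (conRp rp u v) m) :
    (cc, pullO G u v τ') ∈ pairSet (delG G u v) A c rp m ∧
      ¬ Bad A c u v cc (pullO G u v τ') ∧ ¬ Bad A c v u cc (pullO G u v τ') := by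
  classical
  have hne : u ≠ v := hadj.ne
  obtain ⟨⟨hb, hA, hrpc⟩, g1, g2, g3, g4, g5⟩ := hmem
  have hb' : ∀ x, 1 ≤ cc x ∧ cc x ≤ m := hb
  have hA' : ∀ a ∈ A, cc a = c a := hA
  have hrpc' : ∀ x, cc x = cc (conRp rp u v x) := hrpc
  have g1' : ∀ a b, τ' a b → (conG G u v).Adj a b := g1
  have g2' : ∀ a b, (conG G u v).Adj a b → (τ' a b ↔ ¬ τ' b a) := g2
  have g3' : ∀ a, ¬ TransGen τ' a a := g3
  have g4' : ∀ a b, (conG G u v).Adj a b → cc a < cc b → τ' a b := g4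
  have g5' : ∀ a ∈ A, ∀ b ∈ A, c a = c b → ¬ TransGen τ' a b := g5
  have hcuv : cc u = cc v := by
    have := hrpc' v
    rw [show conRp rp u v v = u by simp [conRp, hrv]] at this
    omega
  have hlift : ∀ x y, TransGen (pullO G u v τ') x y →
      TransGen τ' (fmap u v x) (fmap u v y) :=
    fun x y h => h.lift (fmap u v) (fun a b hab => hab.2)
  have hliftR : ∀ x y, ReflTransGen (pullO G u v τ') x y →
      ReflTransGen τ' (fmap u v x) (fmap u v y) :=
    fun x y h => h.lift (fmap u v) (fun a b hab => hab.2)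
  have hfu : fmap u v u = u := fmap_ne hne
  have hAfix : ∀ a ∈ A, fmap u v a = a := fun a ha => fmap_ne (fun h => hvA (h ▸ ha))
  refine ⟨⟨⟨hb, hA, ?_⟩, ?_, ?_, ?_, ?_, ?_⟩, ?_, ?_⟩
  · intro x
    show cc x = cc (rp x)
    by_cases hxv : rp x = v
    · have hx := hrpc' x
      rw [show conRp rp u v x = u by simp [conRp, hxv]] at hx
      rw [hxv]
      omega
    · have hx := hrpc' x
      rwa [show conRp rp u v x = rp x by simp [conRp, hxv]] at hx
  · exact fun x y h => h.1
  · intro x y hxy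
    have hc := conG_adj_of hne hxy
    constructor
    · rintro ⟨-, ht⟩ ⟨-, ht'⟩
      exact (g2' _ _ hc).1 ht ht'
    · intro hno
      refine ⟨hxy, (g2' _ _ hc).2 fun ht' => hno ⟨hxy.symm, ht'⟩⟩
  · intro x hx
    exact g3' (fmap u v x) (hlift x x hx)
  · intro x y hxy hlt
    have hlt' : cc x < cc y := hlt
    have e1 : cc (fmap u v x) = cc x := cc_fmap hcuv x
    have e2 : cc (fmap u v y) = cc y := cc_fmap hcuv y
    exact ⟨hxy, g4' _ _ (conG_adj_of hne hxy) (by omega)⟩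
  · intro a ha b hb2 hab htg
    have := hlift a b htg
    rw [hAfix a ha, hAfix b hb2] at this
    exact g5' a ha b hb2 hab this
  · rintro (hd1 | hd2 | ⟨a, ha, b, hb2, hab, hau, hvb⟩)
    · have hd1' : cc v < cc u := hd1
      omega
    · have := hlift v u hd2
      rw [fmap_v, hfu] at this
      exact g3' u this
    · rcases reflTransGen_iff_eq_or_transGen.1 hvb with heq | ht
      · exact hvA (heq ▸ hb2)
      · have ht' := hlift v b ht
        rw [fmap_v, hAfix b hb2] at ht'
        have hau' := hliftR a u hau
        rw [hAfix a ha, hfu] at hau'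
        exact g5' a ha b hb2 hab (TransGen.trans_right hau' ht')
  · rintro (hd1 | hd2 | ⟨a, ha, b, hb2, hab, hav, hub⟩)
    · have hd1' : cc u < cc v := hd1
      omega
    · have := hlift u v hd2
      rw [fmap_v, hfu] at this
      exact g3' u this
    · rcases reflTransGen_iff_eq_or_transGen.1 hav with heq | ht
      · exact hvA (heq ▸ ha)
      · have ht' := hlift a v ht
        rw [fmap_v, hAfix a ha] at ht'
        have hub' := hliftR u b hub
        rw [hAfix b hb2, hfu] at hub'
        exact g5' a ha b hb2 hab (ht'.trans_left hub')

lemma conO_pullO {τ' : V → V → Prop} (hadj : G.Adj u v)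
    (hsub : ∀ a b, τ' a b → (conG G u v).Adj a b) :
    conO u v (pullO G u v τ') = τ' := by
  funext a b
  apply propext
  constructor
  · rintro ⟨x, y, rfl, rfl, -, h⟩
    exact h
  · intro h
    obtain ⟨x, y, hx, hy, hdel⟩ := conG_adj_elim (hsub a b h)
    exact ⟨x, y, hx, hy, hdel, by rw [hx, hy]; exact h⟩

lemma pullO_conO {cc : V → ℕ} {τ : V → V → Prop} (hadj : G.Adj u v)
    (hmem : (cc, τ) ∈ pairSet (delG G u v) A c rp m)
    (hτuv : ¬ TransGen τ u v) (hτvu : ¬ TransGen τ v u) :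
    pullO G u v (conO u v τ) = τ := by
  classical
  have hne : u ≠ v := hadj.ne
  obtain ⟨-, h1, h2, h3, -, -⟩ := hmem
  have h1' : ∀ x y, τ x y → (delG G u v).Adj x y := h1
  have h2' : ∀ x y, (delG G u v).Adj x y → (τ x y ↔ ¬ τ y x) := h2
  have h3' : ∀ x, ¬ TransGen τ x x := h3
  funext x y
  apply propext
  constructor
  · rintro ⟨hdel, x₁, y₁, hx₁, hy₁, hτ1⟩
    rcases (fmap_eq_iff hne).1 hx₁ with heqx | ⟨hx1u, hxv⟩ | ⟨hx1v, hxu⟩ <;>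
      rcases (fmap_eq_iff hne).1 hy₁ with heqy | ⟨hy1u, hyv⟩ | ⟨hy1v, hyu⟩
    · rwa [heqx, heqy] at hτ1
    · -- x₁ = x, y₁ = u, y = v
      rw [heqx, hy1u] at hτ1
      rw [hyv] at hdel ⊢
      by_cases hxv' : τ x v
      · exact hxv'
      · have : τ v x := (h2' v x hdel.symm).2 hxv'
        exact absurd ((TransGen.single this).tail hτ1) hτvu
    · rw [heqx, hy1v] at hτ1
      rw [hyu] at hdel ⊢
      by_cases hxu' : τ x u
      · exact hxu'
      · have : τ u x := (h2' u x hdel.symm).2 hxu'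
        exact absurd ((TransGen.single this).tail hτ1) hτuv
    · -- x₁ = u, x = v
      rw [hx1u, heqy] at hτ1
      rw [hxv] at hdel ⊢
      by_cases hvy : τ v y
      · exact hvy
      · have hyv2 : τ y v := (h2' y v hdel.symm).2 hvy
        exact absurd ((TransGen.single hτ1).tail hyv2) hτuv
    · rw [hx1u, hy1u] at hτ1
      exact absurd (TransGen.single hτ1) (h3' u)
    · rw [hx1u, hy1v] at hτ1
      exact absurd (TransGen.single hτ1) hτuv
    · rw [hx1v, heqy] at hτ1
      rw [hxu] at hdel ⊢
      by_cases huy : τ u y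
      · exact huy
      · have hyu2 : τ y u := (h2' y u hdel.symm).2 huy
        exact absurd ((TransGen.single hτ1).tail hyu2) hτvu
    · rw [hx1v, hy1u] at hτ1
      exact absurd (TransGen.single hτ1) hτvu
    · rw [hx1v, hy1v] at hτ1
      exact absurd (TransGen.single hτ1) (h3' v)
  · intro h
    exact ⟨h1' x y h, x, y, rfl, rfl, h⟩

lemma card_con [Finite V] (hadj : G.Adj u v) (hvA : v ∉ A) (hrv : rp v = v) :
    {p ∈ pairSet (delG G u v) A c rp m |
        ¬ Bad A c u v p.1 p.2 ∧ ¬ Bad A c v u p.1 p.2}.ncard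
      = (pairSet (conG G u v) A c (conRp rp u v) m).ncard := by
  have himg : pairSet (conG G u v) A c (conRp rp u v) m
      = (fun p : (V → ℕ) × (V → V → Prop) => (p.1, conO u v p.2)) ''
        {p ∈ pairSet (delG G u v) A c rp m |
          ¬ Bad A c u v p.1 p.2 ∧ ¬ Bad A c v u p.1 p.2} := by
    ext ⟨cc, τ'⟩
    constructor
    · intro hp
      obtain ⟨hmem, hnb1, hnb2⟩ := pull_mem hadj hvA hrv hp
      refine ⟨(cc, pullO G u v τ'), ⟨hmem, hnb1, hnb2⟩, ?_⟩
      show (cc, conO u v (pullO G u v τ')) = (cc, τ')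
      rw [conO_pullO hadj hp.2.1]
    · rintro ⟨⟨cc', τ⟩, ⟨hmem, hnb1, hnb2⟩, heq⟩
      simp only [Prod.mk.injEq] at heq
      obtain ⟨rfl, rfl⟩ := heq
      exact con_mem hadj hvA hrv hmem hnb1 hnb2
  rw [himg, Set.ncard_image_of_injOn]
  rintro ⟨cc, τ⟩ ⟨hp, hnb1, hnb2⟩ ⟨cc', σ⟩ ⟨hp', hnb1', hnb2'⟩ heq
  simp only [Prod.mk.injEq] at heq
  obtain ⟨rfl, hcon⟩ := heq
  have hτuv : ¬ TransGen τ u v := fun h => hnb2 (Or.inr (Or.inl h))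
  have hτvu : ¬ TransGen τ v u := fun h => hnb1 (Or.inr (Or.inl h))
  have hσuv : ¬ TransGen σ u v := fun h => hnb2' (Or.inr (Or.inl h))
  have hσvu : ¬ TransGen σ v u := fun h => hnb1' (Or.inr (Or.inl h))
  have : pullO G u v (conO u v τ) = pullO G u v (conO u v σ) := by rw [hcon]
  rw [pullO_conO hadj hp hτuv hτvu, pullO_conO hadj hp' hσuv hσvu] at this
  exact Prod.ext rfl this

end PullPairs


section BaseAndCounts

open SimpleGraph Relation Polynomial

variable {V : Type*} {G : SimpleGraph V} {A : Set V} {c : V → ℕ} {rp : V → V} {u v : V} {m : ℕ}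

lemma poly_eq_of_eval {P Q : Polynomial ℝ} (k : ℕ)
    (h : ∀ m : ℕ, k ≤ m → P.eval (m : ℝ) = Q.eval (m : ℝ)) : P = Q := by
  apply Polynomial.eq_of_infinite_eval_eq
  apply Set.infinite_of_injOn_mapsTo (f := fun n : ℕ => (n : ℝ)) (s := Set.Ici k)
  · exact fun a _ b _ hab => Nat.cast_injective hab
  · intro n hn
    exact h n hn
  · exact Set.Ici_infinite k

lemma tg_empty {x y : V} (h : TransGen (fun _ _ : V => False) x y) : False := by
  induction h with
  | single h => exact h
  | tail _ h => exact h

lemma base_col_card [Finite V] (hedge : ∀ x y, ¬ G.Adj x y)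
    (hcm : ∀ a ∈ A, 1 ≤ c a ∧ c a ≤ m) (hm1 : 1 ≤ m)
    (hrA : ∀ a ∈ A, rp a = a) (hrr : ∀ x, rp (rp x) = rp x) :
    (colSet G A c rp m).ncard = m ^ ({x | rp x = x ∧ x ∉ A}.ncard) := by
  classical
  rw [← Nat.card_coe_set_eq, ← Nat.card_coe_set_eq]
  have e : (colSet G A c rp m) ≃ ({x | rp x = x ∧ x ∉ A} → Fin m) := by
    refine
      { toFun := fun cc x => ⟨cc.1 x.1 - 1, ?_⟩
        invFun := fun g =>
          ⟨fun x => if h : rp x ∈ A then c (rp x) else (g ⟨rp x, hrr x, h⟩ : ℕ) + 1, ?_⟩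
        left_inv := ?_
        right_inv := ?_ }
    · have := cc.2.1.1 x.1
      omega
    · refine ⟨⟨fun x => ?_, fun a ha => ?_, fun x => ?_⟩, fun x y hxy => absurd hxy (hedge x y)⟩
      · by_cases h : rp x ∈ A
        · simp only [h, dif_pos]
          exact hcm (rp x) h
        · simp only [h, dif_neg, not_false_iff]
          have := (g ⟨rp x, hrr x, h⟩).2
          omega
      · have hra : rp a = a := hrA a ha
        have h : rp a ∈ A := hra.symm ▸ ha
        simp only [h, dif_pos]
        rw [hra]
      · by_cases h : rp x ∈ A
        · have h2 : rp (rp x) ∈ A := by rwa [hrr x]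
          simp only [h, h2, dif_pos]
          rw [hrr x]
        · have h2 : rp (rp x) ∉ A := by rwa [hrr x]
          simp only [h, h2, dif_neg, not_false_iff]
          have harg : (⟨rp (rp x), hrr (rp x), h2⟩ : {x | rp x = x ∧ x ∉ A})
              = ⟨rp x, hrr x, h⟩ := Subtype.ext (hrr x)
          rw [harg]
    · rintro ⟨cc, ⟨hb, hA, hrp⟩, hprop⟩
      apply Subtype.ext
      funext x
      show (if h : rp x ∈ A then c (rp x) else (cc (rp x) - 1) + 1) = cc x
      by_cases h : rp x ∈ A
      · simp only [h, dif_pos]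
        rw [← hA (rp x) h, ← hrp x]
      · simp only [h, dif_neg, not_false_iff]
        have h1 := (hb (rp x)).1
        have := hrp x
        omega
    · intro g
      funext x
      obtain ⟨x, hx1, hx2⟩ := x
      apply Fin.ext
      show (if h : rp x ∈ A then c (rp x) else (g ⟨rp x, hrr x, h⟩ : ℕ) + 1) - 1 = (g ⟨x, hx1, hx2⟩ : ℕ)
      have h : rp x ∉ A := by rwa [hx1]
      simp only [h, dif_neg, not_false_iff]
      have : (⟨rp x, hrr x, h⟩ : {x | rp x = x ∧ x ∉ A}) = ⟨x, hx1, hx2⟩ :=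
        Subtype.ext hx1
      rw [this]
      omega
  rw [Nat.card_eq_of_bijective e e.bijective, Nat.card_fun]
  simp [Nat.card_coe_set_eq]

lemma base_pair_card [Finite V] (hedge : ∀ x y, ¬ G.Adj x y) :
    (pairSet G A c rp m).ncard = (colSet G A c rp m).ncard := by
  classical
  have himg : colSet G A c rp m
      = (fun p : (V → ℕ) × (V → V → Prop) => p.1) '' pairSet G A c rp m := by
    ext cc
    constructor
    · rintro ⟨hext, -⟩
      refine ⟨(cc, fun _ _ => False), ⟨hext, ?_, ?_, ?_, ?_, ?_⟩, rfl⟩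
      · exact fun x y h => h.elim
      · exact fun x y hxy => absurd hxy (hedge x y)
      · exact fun x hx => tg_empty hx
      · exact fun x y hxy => absurd hxy (hedge x y)
      · exact fun a _ b _ _ htg => tg_empty htg
    · rintro ⟨⟨cc', o⟩, ⟨hext, -⟩, rfl⟩
      exact ⟨hext, fun x y hxy => absurd hxy (hedge x y)⟩
  rw [himg, Set.ncard_image_of_injOn]
  rintro ⟨cc, o⟩ ⟨-, ho, -⟩ ⟨cc', o'⟩ ⟨-, ho', -⟩ heq
  simp only at heq
  subst heq
  have : o = o' := by
    funext x y
    apply propext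
    constructor
    · intro h
      exact absurd (ho x y h) (hedge x y)
    · intro h
      exact absurd (ho' x y h) (hedge x y)
  rw [this]

lemma edge_del_card [Finite V] (hadj : G.Adj u v) :
    (delG G u v).edgeSet.ncard + 1 = G.edgeSet.ncard := by
  unfold delG
  rw [SimpleGraph.edgeSet_deleteEdges]
  exact Set.ncard_diff_singleton_add_one (G.mem_edgeSet.2 hadj) (Set.toFinite _)

lemma edge_con_card [Finite V] (hne : u ≠ v) :
    (conG G u v).edgeSet.ncard ≤ (delG G u v).edgeSet.ncard := by
  have hsub : (conG G u v).edgeSet ⊆ Sym2.map (fmap u v) '' (delG G u v).edgeSet := by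
    intro e he
    induction e with
    | h x y =>
      obtain ⟨a, b, ha, hb, hdel⟩ := conG_adj_elim ((conG G u v).mem_edgeSet.1 he)
      exact ⟨s(a, b), (delG G u v).mem_edgeSet.2 hdel, by rw [Sym2.map_pair_eq, ha, hb]⟩
  calc (conG G u v).edgeSet.ncard ≤ (Sym2.map (fmap u v) '' (delG G u v).edgeSet).ncard :=
        Set.ncard_le_ncard hsub (Set.Finite.image _ (Set.toFinite _))
    _ ≤ (delG G u v).edgeSet.ncard := Set.ncard_image_le (Set.toFinite _)

lemma free_con_card [Finite V] (hne : u ≠ v) (hvA : v ∉ A) (hru : rp u = u) (hrv : rp v = v) :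
    ({x | conRp rp u v x = x ∧ x ∉ A}.ncard) + 1 = {x | rp x = x ∧ x ∉ A}.ncard := by
  classical
  have hset : {x | conRp rp u v x = x ∧ x ∉ A} = {x | rp x = x ∧ x ∉ A} \ {v} := by
    ext x
    simp only [Set.mem_setOf_eq, Set.mem_diff, Set.mem_singleton_iff]
    constructor
    · rintro ⟨h1, h2⟩
      by_cases hxv : rp x = v
      · rw [show conRp rp u v x = u by simp [conRp, hxv]] at h1
        subst h1
        rw [hru] at hxv
        exact absurd hxv hne
      · rw [show conRp rp u v x = rp x by simp [conRp, hxv]] at h1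
        refine ⟨⟨h1, h2⟩, ?_⟩
        rintro rfl
        exact hxv hrv
    · rintro ⟨⟨h1, h2⟩, h3⟩
      have hxv : rp x ≠ v := by rw [h1]; exact h3
      rw [show conRp rp u v x = rp x by simp [conRp, hxv]]
      exact ⟨h1, h2⟩
  rw [hset]
  exact Set.ncard_diff_singleton_add_one (by exact ⟨hrv, hvA⟩) (Set.toFinite _)

end BaseAndCounts


section Main

open SimpleGraph Relation Polynomial

variable {V : Type*}

/-- the statement proved by induction -/
def Stmt [Finite V] (k : ℕ) (A : Set V) (c : V → ℕ) (G : SimpleGraph V) (rp : V → V) : Prop :=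
  (∃ χ : Polynomial ℝ, ∀ m' : ℕ, k ≤ m' →
      χ.eval (m' : ℝ) = ((colSet G A c rp m').ncard : ℝ)) ∧
  (∀ χ : Polynomial ℝ,
    (∀ m' : ℕ, k ≤ m' → χ.eval (m' : ℝ) = ((colSet G A c rp m').ncard : ℝ)) →
    ∀ m : ℕ, k ≤ m →
      (-1 : ℝ) ^ ({x | rp x = x ∧ x ∉ A}.ncard) * χ.eval (-(m : ℝ))
        = ((pairSet G A c rp m).ncard : ℝ))

lemma conRp_fix [Finite V] {G : SimpleGraph V} {rp : V → V} {u v : V}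
    (hne : u ≠ v) (hru : rp u = u)
    (hre : ∀ x y, G.Adj x y → rp x = x ∧ rp y = y) :
    ∀ a b, (conG G u v).Adj a b → conRp rp u v a = a ∧ conRp rp u v b = b := by
  classical
  have key : ∀ x y, (delG G u v).Adj x y → conRp rp u v (fmap u v x) = fmap u v x := by
    intro x y hdel
    by_cases hxv : x = v
    · rw [hxv, fmap_v]
      have h2 : rp u ≠ v := by rw [hru]; exact hne
      unfold conRp
      rw [if_neg h2]
      exact hru
    · rw [fmap_ne hxv]
      have hx : rp x = x := (hre x y (delG_le hdel)).1
      have h2 : rp x ≠ v := by rw [hx]; exact hxv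
      unfold conRp
      rw [if_neg h2]
      exact hx
  intro a b hab
  obtain ⟨x, y, hx, hy, hdel⟩ := conG_adj_elim hab
  exact ⟨hx ▸ key x y hdel, hy ▸ key y x hdel.symm⟩

lemma conRp_hrA {A : Set V} {rp : V → V} {z w : V} (hrA : ∀ a ∈ A, rp a = a)
    (hwA : w ∉ A) : ∀ a ∈ A, conRp rp z w a = a := by
  intro a ha
  have h1 := hrA a ha
  have h2 : rp a ≠ w := by
    rw [h1]
    rintro rfl
    exact hwA ha
  unfold conRp
  rw [if_neg h2]
  exact h1

lemma conRp_idem {rp : V → V} {z w : V} (hrr : ∀ x, rp (rp x) = rp x)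
    (hz : rp z = z) (hne : z ≠ w) :
    ∀ x, conRp rp z w (conRp rp z w x) = conRp rp z w x := by
  classical
  intro x
  by_cases hxw : rp x = w
  · have e1 : conRp rp z w x = z := by unfold conRp; rw [if_pos hxw]
    rw [e1]
    unfold conRp
    rw [hz, if_neg hne]
  · have e1 : conRp rp z w x = rp x := by unfold conRp; rw [if_neg hxw]
    rw [e1]
    unfold conRp
    rw [hrr x, if_neg hxw]

lemma step3 [Finite V] {k : ℕ} {A : Set V} {c : V → ℕ} {G : SimpleGraph V} {rp : V → V}
    {u v : V}
    (hadj : G.Adj u v) (hvA : v ∉ A) (hru : rp u = u) (hrv : rp v = v)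
    (IHdel : Stmt k A c (delG G u v) rp)
    (IHcon : Stmt k A c (conG G u v) (conRp rp u v)) :
    Stmt k A c G rp := by
  classical
  obtain ⟨⟨χ₀, hχ₀⟩, id₀⟩ := IHdel
  obtain ⟨⟨χ₁, hχ₁⟩, id₁⟩ := IHcon
  have hsplit : ∀ m' : ℕ, (colSet (delG G u v) A c rp m').ncard
      = (colSet G A c rp m').ncard + (colSet (conG G u v) A c (conRp rp u v) m').ncard :=
    fun m' => card_col_del hadj hrv
  have hsplitR : ∀ m' : ℕ, ((colSet (delG G u v) A c rp m').ncard : ℝ)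
      = ((colSet G A c rp m').ncard : ℝ)
        + ((colSet (conG G u v) A c (conRp rp u v) m').ncard : ℝ) := by
    intro m'
    exact_mod_cast congrArg (fun t : ℕ => (t : ℝ)) (hsplit m')
  constructor
  · refine ⟨χ₀ - χ₁, fun m' hm' => ?_⟩
    rw [eval_sub, hχ₀ m' hm', hχ₁ m' hm']
    have := hsplitR m'
    linarith
  · intro χ hχ m hm
    have hχ₀' : χ₀ = χ + χ₁ := by
      apply poly_eq_of_eval k
      intro m' hm'
      rw [eval_add, hχ m' hm', hχ₁ m' hm', hχ₀ m' hm']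
      have := hsplitR m'
      linarith
    set N := {x | rp x = x ∧ x ∉ A}.ncard with hN
    set Nc := {x | conRp rp u v x = x ∧ x ∉ A}.ncard with hNc
    have hNeq : N = Nc + 1 := (free_con_card hadj.ne hvA hru hrv).symm
    have e0 := id₀ χ₀ hχ₀ m hm
    have e1 := id₁ χ₁ hχ₁ m hm
    have hX : ¬(u ∈ A ∧ v ∈ A ∧ c u = c v) := fun h => hvA h.2.1
    have hps := card_pair_del (G := G) (A := A) (c := c) (rp := rp) (m := m) hadj hX
    have hboth := card_con (G := G) (A := A) (c := c) (rp := rp) (m := m) hadj hvA hrv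
    rw [hboth] at hps
    have hpsR : ((pairSet G A c rp m).ncard : ℝ)
        = ((pairSet (delG G u v) A c rp m).ncard : ℝ)
          + ((pairSet (conG G u v) A c (conRp rp u v) m).ncard : ℝ) := by
      exact_mod_cast congrArg (fun t : ℕ => (t : ℝ)) hps
    have hsign : (-1 : ℝ) ^ N = -((-1 : ℝ) ^ Nc) := by
      rw [hNeq, pow_succ]
      ring
    have hχeval : χ.eval (-(m : ℝ)) = χ₀.eval (-(m : ℝ)) - χ₁.eval (-(m : ℝ)) := by
      rw [hχ₀', eval_add]
      ring
    rw [hχeval, hpsR, ← e0]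
    rw [hsign] at e0 ⊢
    rw [← e1]
    ring

theorem main_induction [Finite V] (k : ℕ) (A : Set V) (c : V → ℕ)
    (hc : ∀ a ∈ A, 1 ≤ c a ∧ c a ≤ k) (hk : 1 ≤ k) :
    ∀ (n : ℕ) (G : SimpleGraph V) (rp : V → V),
      G.edgeSet.ncard ≤ n →
      (∀ x y, G.Adj x y → rp x = x ∧ rp y = y) →
      (∀ a ∈ A, rp a = a) → (∀ x, rp (rp x) = rp x) →
      Stmt k A c G rp := by
  intro n
  induction n with
  | zero =>
    intro G rp hE hre hrA hrr
    have hzero : G.edgeSet = ∅ := by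
      rw [← Set.ncard_eq_zero (Set.toFinite _)]
      omega
    have hedge : ∀ x y, ¬ G.Adj x y := by
      intro x y h
      have := G.mem_edgeSet.2 h
      rw [hzero] at this
      exact this
    set N := {x | rp x = x ∧ x ∉ A}.ncard with hN
    have hcol : ∀ m' : ℕ, k ≤ m' → (colSet G A c rp m').ncard = m' ^ N := by
      intro m' hm'
      exact base_col_card hedge
        (fun a ha => ⟨(hc a ha).1, le_trans (hc a ha).2 hm'⟩) (le_trans hk hm') hrA hrr
    constructor
    · refine ⟨Polynomial.X ^ N, fun m' hm' => ?_⟩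
      rw [hcol m' hm']
      push_cast
      simp
    · intro χ hχ m hm
      have hχX : χ = Polynomial.X ^ N := by
        apply poly_eq_of_eval k
        intro m' hm'
        rw [hχ m' hm', hcol m' hm']
        push_cast
        simp
      subst hχX
      rw [base_pair_card hedge, hcol m hm]
      rw [eval_pow, eval_X, ← mul_pow, neg_one_mul, neg_neg]
      push_cast
      ring
  | succ n IH =>
    intro G rp hE hre hrA hrr
    by_cases hE' : G.edgeSet.ncard ≤ n
    · exact IH G rp hE' hre hrA hrr
    · have hpos : 0 < G.edgeSet.ncard := by omega
      obtain ⟨e, he⟩ := (Set.ncard_pos (Set.toFinite _)).1 hpos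
      revert he
      refine Sym2.ind (fun u v he => ?_) e
      have hadj : G.Adj u v := G.mem_edgeSet.1 he
      have hru : rp u = u := (hre u v hadj).1
      have hrv : rp v = v := (hre u v hadj).2
      have hEdel : (delG G u v).edgeSet.ncard ≤ n := by
        have := edge_del_card (G := G) hadj
        omega
      have hre_del : ∀ x y, (delG G u v).Adj x y → rp x = x ∧ rp y = y :=
        fun x y h => hre x y (delG_le h)
      by_cases hA1 : u ∈ A ∧ v ∈ A
      · by_cases hceq : c u = c v
        · -- case A : the fixed colors clash, everything is empty
          have hcol0 : ∀ m' : ℕ, colSet G A c rp m' = ∅ := by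
            intro m'
            ext cc
            simp only [Set.mem_empty_iff_false, iff_false]
            rintro ⟨⟨-, hAc, -⟩, hprop⟩
            exact hprop u v hadj (by rw [hAc u hA1.1, hAc v hA1.2, hceq])
          have hpair0 : ∀ m' : ℕ, pairSet G A c rp m' = ∅ := by
            intro m'
            ext p
            simp only [Set.mem_empty_iff_false, iff_false]
            rintro ⟨hext, h1, h2, h3, h4, h5⟩
            by_cases ho : p.2 u v
            · exact h5 u hA1.1 v hA1.2 hceq (TransGen.single ho)
            · exact h5 v hA1.2 u hA1.1 hceq.symm
                (TransGen.single ((h2 v u hadj.symm).2 ho))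
          constructor
          · refine ⟨0, fun m' hm' => ?_⟩
            rw [hcol0 m']
            simp
          · intro χ hχ m hm
            have hχ0 : χ = 0 := by
              apply poly_eq_of_eval k
              intro m' hm'
              rw [hχ m' hm', hcol0 m']
              simp
            subst hχ0
            rw [hpair0 m]
            simp
        · -- case B : both ends precolored with distinct colors
          have hX : ¬(u ∈ A ∧ v ∈ A ∧ c u = c v) := fun h => hceq h.2.2
          have hcoleq : ∀ m' : ℕ, colSet G A c rp m' = colSet (delG G u v) A c rp m' := by
            intro m'
            rw [colSet_del_eq hadj]
            ext cc
            simp only [Set.mem_setOf_eq]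
            constructor
            · rintro ⟨h, -⟩
              exact h
            · intro h
              refine ⟨h, ?_⟩
              rw [h.1.2.1 u hA1.1, h.1.2.1 v hA1.2]
              exact hceq
          obtain ⟨⟨χ₀, hχ₀⟩, id₀⟩ := IH (delG G u v) rp hEdel hre_del hrA hrr
          have hpaireq : ∀ m' : ℕ,
              (pairSet G A c rp m').ncard = (pairSet (delG G u v) A c rp m').ncard := by
            intro m'
            have hps := card_pair_del (G := G) (A := A) (c := c) (rp := rp) (m := m') hadj hX
            have hboth : {p ∈ pairSet (delG G u v) A c rp m' |
                ¬ Bad A c u v p.1 p.2 ∧ ¬ Bad A c v u p.1 p.2} = ∅ := by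
              ext p
              simp only [Set.mem_empty_iff_false, iff_false, Set.mem_setOf_eq]
              rintro ⟨hp, hnb1, hnb2⟩
              have d1 : ¬ (p.1 v < p.1 u) := fun h => hnb1 (Or.inl h)
              have d2 : ¬ (p.1 u < p.1 v) := fun h => hnb2 (Or.inl h)
              have e1 : p.1 u = c u := hp.1.2.1 u hA1.1
              have e2 : p.1 v = c v := hp.1.2.1 v hA1.2
              exact hceq (by omega)
            rw [hboth] at hps
            simpa using hps
          constructor
          · exact ⟨χ₀, fun m' hm' => by rw [hcoleq m']; exact hχ₀ m' hm'⟩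
          · intro χ hχ m hm
            have hχ' : ∀ m' : ℕ, k ≤ m' →
                χ.eval (m' : ℝ) = ((colSet (delG G u v) A c rp m').ncard : ℝ) := by
              intro m' hm'
              rw [← hcoleq m']
              exact hχ m' hm'
            rw [hpaireq m]
            exact id₀ χ hχ' m hm
      · -- case C : at least one endpoint not precolored; contract that one
        by_cases hvA : v ∈ A
        · have huA : u ∉ A := fun h => hA1 ⟨h, hvA⟩
          have hEdel' : (delG G v u).edgeSet.ncard ≤ n := by rwa [delG_swap]
          have hre_del' : ∀ x y, (delG G v u).Adj x y → rp x = x ∧ rp y = y := by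
            rw [delG_swap]; exact hre_del
          have hEcon : (conG G v u).edgeSet.ncard ≤ n :=
            le_trans (edge_con_card hadj.ne.symm) hEdel'
          exact step3 hadj.symm huA hrv hru
            (by rw [delG_swap]; exact IH (delG G u v) rp hEdel hre_del hrA hrr)
            (IH (conG G v u) (conRp rp v u) hEcon
              (conRp_fix hadj.ne.symm hrv hre)
              (conRp_hrA hrA huA)
              (conRp_idem hrr hrv hadj.ne.symm))
        · have hEcon : (conG G u v).edgeSet.ncard ≤ n :=
            le_trans (edge_con_card hadj.ne) hEdel
          exact step3 hadj hvA hru hrv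
            (IH (delG G u v) rp hEdel hre_del hrA hrr)
            (IH (conG G u v) (conRp rp u v) hEcon
              (conRp_fix hadj.ne hru hre)
              (conRp_hrA hrA hvA)
              (conRp_idem hrr hru hadj.ne))

end Main

end Stmt17

/-- reciprocity for partial coloring extensions: for `m ≥ k`,
`(-1)^{|V∖A|} χ_{G,c}(-m)` counts pairs `(ĉ, σ)` of an (arbitrary) extension of `c`
of size `m` and a weakly compatible acyclic orientation `σ` of `G` admitting no
directed path with both endpoints in a color class `A_i = c⁻¹(i)` of `c`. -/
theorem stmt17 (V : Type*) [Fintype V] (G : SimpleGraph V) (A : Set V)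
    (k : ℕ) (hk : 1 ≤ k) (c : V → ℕ) (hc : ∀ a ∈ A, 1 ≤ c a ∧ c a ≤ k)
    (χ : Polynomial ℝ)
    (hχ : ∀ m : ℕ, k ≤ m →
      χ.eval (m : ℝ) =
        Nat.card {cc : V → ℕ | (∀ v, 1 ≤ cc v ∧ cc v ≤ m) ∧ (∀ a ∈ A, cc a = c a) ∧
          ∀ u v : V, G.Adj u v → cc u ≠ cc v})
    (m : ℕ) (hm : k ≤ m) :
    (-1 : ℝ) ^ (Aᶜ.ncard) * χ.eval (-(m : ℝ)) =
      Nat.card {p : (V → ℕ) × (V → V → Prop) |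
        -- `p.1` is an extension of `c` of size `m`
        (∀ v, 1 ≤ p.1 v ∧ p.1 v ≤ m) ∧ (∀ a ∈ A, p.1 a = c a) ∧
        -- `p.2` is an orientation of `G`
        (∀ u v : V, p.2 u v → G.Adj u v) ∧
        (∀ u v : V, G.Adj u v → (p.2 u v ↔ ¬ p.2 v u)) ∧
        -- which is acyclic
        (∀ v : V, ¬ Relation.TransGen p.2 v v) ∧
        -- weakly compatible with the coloring `p.1`
        (∀ u v : V, G.Adj u v → p.1 u < p.1 v → p.2 u v) ∧
        -- no directed path with both endpoints in some `A_i`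
        (∀ i : ℕ, 1 ≤ i → i ≤ k →
          ¬ ∃ a ∈ A, ∃ b ∈ A, c a = i ∧ c b = i ∧ Relation.TransGen p.2 a b)} := by
  classical
  obtain ⟨-, hid⟩ := Stmt17.main_induction k A c hc hk (G.edgeSet.ncard) G id le_rfl
    (fun x y _ => ⟨rfl, rfl⟩) (fun a _ => rfl) (fun x => rfl)
  have hχ' : ∀ m' : ℕ, k ≤ m' →
      χ.eval (m' : ℝ) = ((Stmt17.colSet G A c id m').ncard : ℝ) := by
    intro m' hm'
    rw [hχ m' hm', ← Stmt17.colSet_id_eq, Nat.card_coe_set_eq]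
  have h1 := hid χ hχ' m hm
  have hsets : {x : V | id x = x ∧ x ∉ A} = Aᶜ := by
    ext x
    simp
  rw [hsets] at h1
  rw [← Stmt17.pairSet_id_eq G A k c hc m, ← Nat.card_coe_set_eq] at h1
  exact h1
end

section
/- Suppose c : A → {1,…,k} is injective. Then for every integer m ≥ k, |χ_{G,c}(−m)| equals the number of pairs (ĉ, σ) where ĉ : V → {1,…,m} is a (not necessarily proper) extension of c of size m and σ is an acyclic orientation of G weakly compatible with ĉ. -/
open Relation

namespace Stmt18Aux

variable {W : Type*}

def NS (G : SimpleGraph W) (B : Set W) (c : W → ℕ) (m : ℕ) : Set (W → ℕ) :=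
  {f | (∀ v, 1 ≤ f v ∧ f v ≤ m) ∧ (∀ a ∈ B, f a = c a) ∧ ∀ u v : W, G.Adj u v → f u ≠ f v}

def QS (G : SimpleGraph W) (B : Set W) (c : W → ℕ) (m : ℕ) :
    Set ((W → ℕ) × (W → W → Prop)) :=
  {p | (∀ v, 1 ≤ p.1 v ∧ p.1 v ≤ m) ∧ (∀ a ∈ B, p.1 a = c a) ∧
    (∀ u v : W, p.2 u v → G.Adj u v) ∧
    (∀ u v : W, G.Adj u v → (p.2 u v ↔ ¬ p.2 v u)) ∧
    (∀ v : W, ¬ Relation.TransGen p.2 v v) ∧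
    (∀ u v : W, G.Adj u v → p.1 u < p.1 v → p.2 u v)}

lemma mem_NS_iff {G : SimpleGraph W} {B : Set W} {c f : W → ℕ} {m : ℕ} :
    f ∈ NS G B c m ↔ (∀ v, 1 ≤ f v ∧ f v ≤ m) ∧ (∀ a ∈ B, f a = c a) ∧
      ∀ u v : W, G.Adj u v → f u ≠ f v := Iff.rfl

lemma mem_QS_iff {G : SimpleGraph W} {B : Set W} {c f : W → ℕ} {σ : W → W → Prop} {m : ℕ} :
    (f, σ) ∈ QS G B c m ↔ (∀ v, 1 ≤ f v ∧ f v ≤ m) ∧ (∀ a ∈ B, f a = c a) ∧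
      (∀ u v : W, σ u v → G.Adj u v) ∧
      (∀ u v : W, G.Adj u v → (σ u v ↔ ¬ σ v u)) ∧
      (∀ v : W, ¬ Relation.TransGen σ v v) ∧
      (∀ u v : W, G.Adj u v → f u < f v → σ u v) := Iff.rfl

section Rel

variable {σ : W → W → Prop} {x y u v a b : W} {f : W → ℕ} {G : SimpleGraph W}

lemma rtg_tg (h : ReflTransGen σ a b) (hne : a ≠ b) : TransGen σ a b := by
  rcases h.cases_head with h | ⟨c, h1, h2⟩
  · exact absurd h hne
  · exact TransGen.head' h1 h2

lemma step_le (h3 : ∀ u v, σ u v → G.Adj u v)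
    (h4 : ∀ u v, G.Adj u v → (σ u v ↔ ¬ σ v u))
    (h6 : ∀ u v, G.Adj u v → f u < f v → σ u v)
    (h : σ u v) : f u ≤ f v := by
  by_contra hlt
  push_neg at hlt
  have hadj := h3 u v h
  have h2 := h6 v u hadj.symm hlt
  exact ((h4 v u hadj.symm).mp h2) h

lemma transGen_le (h3 : ∀ u v, σ u v → G.Adj u v)
    (h4 : ∀ u v, G.Adj u v → (σ u v ↔ ¬ σ v u))
    (h6 : ∀ u v, G.Adj u v → f u < f v → σ u v)
    (h : TransGen σ u v) : f u ≤ f v := by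
  induction h with
  | single h => exact step_le h3 h4 h6 h
  | tail _ h2 ih => exact le_trans ih (step_le h3 h4 h6 h2)

lemma transGen_lt (hs : ∀ u v, σ u v → f u < f v) (h : TransGen σ u v) : f u < f v := by
  induction h with
  | single h => exact hs _ _ h
  | tail _ h2 ih => exact lt_trans ih (hs _ _ h2)

lemma transGen_addEdge (h : TransGen (fun u v => σ u v ∨ (u = x ∧ v = y)) a b) :
    TransGen σ a b ∨ (ReflTransGen σ a x ∧ ReflTransGen σ y b) := by
  induction h using TransGen.head_induction_on with
  | single h =>
    rcases h with h | ⟨rfl, rfl⟩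
    · exact Or.inl (.single h)
    · exact Or.inr ⟨.refl, .refl⟩
  | head h _ IH =>
    rcases h with h | ⟨rfl, rfl⟩
    · rcases IH with h2 | ⟨h2, h3⟩
      · exact Or.inl (TransGen.head h h2)
      · exact Or.inr ⟨ReflTransGen.head h h2, h3⟩
    · rcases IH with h2 | ⟨h2, h3⟩
      · exact Or.inr ⟨.refl, h2.to_reflTransGen⟩
      · exact Or.inr ⟨.refl, h3⟩

lemma acyclic_addEdge (hac : ∀ v, ¬ TransGen σ v v) (hxy : x ≠ y)
    (hnc : ¬ TransGen σ y x) :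
    ∀ v, ¬ TransGen (fun u v => σ u v ∨ (u = x ∧ v = y)) v v := by
  intro v h
  rcases transGen_addEdge h with h | ⟨h1, h2⟩
  · exact hac v h
  · exact hnc (rtg_tg (h2.trans h1) (Ne.symm hxy))

lemma rho_decomp (hxy : x ≠ y) (hncxy : ¬TransGen σ x y) (hncyx : ¬TransGen σ y x)
    (h : ReflTransGen (fun u v => σ u v ∨ (u = x ∧ v = y) ∨ (u = y ∧ v = x)) a b) :
    ReflTransGen σ a b ∨ (ReflTransGen σ a x ∧ ReflTransGen σ y b) ∨
      (ReflTransGen σ a y ∧ ReflTransGen σ x b) := by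
  induction h using ReflTransGen.head_induction_on with
  | refl => exact Or.inl .refl
  | head h _ IH =>
    rcases h with h | ⟨rfl, rfl⟩ | ⟨rfl, rfl⟩
    · rcases IH with h2 | ⟨h2, h3⟩ | ⟨h2, h3⟩
      · exact Or.inl (ReflTransGen.head h h2)
      · exact Or.inr (Or.inl ⟨ReflTransGen.head h h2, h3⟩)
      · exact Or.inr (Or.inr ⟨ReflTransGen.head h h2, h3⟩)
    · rcases IH with h2 | ⟨h2, h3⟩ | ⟨h2, h3⟩
      · exact Or.inr (Or.inl ⟨.refl, h2⟩)
      · exact absurd (rtg_tg h2 (Ne.symm hxy)) hncyx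
      · exact Or.inl h3
    · rcases IH with h2 | ⟨h2, h3⟩ | ⟨h2, h3⟩
      · exact Or.inr (Or.inr ⟨.refl, h2⟩)
      · exact Or.inl h3
      · exact absurd (rtg_tg h2 hxy) hncxy

lemma key_cyc (hac : ∀ v, ¬ TransGen σ v v) (hxy : x ≠ y)
    (hncxy : ¬TransGen σ x y) (hncyx : ¬TransGen σ y x)
    (hσ : σ u v)
    (h : ReflTransGen (fun u v => σ u v ∨ (u = x ∧ v = y) ∨ (u = y ∧ v = x)) v u) :
    False := by
  rcases rho_decomp hxy hncxy hncyx h with h1 | ⟨h1, h2⟩ | ⟨h1, h2⟩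
  · exact hac u (TransGen.head' hσ h1)
  · exact hncyx (TransGen.trans_right h2 (TransGen.head' hσ h1))
  · exact hncxy (TransGen.trans_right h2 (TransGen.head' hσ h1))

end Rel

section Fin

variable [Finite W] (G : SimpleGraph W) (B : Set W) (c : W → ℕ) (m : ℕ)

lemma NS_finite : (NS G B c m).Finite := by
  classical
  apply Set.Finite.subset (Set.Finite.pi (fun _ : W => Set.finite_Icc 1 m))
  intro f hf v _
  exact ⟨(hf.1 v).1, (hf.1 v).2⟩

lemma QS_finite : (QS G B c m).Finite := by
  classical
  have hfin : ((Set.pi Set.univ fun _ : W => Set.Icc 1 m) ×ˢ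
      (Set.univ : Set (W → W → Prop))).Finite :=
    Set.Finite.prod (Set.Finite.pi (fun _ : W => Set.finite_Icc 1 m)) Set.finite_univ
  apply hfin.subset
  intro p hp
  exact Set.mem_prod.mpr ⟨fun v _ => ⟨(hp.1 v).1, (hp.1 v).2⟩, Set.mem_univ _⟩

end Fin

section Del

variable (G : SimpleGraph W) (x y : W)

def Gdel : SimpleGraph W where
  Adj u v := G.Adj u v ∧ ¬(u = x ∧ v = y) ∧ ¬(u = y ∧ v = x)
  symm := ⟨by
    rintro u v ⟨h, h2, h3⟩
    exact ⟨h.symm, fun ⟨a, b⟩ => h3 ⟨b, a⟩, fun ⟨a, b⟩ => h2 ⟨b, a⟩⟩⟩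
  loopless := ⟨fun v h => G.irrefl h.1⟩

lemma Gdel_adj {u v : W} : (Gdel G x y).Adj u v ↔
    G.Adj u v ∧ ¬(u = x ∧ v = y) ∧ ¬(u = y ∧ v = x) := Iff.rfl

lemma Gdel_comm : Gdel G x y = Gdel G y x := by
  ext u v
  rw [Gdel_adj, Gdel_adj]
  tauto

variable {G x y} (B : Set W) (c : W → ℕ) (m : ℕ)

lemma NS_sub : NS G B c m ⊆ NS (Gdel G x y) B c m := by
  rintro f ⟨h1, h2, h3⟩
  exact ⟨h1, h2, fun a b h => h3 a b h.1⟩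

lemma NS_G_eq (hadj : G.Adj x y) :
    NS G B c m = {f ∈ NS (Gdel G x y) B c m | f x ≠ f y} := by
  ext f
  constructor
  · rintro hf
    exact ⟨NS_sub B c m hf, hf.2.2 x y hadj⟩
  · rintro ⟨⟨h1, h2, h3⟩, hne⟩
    refine ⟨h1, h2, fun u v h => ?_⟩
    by_cases hc1 : u = x ∧ v = y
    · obtain ⟨rfl, rfl⟩ := hc1; exact hne
    · by_cases hc2 : u = y ∧ v = x
      · obtain ⟨rfl, rfl⟩ := hc2; exact hne.symm
      · exact h3 u v ⟨h, hc1, hc2⟩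

lemma NS_del_split [Finite W] (hadj : G.Adj x y) :
    (NS (Gdel G x y) B c m).ncard
      = (NS G B c m).ncard + {f ∈ NS (Gdel G x y) B c m | f x = f y}.ncard := by
  have hU : NS (Gdel G x y) B c m
      = NS G B c m ∪ {f ∈ NS (Gdel G x y) B c m | f x = f y} := by
    ext f
    constructor
    · intro hf
      by_cases he : f x = f y
      · exact Or.inr ⟨hf, he⟩
      · exact Or.inl ((NS_G_eq B c m hadj) ▸ (⟨hf, he⟩ : f ∈ {f ∈ NS (Gdel G x y) B c m | f x ≠ f y}))
    · rintro (hf | ⟨hf, _⟩)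
      · exact NS_sub B c m hf
      · exact hf
  have hdisj : Disjoint (NS G B c m) {f ∈ NS (Gdel G x y) B c m | f x = f y} := by
    rw [Set.disjoint_left]
    rintro f hf ⟨_, he⟩
    rw [NS_G_eq B c m hadj] at hf
    exact hf.2 he
  have h2 := Set.ncard_union_eq hdisj
    ((NS_finite (Gdel G x y) B c m).subset (NS_sub (x := x) (y := y) B c m))
    ((NS_finite (Gdel G x y) B c m).subset (Set.sep_subset _ _))
  rw [← hU] at h2
  exact h2

lemma QA_mem_forward (hadj : G.Adj x y) {f : W → ℕ} {σ : W → W → Prop}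
    (hp : (f, σ) ∈ QS G B c m) (hxyσ : σ x y) :
    (f, fun u v => σ u v ∧ ¬(u = x ∧ v = y)) ∈ QS (Gdel G x y) B c m ∧
      f x ≤ f y ∧ ¬ TransGen (fun u v => σ u v ∧ ¬(u = x ∧ v = y)) y x := by
  obtain ⟨h1, h2, h3, h4, h5, h6⟩ := mem_QS_iff.mp hp
  refine ⟨mem_QS_iff.mpr ⟨h1, h2, ?_, ?_, ?_, ?_⟩, ?_, ?_⟩
  · rintro u v ⟨hσ, hne⟩
    refine ⟨h3 u v hσ, hne, ?_⟩
    rintro ⟨rfl, rfl⟩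
    exact ((h4 _ _ hadj).mp hxyσ) hσ
  · intro u v hdel
    have e1 : (σ u v ∧ ¬(u = x ∧ v = y)) ↔ σ u v := and_iff_left hdel.2.1
    have e2 : (σ v u ∧ ¬(v = x ∧ u = y)) ↔ σ v u :=
      and_iff_left (fun hq => hdel.2.2 ⟨hq.2, hq.1⟩)
    rw [e1, e2]
    exact h4 u v hdel.1
  · intro v hTG
    exact h5 v (TransGen.mono (fun u v (h : σ u v ∧ _) => h.1) _ _ hTG)
  · intro u v hdel hlt
    exact ⟨h6 u v hdel.1 hlt, hdel.2.1⟩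
  · exact step_le h3 h4 h6 hxyσ
  · intro hT
    exact h5 y ((TransGen.mono (fun u v (h : σ u v ∧ _) => h.1) _ _ hT).tail hxyσ)

lemma QA_mem_backward (hadj : G.Adj x y) {f : W → ℕ} {σ : W → W → Prop}
    (hq : (f, σ) ∈ QS (Gdel G x y) B c m) (hle : f x ≤ f y) (hnc : ¬ TransGen σ y x) :
    (f, fun u v => σ u v ∨ (u = x ∧ v = y)) ∈ QS G B c m ∧
      (fun u v => σ u v ∨ (u = x ∧ v = y)) x y := by
  obtain ⟨h1, h2, h3, h4, h5, h6⟩ := mem_QS_iff.mp hq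
  refine ⟨mem_QS_iff.mpr ⟨h1, h2, ?_, ?_, ?_, ?_⟩, Or.inr ⟨rfl, rfl⟩⟩
  · rintro u v (h | ⟨rfl, rfl⟩)
    · exact (h3 u v h).1
    · exact hadj
  · intro u v hadj2
    by_cases hc1 : u = x ∧ v = y
    · obtain ⟨rfl, rfl⟩ := hc1
      constructor
      · rintro - (h | ⟨rfl, -⟩)
        · exact hnc (TransGen.single h)
        · exact hadj.ne rfl
      · intro _; exact Or.inr ⟨rfl, rfl⟩
    · by_cases hc2 : u = y ∧ v = x
      · obtain ⟨rfl, rfl⟩ := hc2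
        constructor
        · rintro (h | ⟨rfl, -⟩)
          · exact absurd (TransGen.single h) hnc
          · exact absurd rfl hadj.ne
        · intro hn
          exact absurd (Or.inr ⟨rfl, rfl⟩) hn
      · have hdel : (Gdel G x y).Adj u v := ⟨hadj2, hc1, hc2⟩
        have e1 : (σ u v ∨ (u = x ∧ v = y)) ↔ σ u v := or_iff_left hc1
        have e2 : (σ v u ∨ (v = x ∧ u = y)) ↔ σ v u :=
          or_iff_left (fun hc => hc2 ⟨hc.2, hc.1⟩)
        rw [e1, e2]
        exact h4 u v hdel
  · exact acyclic_addEdge h5 hadj.ne hnc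
  · intro u v hadj2 hlt
    by_cases hc1 : u = x ∧ v = y
    · exact Or.inr hc1
    · by_cases hc2 : u = y ∧ v = x
      · obtain ⟨rfl, rfl⟩ := hc2
        exact absurd hle (not_le.mpr hlt)
      · exact Or.inl (h6 u v ⟨hadj2, hc1, hc2⟩ hlt)

lemma QA_card (hadj : G.Adj x y) :
    Nat.card {p : (W → ℕ) × (W → W → Prop) // p ∈ QS G B c m ∧ p.2 x y}
      = Nat.card {q : (W → ℕ) × (W → W → Prop) //
          q ∈ QS (Gdel G x y) B c m ∧ q.1 x ≤ q.1 y ∧ ¬ TransGen q.2 y x} := by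
  apply Nat.card_congr
  refine
    { toFun := fun p =>
        ⟨(p.1.1, fun u v => p.1.2 u v ∧ ¬(u = x ∧ v = y)), ?_⟩
      invFun := fun q =>
        ⟨(q.1.1, fun u v => q.1.2 u v ∨ (u = x ∧ v = y)), ?_⟩
      left_inv := ?_
      right_inv := ?_ }
  · have := QA_mem_forward B c m hadj (f := p.1.1) (σ := p.1.2) ?_ p.2.2
    · exact this
    · exact p.2.1
  · have := QA_mem_backward B c m hadj (f := q.1.1) (σ := q.1.2) q.2.1 q.2.2.1 q.2.2.2
    exact ⟨this.1, this.2⟩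
  · rintro ⟨⟨f, σ⟩, hp, hxyσ⟩
    apply Subtype.ext
    dsimp only
    congr 1
    funext u v
    apply propext
    constructor
    · rintro (⟨h, -⟩ | ⟨rfl, rfl⟩)
      · exact h
      · exact hxyσ
    · intro h
      by_cases hc : u = x ∧ v = y
      · exact Or.inr hc
      · exact Or.inl ⟨h, hc⟩
  · rintro ⟨⟨f, σ⟩, hq, hle, hnc⟩
    apply Subtype.ext
    dsimp only
    congr 1
    funext u v
    apply propext
    constructor
    · rintro ⟨h | hc, hn⟩
      · exact h
      · exact absurd hc hn
    · intro h
      refine ⟨Or.inl h, ?_⟩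
      rintro ⟨rfl, rfl⟩
      exact (hq.2.2.1 _ _ h).2.1 ⟨rfl, rfl⟩

def Ex (G : SimpleGraph W) (x y : W) (B : Set W) (c : W → ℕ) (m : ℕ) :
    Set ((W → ℕ) × (W → W → Prop)) :=
  {q ∈ QS (Gdel G x y) B c m |
    q.1 x = q.1 y ∧ ¬ TransGen q.2 x y ∧ ¬ TransGen q.2 y x}

lemma QS_del_split [Finite W] (hadj : G.Adj x y) :
    (QS G B c m).ncard
      = (QS (Gdel G x y) B c m).ncard + (Ex G x y B c m).ncard := by
  classical
  set QA := {p ∈ QS G B c m | p.2 x y} with hQA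
  set QB := {p ∈ QS G B c m | p.2 y x} with hQB
  set TA := {q ∈ QS (Gdel G x y) B c m | q.1 x ≤ q.1 y ∧ ¬ TransGen q.2 y x} with hTA
  set TB := {q ∈ QS (Gdel G x y) B c m | q.1 y ≤ q.1 x ∧ ¬ TransGen q.2 x y} with hTB
  have hQfin : (QS G B c m).Finite := QS_finite G B c m
  have hDfin : (QS (Gdel G x y) B c m).Finite := QS_finite _ B c m
  have hU : QS G B c m = QA ∪ QB := by
    ext p
    constructor
    · intro hp
      obtain ⟨h1, h2, h3, h4, h5, h6⟩ := id hp
      by_cases h : p.2 x y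
      · exact Or.inl ⟨hp, h⟩
      · refine Or.inr ⟨hp, ?_⟩
        by_contra h'
        exact h ((h4 x y hadj).mpr h')
    · rintro (⟨hp, -⟩ | ⟨hp, -⟩) <;> exact hp
  have hdisj : Disjoint QA QB := by
    rw [Set.disjoint_left]
    rintro p ⟨hp, h1⟩ ⟨-, h2⟩
    exact (hp.2.2.2.1 x y hadj).mp h1 h2
  have hTU : TA ∪ TB = QS (Gdel G x y) B c m := by
    ext q
    constructor
    · rintro (⟨hq, -⟩ | ⟨hq, -⟩) <;> exact hq
    · intro hq
      obtain ⟨h1, h2, h3, h4, h5, h6⟩ := id hq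
      by_cases hyx : TransGen q.2 y x
      · refine Or.inr ⟨hq, transGen_le h3 h4 h6 hyx, fun hxy' => h5 y (hyx.trans hxy')⟩
      · by_cases hle : q.1 x ≤ q.1 y
        · exact Or.inl ⟨hq, hle, hyx⟩
        · push_neg at hle
          exact Or.inr ⟨hq, le_of_lt hle, fun hxy' =>
            absurd (transGen_le h3 h4 h6 hxy') (not_le.mpr hle)⟩
  have hTI : TA ∩ TB = Ex G x y B c m := by
    ext q
    constructor
    · rintro ⟨⟨hq, hle1, hnc1⟩, ⟨-, hle2, hnc2⟩⟩
      exact ⟨hq, le_antisymm hle1 hle2, hnc2, hnc1⟩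
    · rintro ⟨hq, heq, hnc1, hnc2⟩
      exact ⟨⟨hq, le_of_eq heq, hnc2⟩, ⟨hq, le_of_eq heq.symm, hnc1⟩⟩
  have hAcard : QA.ncard = TA.ncard := by
    rw [← Nat.card_coe_set_eq, ← Nat.card_coe_set_eq]
    exact QA_card B c m hadj
  have hBcard : QB.ncard = TB.ncard := by
    rw [← Nat.card_coe_set_eq, ← Nat.card_coe_set_eq]
    have := QA_card (G := G) (x := y) (y := x) B c m hadj.symm
    rw [← Gdel_comm] at this
    exact this
  have e1 : (QS G B c m).ncard = QA.ncard + QB.ncard := by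
    rw [hU]
    exact Set.ncard_union_eq hdisj (hQfin.subset (Set.sep_subset _ _))
      (hQfin.subset (Set.sep_subset _ _))
  have e2 : (TA ∪ TB).ncard + (TA ∩ TB).ncard = TA.ncard + TB.ncard :=
    Set.ncard_union_add_ncard_inter _ _ (hDfin.subset (Set.sep_subset _ _))
      (hDfin.subset (Set.sep_subset _ _))
  rw [hTU, hTI] at e2
  rw [e1, hAcard, hBcard, ← e2]

end Del

section Con

variable {G : SimpleGraph W} {x y : W}

def Gcon (G : SimpleGraph W) (x y : W) : SimpleGraph {v : W // v ≠ y} where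
  Adj a b := (Gdel G x y).Adj ↑a ↑b ∨ (↑a = x ∧ (Gdel G x y).Adj y ↑b) ∨
    (↑b = x ∧ (Gdel G x y).Adj ↑a y)
  symm := ⟨by
    rintro a b (h | ⟨hax, h⟩ | ⟨hbx, h⟩)
    · exact Or.inl h.symm
    · exact Or.inr (Or.inr ⟨hax, h.symm⟩)
    · exact Or.inr (Or.inl ⟨hbx, h.symm⟩)⟩
  loopless := ⟨by
    rintro a (h | ⟨hax, h⟩ | ⟨hax, h⟩)
    · exact (Gdel G x y).irrefl h
    · rw [hax] at h
      exact h.2.2 ⟨rfl, rfl⟩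
    · rw [hax] at h
      exact h.2.1 ⟨rfl, rfl⟩⟩

lemma Gcon_adj {a b : {v : W // v ≠ y}} : (Gcon G x y).Adj a b ↔
    (Gdel G x y).Adj ↑a ↑b ∨ (↑a = x ∧ (Gdel G x y).Adj y ↑b) ∨
      (↑b = x ∧ (Gdel G x y).Adj ↑a y) := Iff.rfl

open Classical in
noncomputable def proj (x : W) {y : W} (hxy : x ≠ y) : W → {v : W // v ≠ y} :=
  fun v => if h : v = y then ⟨x, hxy⟩ else ⟨v, h⟩

lemma proj_y (hxy : x ≠ y) : proj x hxy y = ⟨x, hxy⟩ := by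
  rw [proj]
  exact dif_pos rfl

lemma proj_ne (hxy : x ≠ y) {v : W} (h : v ≠ y) : proj x hxy v = ⟨v, h⟩ := by
  rw [proj]
  exact dif_neg h

lemma proj_coe (hxy : x ≠ y) (a : {v : W // v ≠ y}) : proj x hxy ↑a = a := by
  rw [proj_ne hxy a.2]

def rho (σ : W → W → Prop) (x y : W) : W → W → Prop :=
  fun u v => σ u v ∨ (u = x ∧ v = y) ∨ (u = y ∧ v = x)

lemma proj_eq_bridge (hxy : x ≠ y) {σ : W → W → Prop} {u v : W}
    (h : proj x hxy u = proj x hxy v) : ReflTransGen (rho σ x y) u v := by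
  by_cases hu : u = y
  · by_cases hv : v = y
    · subst hu; subst hv; exact .refl
    · subst hu
      rw [proj_y, proj_ne hxy hv] at h
      have : x = v := congrArg Subtype.val h
      exact ReflTransGen.single (Or.inr (Or.inr ⟨rfl, this.symm⟩))
  · by_cases hv : v = y
    · subst hv
      rw [proj_y, proj_ne hxy hu] at h
      have : u = x := congrArg Subtype.val h
      exact ReflTransGen.single (Or.inr (Or.inl ⟨this, rfl⟩))
    · rw [proj_ne hxy hu, proj_ne hxy hv] at h
      have : u = v := congrArg Subtype.val h
      exact this ▸ .refl

def projO (x y : W) (σ : W → W → Prop) :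
    {v : W // v ≠ y} → {v : W // v ≠ y} → Prop :=
  fun a b => σ ↑a ↑b ∨ (↑a = x ∧ σ y ↑b) ∨ (↑b = x ∧ σ ↑a y)

def liftO (G : SimpleGraph W) {x y : W} (hxy : x ≠ y)
    (τ : {v : W // v ≠ y} → {v : W // v ≠ y} → Prop) : W → W → Prop :=
  fun u v => (Gdel G x y).Adj u v ∧ τ (proj x hxy u) (proj x hxy v)

lemma projO_step (hxy : x ≠ y) {σ : W → W → Prop} {a b : {v : W // v ≠ y}}
    (h : projO x y σ a b) :
    ∃ p q, σ p q ∧ proj x hxy p = a ∧ proj x hxy q = b := by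
  rcases h with h | ⟨hax, h⟩ | ⟨hbx, h⟩
  · exact ⟨↑a, ↑b, h, proj_coe hxy a, proj_coe hxy b⟩
  · exact ⟨y, ↑b, h, by rw [proj_y]; exact Subtype.ext hax.symm, proj_coe hxy b⟩
  · exact ⟨↑a, y, h, proj_coe hxy a, by rw [proj_y]; exact Subtype.ext hbx.symm⟩

lemma lift_path (hxy : x ≠ y) {σ : W → W → Prop} {a b : {v : W // v ≠ y}}
    (h : TransGen (projO x y σ) a b) :
    ∀ u v : W, proj x hxy u = a → proj x hxy v = b →
      ∃ p q, σ p q ∧ ReflTransGen (rho σ x y) u p ∧ ReflTransGen (rho σ x y) q v := by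
  induction h with
  | single h =>
    intro u v hu hv
    obtain ⟨p, q, hσ, hp, hq⟩ := projO_step hxy h
    exact ⟨p, q, hσ, proj_eq_bridge hxy (hu.trans hp.symm),
      proj_eq_bridge hxy (hq.trans hv.symm)⟩
  | tail hac hstep IH =>
    intro u v hu hv
    obtain ⟨p', q', hσ', hp', hq'⟩ := projO_step hxy hstep
    obtain ⟨p, q, hσ, h1, h2⟩ := IH u p' hu hp'
    refine ⟨p, q, hσ, h1, ?_⟩
    exact (h2.trans (ReflTransGen.single (Or.inl hσ'))).trans
      (proj_eq_bridge hxy (hq'.trans hv.symm))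

lemma projO_acyclic (hxy : x ≠ y) {σ : W → W → Prop}
    (hac : ∀ v, ¬ TransGen σ v v)
    (hncxy : ¬ TransGen σ x y) (hncyx : ¬ TransGen σ y x) :
    ∀ a, ¬ TransGen (projO x y σ) a a := by
  intro a h
  obtain ⟨p, q, hσ, h1, h2⟩ := lift_path hxy h ↑a ↑a (proj_coe hxy a) (proj_coe hxy a)
  exact key_cyc hac hxy hncxy hncyx hσ (h2.trans h1)

lemma adj_proj (hxy : x ≠ y) {u v : W} (h : (Gdel G x y).Adj u v) :
    (Gcon G x y).Adj (proj x hxy u) (proj x hxy v) := by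
  by_cases hu : u = y
  · have h' : (Gdel G x y).Adj y v := by rwa [hu] at h
    have hv : v ≠ y := h'.ne'
    rw [hu, proj_y, proj_ne hxy hv]
    exact Or.inr (Or.inl ⟨rfl, h'⟩)
  · by_cases hv : v = y
    · have h' : (Gdel G x y).Adj u y := by rwa [hv] at h
      rw [hv, proj_y, proj_ne hxy hu]
      exact Or.inr (Or.inr ⟨rfl, h'⟩)
    · rw [proj_ne hxy hu, proj_ne hxy hv]
      exact Or.inl h

lemma adj_lift (hxy : x ≠ y) {a b : {v : W // v ≠ y}} (h : (Gcon G x y).Adj a b) :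
    ∃ u v : W, (Gdel G x y).Adj u v ∧ proj x hxy u = a ∧ proj x hxy v = b := by
  rcases h with h | ⟨hax, h⟩ | ⟨hbx, h⟩
  · exact ⟨↑a, ↑b, h, proj_coe hxy a, proj_coe hxy b⟩
  · exact ⟨y, ↑b, h, by rw [proj_y]; exact Subtype.ext hax.symm, proj_coe hxy b⟩
  · exact ⟨↑a, y, h, proj_coe hxy a, by rw [proj_y]; exact Subtype.ext hbx.symm⟩

variable (B : Set W) (c : W → ℕ) (m : ℕ)

lemma con_mem_forward (hxy : x ≠ y) {f : W → ℕ} {σ' : W → W → Prop}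
    (h : (f, σ') ∈ Ex G x y B c m) :
    ((fun a : {v : W // v ≠ y} => f ↑a), projO x y σ') ∈
      QS (Gcon G x y) {a : {v : W // v ≠ y} | ↑a ∈ B} (fun a => c ↑a) m := by
  obtain ⟨hq, heq, hncxy, hncyx⟩ := h
  obtain ⟨h1, h2, h3, h4, h5, h6⟩ := hq
  have heqf : f x = f y := heq
  have noth : ∀ {a b : {v : W // v ≠ y}}, a ≠ b →
      projO x y σ' a b → projO x y σ' b a → False := by
    rintro a b hne (hab | ⟨hax, hab⟩ | ⟨hbx, hab⟩) (hba | ⟨hbx', hba⟩ | ⟨hax', hba⟩)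
    · exact h5 ↑a ((TransGen.single hab).tail hba)
    · apply hncyx
      have := (TransGen.single hba).tail hab
      rwa [hbx'] at this
    · apply hncxy
      have := (TransGen.single hab).tail hba
      rwa [hax'] at this
    · apply hncyx
      have := (TransGen.single hab).tail hba
      rwa [hax] at this
    · exact hne (Subtype.ext (hax.trans hbx'.symm))
    · exact h5 y ((TransGen.single hab).tail hba)
    · apply hncxy
      have := (TransGen.single hba).tail hab
      rwa [hbx] at this
    · exact h5 y ((TransGen.single hba).tail hab)
    · exact hne (Subtype.ext (hax'.trans hbx.symm))
  refine mem_QS_iff.mpr ⟨fun a => h1 ↑a, fun a ha => h2 ↑a ha, ?_, ?_, ?_, ?_⟩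
  · rintro a b (h | ⟨hax, h⟩ | ⟨hbx, h⟩)
    · exact Or.inl (h3 _ _ h)
    · exact Or.inr (Or.inl ⟨hax, h3 _ _ h⟩)
    · exact Or.inr (Or.inr ⟨hbx, h3 _ _ h⟩)
  · intro a b hcon
    constructor
    · intro hab hba
      exact noth hcon.ne hab hba
    · intro hn
      rcases hcon with hd | ⟨hax, hd⟩ | ⟨hbx, hd⟩
      · have : σ' ↑a ↑b ∨ σ' ↑b ↑a := by
          by_cases hσ : σ' ↑a ↑b
          · exact Or.inl hσ
          · refine Or.inr ?_
            by_contra hba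
            exact hσ ((h4 _ _ hd).mpr hba)
        rcases this with hσ | hσ
        · exact Or.inl hσ
        · exact absurd (Or.inl hσ : projO x y σ' b a) hn
      · have : σ' y ↑b ∨ σ' ↑b y := by
          by_cases hσ : σ' y ↑b
          · exact Or.inl hσ
          · refine Or.inr ?_
            by_contra hba
            exact hσ ((h4 _ _ hd).mpr hba)
        rcases this with hσ | hσ
        · exact Or.inr (Or.inl ⟨hax, hσ⟩)
        · exact absurd (Or.inr (Or.inr ⟨hax, hσ⟩) : projO x y σ' b a) hn
      · have : σ' ↑a y ∨ σ' y ↑a := by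
          by_cases hσ : σ' ↑a y
          · exact Or.inl hσ
          · refine Or.inr ?_
            by_contra hba
            exact hσ ((h4 _ _ hd).mpr hba)
        rcases this with hσ | hσ
        · exact Or.inr (Or.inr ⟨hbx, hσ⟩)
        · exact absurd (Or.inr (Or.inl ⟨hbx, hσ⟩) : projO x y σ' b a) hn
  · exact projO_acyclic hxy h5 hncxy hncyx
  · intro a b hcon hlt
    rcases hcon with hd | ⟨hax, hd⟩ | ⟨hbx, hd⟩
    · exact Or.inl (h6 _ _ hd hlt)
    · refine Or.inr (Or.inl ⟨hax, h6 _ _ hd ?_⟩)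
      have hfy : f y = f ↑a := by rw [← heqf, hax]
      show f y < f ↑b
      rw [hfy]
      exact hlt
    · refine Or.inr (Or.inr ⟨hbx, h6 _ _ hd ?_⟩)
      have hfy : f ↑b = f y := by rw [hbx, heqf]
      show f ↑a < f y
      rw [← hfy]
      exact hlt

lemma con_mem_backward (hxy : x ≠ y) (hyB : y ∉ B) {g : {v : W // v ≠ y} → ℕ}
    {τ : {v : W // v ≠ y} → {v : W // v ≠ y} → Prop}
    (h : (g, τ) ∈ QS (Gcon G x y) {a : {v : W // v ≠ y} | ↑a ∈ B} (fun a => c ↑a) m) :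
    ((fun v => g (proj x hxy v)), liftO G hxy τ) ∈ Ex G x y B c m := by
  obtain ⟨h1, h2, h3, h4, h5, h6⟩ := h
  refine ⟨mem_QS_iff.mpr ⟨fun v => h1 _, ?_, ?_, ?_, ?_, ?_⟩, ?_, ?_, ?_⟩
  · intro a ha
    have hay : a ≠ y := fun h' => hyB (h' ▸ ha)
    rw [proj_ne hxy hay]
    exact h2 ⟨a, hay⟩ ha
  · rintro u v ⟨hd, -⟩
    exact hd
  · intro u v hd
    constructor
    · rintro ⟨-, ht⟩ ⟨-, ht'⟩
      exact (h4 _ _ (adj_proj hxy hd)).mp ht ht'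
    · intro hn
      refine ⟨hd, ?_⟩
      by_contra hnt
      exact hn ⟨hd.symm, (h4 _ _ (adj_proj hxy hd.symm)).mpr hnt⟩
  · intro v hTG
    exact h5 (proj x hxy v) (Relation.TransGen.lift (proj x hxy) (fun u v (h : liftO G hxy τ u v) => h.2) _ _ hTG)
  · intro u v hd hlt
    exact ⟨hd, h6 _ _ (adj_proj hxy hd) hlt⟩
  · show g (proj x hxy x) = g (proj x hxy y)
    rw [proj_y, proj_ne hxy hxy]
  · intro hT
    have : TransGen τ (proj x hxy x) (proj x hxy y) := Relation.TransGen.lift (proj x hxy) (fun u v (h : liftO G hxy τ u v) => h.2) _ _ hT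
    rw [proj_y, proj_ne hxy hxy] at this
    exact h5 _ this
  · intro hT
    have : TransGen τ (proj x hxy y) (proj x hxy x) := Relation.TransGen.lift (proj x hxy) (fun u v (h : liftO G hxy τ u v) => h.2) _ _ hT
    rw [proj_y, proj_ne hxy hxy] at this
    exact h5 _ this

lemma liftO_projO (hxy : x ≠ y) {f : W → ℕ} {σ' : W → W → Prop}
    (h : (f, σ') ∈ Ex G x y B c m) :
    liftO G hxy (projO x y σ') = σ' := by
  obtain ⟨hq, heq, hncxy, hncyx⟩ := h
  obtain ⟨h1, h2, h3, h4, h5, h6⟩ := hq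
  funext u v
  apply propext
  constructor
  · rintro ⟨hd, ht⟩
    by_contra hns
    have hvu : σ' v u := by
      by_contra hvu
      exact hns ((h4 u v hd).mpr hvu)
    by_cases hu : u = y
    · have hd' : (Gdel G x y).Adj y v := by rwa [hu] at hd
      have hv : v ≠ y := hd'.ne'
      rw [hu, proj_y, proj_ne hxy hv] at ht
      rw [hu] at hvu hns
      rcases ht with ht | ⟨-, ht⟩ | ⟨hvx, ht⟩
      · exact hncxy ((TransGen.single ht).tail hvu)
      · exact hns ht
      · exact hncxy (TransGen.single ht)
    · by_cases hv : v = y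
      · rw [hv, proj_ne hxy hu, proj_y] at ht
        rw [hv] at hvu hns
        rcases ht with ht | ⟨hux, ht⟩ | ⟨-, ht⟩
        · exact hncyx ((TransGen.single hvu).tail ht)
        · exact hncyx (TransGen.single ht)
        · exact hns ht
      · rw [proj_ne hxy hu, proj_ne hxy hv] at ht
        rcases ht with ht | ⟨hux, ht⟩ | ⟨hvx, ht⟩
        · exact hns ht
        · apply hncyx
          have hux' : u = x := hux
          have := (TransGen.single ht).tail hvu
          rwa [hux'] at this
        · apply hncxy
          have hvx' : v = x := hvx
          have := (TransGen.single hvu).tail ht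
          rwa [hvx'] at this
  · intro hσ
    refine ⟨h3 u v hσ, ?_⟩
    by_cases hu : u = y
    · have hσ' : σ' y v := by rwa [hu] at hσ
      have hv : v ≠ y := ((h3 _ _ hσ').ne' : v ≠ y)
      rw [hu, proj_y, proj_ne hxy hv]
      exact Or.inr (Or.inl ⟨rfl, hσ'⟩)
    · by_cases hv : v = y
      · have hσ' : σ' u y := by rwa [hv] at hσ
        rw [hv, proj_ne hxy hu, proj_y]
        exact Or.inr (Or.inr ⟨rfl, hσ'⟩)
      · rw [proj_ne hxy hu, proj_ne hxy hv]
        exact Or.inl hσ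

lemma projO_liftO (hxy : x ≠ y) {g : {v : W // v ≠ y} → ℕ}
    {τ : {v : W // v ≠ y} → {v : W // v ≠ y} → Prop}
    (h : (g, τ) ∈ QS (Gcon G x y) {a : {v : W // v ≠ y} | ↑a ∈ B} (fun a => c ↑a) m) :
    projO x y (liftO G hxy τ) = τ := by
  obtain ⟨h1, h2, h3, h4, h5, h6⟩ := h
  funext a b
  apply propext
  constructor
  · rintro (⟨hd, ht⟩ | ⟨hax, hd, ht⟩ | ⟨hbx, hd, ht⟩)
    · rwa [proj_coe hxy a, proj_coe hxy b] at ht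
    · rw [proj_y, proj_coe hxy b] at ht
      have hax' : (⟨x, hxy⟩ : {v : W // v ≠ y}) = a := Subtype.ext hax.symm
      rwa [hax'] at ht
    · rw [proj_coe hxy a, proj_y] at ht
      have hbx' : (⟨x, hxy⟩ : {v : W // v ≠ y}) = b := Subtype.ext hbx.symm
      rwa [hbx'] at ht
  · intro ht
    obtain ⟨u, v, hd, hu, hv⟩ := adj_lift hxy (h3 a b ht)
    have hσ : liftO G hxy τ u v := ⟨hd, by rw [hu, hv]; exact ht⟩
    by_cases huy : u = y
    · rw [huy, proj_y] at hu
      have hd' : (Gdel G x y).Adj y v := by rwa [huy] at hd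
      have hvy : v ≠ y := hd'.ne'
      rw [proj_ne hxy hvy] at hv
      rw [huy] at hσ
      refine Or.inr (Or.inl ⟨by rw [← hu], ?_⟩)
      rw [← hv]
      exact hσ
    · by_cases hvy : v = y
      · rw [hvy, proj_y] at hv
        rw [proj_ne hxy huy] at hu
        rw [hvy] at hσ
        refine Or.inr (Or.inr ⟨by rw [← hv], ?_⟩)
        rw [← hu]
        exact hσ
      · rw [proj_ne hxy huy] at hu
        rw [proj_ne hxy hvy] at hv
        refine Or.inl ?_
        rw [← hu, ← hv]
        exact hσ

lemma Ex_card (hxy : x ≠ y) (hyB : y ∉ B) :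
    (Ex G x y B c m).ncard
      = (QS (Gcon G x y) {a : {v : W // v ≠ y} | ↑a ∈ B} (fun a => c ↑a) m).ncard := by
  rw [← Nat.card_coe_set_eq, ← Nat.card_coe_set_eq]
  apply Nat.card_congr
  refine
    { toFun := fun p => ⟨((fun a => p.1.1 ↑a), projO x y p.1.2),
        con_mem_forward B c m hxy p.2⟩
      invFun := fun q => ⟨((fun v => q.1.1 (proj x hxy v)), liftO G hxy q.1.2),
        con_mem_backward B c m hxy hyB q.2⟩
      left_inv := ?_
      right_inv := ?_ }
  · rintro ⟨⟨f, σ'⟩, hp⟩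
    apply Subtype.ext
    dsimp only
    congr 1
    · funext v
      by_cases hv : v = y
      · rw [hv, proj_y]
        exact hp.2.1
      · rw [proj_ne hxy hv]
    · exact liftO_projO B c m hxy hp
  · rintro ⟨⟨g, τ⟩, hq⟩
    apply Subtype.ext
    dsimp only
    congr 1
    · funext a
      rw [proj_coe hxy a]
    · exact projO_liftO B c m hxy hq

/-- contraction bijection for colorings -/
lemma NS_con_card (hxy : x ≠ y) (hyB : y ∉ B) :
    {f ∈ NS (Gdel G x y) B c m | f x = f y}.ncard
      = (NS (Gcon G x y) {a : {v : W // v ≠ y} | ↑a ∈ B} (fun a => c ↑a) m).ncard := by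
  rw [← Nat.card_coe_set_eq, ← Nat.card_coe_set_eq]
  apply Nat.card_congr
  refine
    { toFun := fun p => ⟨fun a => p.1 ↑a, ?_⟩
      invFun := fun g => ⟨fun v => g.1 (proj x hxy v), ?_⟩
      left_inv := ?_
      right_inv := ?_ }
  · obtain ⟨⟨h1, h2, h3⟩, heq⟩ := p.2
    refine ⟨fun a => h1 ↑a, fun a ha => h2 ↑a ha, ?_⟩
    rintro a b (hd | ⟨hax, hd⟩ | ⟨hbx, hd⟩)
    · exact h3 _ _ hd
    · have hpa : p.1 ↑a = p.1 y := by
        have hax' : (a : W) = x := hax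
        rw [hax', heq]
      show p.1 ↑a ≠ p.1 ↑b
      rw [hpa]
      exact h3 _ _ hd
    · have hpb : p.1 ↑b = p.1 y := by
        have hbx' : (b : W) = x := hbx
        rw [hbx', heq]
      show p.1 ↑a ≠ p.1 ↑b
      rw [hpb]
      intro hc
      exact h3 _ _ hd hc
  · obtain ⟨h1, h2, h3⟩ := g.2
    refine ⟨⟨fun v => h1 _, ?_, ?_⟩, ?_⟩
    · intro a ha
      have hay : a ≠ y := fun h' => hyB (h' ▸ ha)
      show g.1 (proj x hxy a) = c a
      rw [proj_ne hxy hay]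
      exact h2 ⟨a, hay⟩ ha
    · intro u v hd
      exact h3 _ _ (adj_proj hxy hd)
    · show g.1 (proj x hxy x) = g.1 (proj x hxy y)
      rw [proj_y, proj_ne hxy hxy]
  · rintro ⟨f, hf⟩
    apply Subtype.ext
    funext v
    dsimp only
    by_cases hv : v = y
    · rw [hv, proj_y]
      exact hf.2
    · rw [proj_ne hxy hv]
  · rintro ⟨g, hg⟩
    apply Subtype.ext
    funext a
    dsimp only
    rw [proj_coe hxy a]

/-- edge counts -/
lemma Gdel_edgeSet (hadj : G.Adj x y) :
    (Gdel G x y).edgeSet = G.edgeSet \ {s(x, y)} := by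
  ext e
  induction e with
  | _ u v =>
    rw [SimpleGraph.mem_edgeSet, Set.mem_diff, SimpleGraph.mem_edgeSet, Gdel_adj,
      Set.mem_singleton_iff, Sym2.eq_iff]
    tauto

lemma Gdel_edge_lt [Finite W] (hadj : G.Adj x y) :
    (Gdel G x y).edgeSet.ncard < G.edgeSet.ncard := by
  rw [Gdel_edgeSet hadj]
  exact Set.ncard_diff_singleton_lt_of_mem (G.mem_edgeSet.mpr hadj)
    (Set.toFinite _)

lemma Gcon_edge_le [Finite W] (hxy : x ≠ y) :
    (Gcon G x y).edgeSet.ncard ≤ (Gdel G x y).edgeSet.ncard := by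
  have hsub : (Gcon G x y).edgeSet ⊆ (Sym2.map (proj x hxy)) '' (Gdel G x y).edgeSet := by
    intro e he
    induction e with
    | _ a b =>
      obtain ⟨u, v, hd, hu, hv⟩ := adj_lift hxy ((Gcon G x y).mem_edgeSet.mp he)
      refine ⟨s(u, v), (Gdel G x y).mem_edgeSet.mpr hd, ?_⟩
      rw [Sym2.map_pair_eq, hu, hv]
  calc (Gcon G x y).edgeSet.ncard
      ≤ ((Sym2.map (proj x hxy)) '' (Gdel G x y).edgeSet).ncard :=
        Set.ncard_le_ncard hsub ((Set.toFinite _).image _)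
    _ ≤ (Gdel G x y).edgeSet.ncard := Set.ncard_image_le (Set.toFinite _)

/-- vertex-count bookkeeping for contraction -/
lemma compl_card [Finite W] (hxy : x ≠ y) (hyB : y ∉ B) :
    Nat.card ↥(Bᶜ)
      = Nat.card ↥({a : {v : W // v ≠ y} | ↑a ∈ B}ᶜ) + 1 := by
  rw [Nat.card_coe_set_eq, Nat.card_coe_set_eq]
  have himg : (Subtype.val '' ({a : {v : W // v ≠ y} | ↑a ∈ B}ᶜ) : Set W)
      = Bᶜ \ {y} := by
    ext v
    constructor
    · rintro ⟨a, ha, rfl⟩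
      exact ⟨ha, a.2⟩
    · rintro ⟨hv, hvy⟩
      exact ⟨⟨v, hvy⟩, hv, rfl⟩
  have h1 : ({a : {v : W // v ≠ y} | ↑a ∈ B}ᶜ).ncard = (Bᶜ \ {y}).ncard := by
    rw [← himg]
    exact (Set.ncard_image_of_injective _ Subtype.val_injective).symm
  rw [h1]
  exact (Set.ncard_diff_singleton_add_one (a := y) (s := Bᶜ) hyB (Set.toFinite _)).symm

end Con

section Base

variable [Finite W] {G : SimpleGraph W} {B : Set W} {c : W → ℕ} {k m : ℕ}

lemma NSfree_card (hkm : k ≤ m) (hc : ∀ a ∈ B, 1 ≤ c a ∧ c a ≤ k) :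
    Nat.card ↥{f : W → ℕ | (∀ v, 1 ≤ f v ∧ f v ≤ m) ∧ ∀ a ∈ B, f a = c a}
      = m ^ (Nat.card ↥(Bᶜ)) := by
  classical
  have e : ↥{f : W → ℕ | (∀ v, 1 ≤ f v ∧ f v ≤ m) ∧ ∀ a ∈ B, f a = c a}
      ≃ (↥(Bᶜ) → ↥(Set.Icc 1 m)) :=
    { toFun := fun f v => ⟨f.1 ↑v, Set.mem_Icc.mpr ⟨(f.2.1 ↑v).1, (f.2.1 ↑v).2⟩⟩
      invFun := fun g =>
        ⟨fun v => if h : v ∈ B then c v else ↑(g ⟨v, h⟩), by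
          constructor
          · intro v
            dsimp only
            by_cases h : v ∈ B
            · rw [dif_pos h]
              exact ⟨(hc v h).1, le_trans (hc v h).2 hkm⟩
            · rw [dif_neg h]
              exact ⟨(Set.mem_Icc.mp (g ⟨v, h⟩).2).1, (Set.mem_Icc.mp (g ⟨v, h⟩).2).2⟩
          · intro a ha
            dsimp only
            rw [dif_pos ha]⟩
      left_inv := by
        rintro ⟨f, hf⟩
        apply Subtype.ext
        funext v
        dsimp only
        by_cases h : v ∈ B
        · rw [dif_pos h]
          exact (hf.2 v h).symm
        · rw [dif_neg h]
      right_inv := by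
        intro g
        funext v
        apply Subtype.ext
        dsimp only
        rw [dif_neg (v.2 : ↑v ∉ B)] }
  rw [Nat.card_congr e, Nat.card_fun]
  have hicc : Nat.card ↥(Set.Icc 1 m) = m := by
    rw [Nat.card_coe_set_eq, Set.ncard_eq_toFinset_card', Set.toFinset_Icc,
      Nat.card_Icc]
    omega
  rw [hicc]

lemma NS_base_card (hkm : k ≤ m) (hc : ∀ a ∈ B, 1 ≤ c a ∧ c a ≤ k)
    (hinj : Set.InjOn c B) (hbase : ∀ u v : W, G.Adj u v → u ∈ B ∧ v ∈ B) :
    (NS G B c m).ncard = m ^ (Nat.card ↥(Bᶜ)) := by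
  have hNS : NS G B c m
      = {f : W → ℕ | (∀ v, 1 ≤ f v ∧ f v ≤ m) ∧ ∀ a ∈ B, f a = c a} := by
    ext f
    constructor
    · rintro ⟨h1, h2, -⟩
      exact ⟨h1, h2⟩
    · rintro ⟨h1, h2⟩
      refine ⟨h1, h2, fun u v hadj => ?_⟩
      obtain ⟨hu, hv⟩ := hbase u v hadj
      rw [h2 u hu, h2 v hv]
      intro hcc
      exact hadj.ne (hinj hu hv hcc)
  rw [hNS, ← Nat.card_coe_set_eq, NSfree_card hkm hc]

lemma base_sigma_mem (hinj : Set.InjOn c B) (hbase : ∀ u v : W, G.Adj u v → u ∈ B ∧ v ∈ B)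
    {f : W → ℕ} (h1 : ∀ v, 1 ≤ f v ∧ f v ≤ m) (h2 : ∀ a ∈ B, f a = c a) :
    (f, fun u v => G.Adj u v ∧ f u < f v) ∈ QS G B c m := by
  have hne : ∀ u v : W, G.Adj u v → f u ≠ f v := by
    intro u v hadj
    obtain ⟨hu, hv⟩ := hbase u v hadj
    rw [h2 u hu, h2 v hv]
    intro hcc
    exact hadj.ne (hinj hu hv hcc)
  refine mem_QS_iff.mpr ⟨h1, h2, fun u v h => h.1, ?_, ?_, fun u v hadj hlt => ⟨hadj, hlt⟩⟩
  · intro u v hadj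
    constructor
    · rintro ⟨-, hlt⟩ ⟨-, hlt'⟩
      exact lt_asymm hlt hlt'
    · intro hn
      refine ⟨hadj, ?_⟩
      rcases lt_or_gt_of_ne (hne u v hadj) with h | h
      · exact h
      · exact absurd ⟨hadj.symm, h⟩ hn
  · intro v hT
    exact lt_irrefl _ (transGen_lt (fun u v h => h.2) hT)

lemma QS_base_card (hkm : k ≤ m) (hc : ∀ a ∈ B, 1 ≤ c a ∧ c a ≤ k)
    (hinj : Set.InjOn c B) (hbase : ∀ u v : W, G.Adj u v → u ∈ B ∧ v ∈ B) :
    (QS G B c m).ncard = m ^ (Nat.card ↥(Bᶜ)) := by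
  rw [← Nat.card_coe_set_eq]
  have e : ↥(QS G B c m)
      ≃ ↥{f : W → ℕ | (∀ v, 1 ≤ f v ∧ f v ≤ m) ∧ ∀ a ∈ B, f a = c a} :=
    { toFun := fun p => ⟨p.1.1, p.2.1, p.2.2.1⟩
      invFun := fun f => ⟨(f.1, fun u v => G.Adj u v ∧ f.1 u < f.1 v),
        base_sigma_mem hinj hbase f.2.1 f.2.2⟩
      left_inv := by
        rintro ⟨⟨f, σ⟩, hp⟩
        obtain ⟨h1, h2, h3, h4, h5, h6⟩ := id hp
        have h2' : ∀ a ∈ B, f a = c a := h2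
        apply Subtype.ext
        dsimp only
        congr 1
        funext u v
        apply propext
        constructor
        · rintro ⟨hadj, hlt⟩
          exact h6 u v hadj hlt
        · intro hσ
          have hadj := h3 u v hσ
          refine ⟨hadj, ?_⟩
          obtain ⟨hu, hv⟩ := hbase u v hadj
          have hne : f u ≠ f v := by
            rw [h2' u hu, h2' v hv]
            intro hcc
            exact hadj.ne (hinj hu hv hcc)
          exact lt_of_le_of_ne (step_le h3 h4 h6 hσ) hne
      right_inv := by
        rintro ⟨f, hf⟩
        apply Subtype.ext
        rfl }
  rw [Nat.card_congr e, NSfree_card hkm hc]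

end Base

theorem master (j : ℕ) : ∀ (W : Type u) [Finite W] (G : SimpleGraph W) (B : Set W)
    (k : ℕ) (c : W → ℕ), G.edgeSet.ncard ≤ j → 1 ≤ k →
    (∀ a ∈ B, 1 ≤ c a ∧ c a ≤ k) → Set.InjOn c B →
    ∃ Z : Polynomial ℝ,
      (∀ m : ℕ, k ≤ m → Z.eval (m : ℝ) = ((NS G B c m).ncard : ℝ)) ∧
      (∀ m : ℕ, k ≤ m →
        Z.eval (-(m : ℝ)) = (-1) ^ (Nat.card ↥(Bᶜ)) * ((QS G B c m).ncard : ℝ)) := by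
  induction j using Nat.strong_induction_on with
  | _ j IH =>
    intro W _ G B k c hj hk hc hinj
    by_cases hbase : ∀ u v : W, G.Adj u v → u ∈ B ∧ v ∈ B
    · refine ⟨Polynomial.X ^ (Nat.card ↥(Bᶜ)), ?_, ?_⟩
      · intro m hm
        rw [Polynomial.eval_pow, Polynomial.eval_X, NS_base_card hm hc hinj hbase]
        push_cast
        ring
      · intro m hm
        rw [Polynomial.eval_pow, Polynomial.eval_X, QS_base_card hm hc hinj hbase]
        push_cast
        rw [neg_pow]
    · push_neg at hbase
      obtain ⟨u0, v0, hadj0, hnot⟩ := hbase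
      obtain ⟨x, y, hadj, hyB⟩ : ∃ x y, G.Adj x y ∧ y ∉ B := by
        by_cases hu : u0 ∈ B
        · exact ⟨u0, v0, hadj0, hnot hu⟩
        · exact ⟨v0, u0, hadj0.symm, hu⟩
      have hxy : x ≠ y := hadj.ne
      have hdel_lt : (Gdel G x y).edgeSet.ncard < j :=
        lt_of_lt_of_le (Gdel_edge_lt hadj) hj
      have hcon_lt : (Gcon G x y).edgeSet.ncard < j :=
        lt_of_le_of_lt (Gcon_edge_le hxy) hdel_lt
      have hc' : ∀ a ∈ {a : {v : W // v ≠ y} | ↑a ∈ B}, 1 ≤ c ↑a ∧ c ↑a ≤ k :=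
        fun a ha => hc ↑a ha
      have hinj' : Set.InjOn (fun a : {v : W // v ≠ y} => c ↑a)
          {a : {v : W // v ≠ y} | ↑a ∈ B} :=
        fun a ha b hb hcc => Subtype.ext (hinj ha hb hcc)
      obtain ⟨Zd, hZd1, hZd2⟩ := IH _ hdel_lt W (Gdel G x y) B k c le_rfl hk hc hinj
      obtain ⟨Zc, hZc1, hZc2⟩ := IH _ hcon_lt {v : W // v ≠ y} (Gcon G x y)
        {a : {v : W // v ≠ y} | ↑a ∈ B} k (fun a => c ↑a) le_rfl hk hc' hinj'
      refine ⟨Zd - Zc, ?_, ?_⟩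
      · intro m hm
        rw [Polynomial.eval_sub, hZd1 m hm, hZc1 m hm]
        have h1 := NS_del_split B c m hadj
        have h2 := NS_con_card (G := G) B c m hxy hyB
        rw [h2] at h1
        rw [h1]
        push_cast
        ring
      · intro m hm
        rw [Polynomial.eval_sub, hZd2 m hm, hZc2 m hm]
        have h1 := QS_del_split B c m hadj
        have h2 := Ex_card (G := G) B c m hxy hyB
        have h3 := compl_card (B := B) hxy hyB
        rw [h2] at h1
        rw [h1, h3]
        push_cast
        ring

end Stmt18Aux

/-- if the partial coloring `c` is injective on `A`, then for `m ≥ k`,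
`|χ_{G,c}(-m)|` counts pairs `(ĉ, σ)` of an (arbitrary) extension of `c` of size `m`
and an acyclic orientation `σ` of `G` weakly compatible with `ĉ`. -/
theorem stmt18 (V : Type*) [Fintype V] (G : SimpleGraph V) (A : Set V)
    (k : ℕ) (hk : 1 ≤ k) (c : V → ℕ) (hc : ∀ a ∈ A, 1 ≤ c a ∧ c a ≤ k)
    (hinj : Set.InjOn c A)
    (χ : Polynomial ℝ)
    (hχ : ∀ m : ℕ, k ≤ m →
      χ.eval (m : ℝ) =
        Nat.card {cc : V → ℕ | (∀ v, 1 ≤ cc v ∧ cc v ≤ m) ∧ (∀ a ∈ A, cc a = c a) ∧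
          ∀ u v : V, G.Adj u v → cc u ≠ cc v})
    (m : ℕ) (hm : k ≤ m) :
    |χ.eval (-(m : ℝ))| =
      Nat.card {p : (V → ℕ) × (V → V → Prop) |
        (∀ v, 1 ≤ p.1 v ∧ p.1 v ≤ m) ∧ (∀ a ∈ A, p.1 a = c a) ∧
        (∀ u v : V, p.2 u v → G.Adj u v) ∧
        (∀ u v : V, G.Adj u v → (p.2 u v ↔ ¬ p.2 v u)) ∧
        (∀ v : V, ¬ Relation.TransGen p.2 v v) ∧
        (∀ u v : V, G.Adj u v → p.1 u < p.1 v → p.2 u v)} := by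
  classical
  obtain ⟨Z, hZ1, hZ2⟩ :=
    Stmt18Aux.master G.edgeSet.ncard V G A k c le_rfl hk hc hinj
  have hcardN : ∀ m' : ℕ,
      (Nat.card {cc : V → ℕ | (∀ v, 1 ≤ cc v ∧ cc v ≤ m') ∧ (∀ a ∈ A, cc a = c a) ∧
        ∀ u v : V, G.Adj u v → cc u ≠ cc v} : ℕ)
      = (Stmt18Aux.NS G A c m').ncard := fun m' =>
    Nat.card_coe_set_eq (Stmt18Aux.NS G A c m')
  have hχZ : χ = Z := by
    apply Polynomial.eq_of_infinite_eval_eq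
    refine Set.infinite_of_injective_forall_mem
      (f := fun n : ℕ => ((n + k : ℕ) : ℝ)) ?_ ?_
    · intro a b hab
      have h' : (a + k : ℕ) = b + k := Nat.cast_injective hab
      omega
    · intro n
      show χ.eval _ = Z.eval _
      rw [hχ (n + k) le_add_self, hZ1 (n + k) le_add_self, hcardN]
  rw [hχZ, hZ2 m hm, abs_mul, abs_pow, abs_neg, abs_one, one_pow, one_mul,
    Nat.abs_cast]
  have hcardQ : (Nat.card {p : (V → ℕ) × (V → V → Prop) |
        (∀ v, 1 ≤ p.1 v ∧ p.1 v ≤ m) ∧ (∀ a ∈ A, p.1 a = c a) ∧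
        (∀ u v : V, p.2 u v → G.Adj u v) ∧
        (∀ u v : V, G.Adj u v → (p.2 u v ↔ ¬ p.2 v u)) ∧
        (∀ v : V, ¬ Relation.TransGen p.2 v v) ∧
        (∀ u v : V, G.Adj u v → p.1 u < p.1 v → p.2 u v)} : ℕ)
      = (Stmt18Aux.QS G A c m).ncard :=
    Nat.card_coe_set_eq (Stmt18Aux.QS G A c m)
  rw [hcardQ]
end

section
/- |χ_{G,c}(−1)| equals the number of acyclic orientations σ of G such that there is no directed path of σ from a to b for any distinct a, b ∈ A with c(a) ≥ c(b). -/
open Relation Set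

namespace Stmt19

variable {V : Type*}

/-- The set of proper colorings extending the partial coloring. -/
def CSet (G : SimpleGraph V) (A : Set V) (c : V → ℕ) (m : ℕ) : Set (V → ℕ) :=
  {cc : V → ℕ | (∀ v, 1 ≤ cc v ∧ cc v ≤ m) ∧ (∀ a ∈ A, cc a = c a) ∧
    ∀ u v : V, G.Adj u v → cc u ≠ cc v}

/-- The set of compatible acyclic orientations. -/
def OSet (G : SimpleGraph V) (A : Set V) (c : V → ℕ) : Set (V → V → Prop) :=
  {σ : V → V → Prop |
    (∀ u v : V, σ u v → G.Adj u v) ∧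
    (∀ u v : V, G.Adj u v → (σ u v ↔ ¬ σ v u)) ∧
    (∀ v : V, ¬ Relation.TransGen σ v v) ∧
    (∀ a ∈ A, ∀ b ∈ A, a ≠ b → c b ≤ c a → ¬ Relation.TransGen σ a b)}

theorem rtg_ne {r : V → V → Prop} {a b : V} (h : ReflTransGen r a b) (hne : a ≠ b) :
    TransGen r a b := by
  rcases (reflTransGen_iff_eq_or_transGen).mp h with rfl | h
  · exact absurd rfl hne
  · exact h

theorem tg_mono {r p : V → V → Prop} {a b : V} (H : ∀ a b, r a b → p a b)
    (h : TransGen r a b) : TransGen p a b := TransGen.mono H a b h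

theorem rtg_mono {r p : V → V → Prop} {a b : V} (H : ∀ a b, r a b → p a b)
    (h : ReflTransGen r a b) : ReflTransGen p a b := ReflTransGen.mono H a b h

theorem tg_lift {β : Type*} {r : V → V → Prop} {p : β → β → Prop} {a b : V} (f : V → β)
    (H : ∀ a b, r a b → p (f a) (f b)) (h : TransGen r a b) : TransGen p (f a) (f b) :=
  TransGen.lift f H a b h

theorem rtg_lift {β : Type*} {r : V → V → Prop} {p : β → β → Prop} {a b : V} (f : V → β)
    (H : ∀ a b, r a b → p (f a) (f b)) (h : ReflTransGen r a b) :
    ReflTransGen p (f a) (f b) :=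
  ReflTransGen.lift f H a b h

/-- Paths in a relation extended by one pair. -/
theorem transGen_ext_iff {r : V → V → Prop} {u v a b : V} :
    TransGen (fun x y => r x y ∨ (x = u ∧ y = v)) a b ↔
      TransGen r a b ∨ (ReflTransGen r a u ∧ ReflTransGen r v b) := by
  constructor
  · intro h
    induction h with
    | single h =>
      rcases h with h | ⟨rfl, rfl⟩
      · exact Or.inl (TransGen.single h)
      · exact Or.inr ⟨ReflTransGen.refl, ReflTransGen.refl⟩
    | tail _ h ih =>
      rcases h with h | ⟨rfl, rfl⟩
      · rcases ih with ih | ⟨h1, h2⟩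
        · exact Or.inl (ih.tail h)
        · exact Or.inr ⟨h1, h2.tail h⟩
      · rcases ih with ih | ⟨h1, _⟩
        · exact Or.inr ⟨ih.to_reflTransGen, ReflTransGen.refl⟩
        · exact Or.inr ⟨h1, ReflTransGen.refl⟩
  · rintro (h | ⟨h1, h2⟩)
    · exact tg_mono (fun x y hxy => Or.inl hxy) h
    · refine TransGen.trans_right (rtg_mono (fun x y hxy => Or.inl hxy) h1) ?_
      exact TransGen.head' (Or.inr ⟨rfl, rfl⟩) (rtg_mono (fun x y hxy => Or.inl hxy) h2)


variable {V : Type*}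

/-- Delete the edge `{u,v}`. -/
def del (G : SimpleGraph V) (u v : V) : SimpleGraph V where
  Adj x y := G.Adj x y ∧ ¬((x = u ∧ y = v) ∨ (x = v ∧ y = u))
  symm := by constructor; rintro x y ⟨h1, h2⟩; exact ⟨h1.symm, by tauto⟩
  loopless := ⟨fun x h => G.loopless.irrefl x h.1⟩

theorem del_comm (G : SimpleGraph V) (u v : V) : del G u v = del G v u := by
  ext x y; constructor <;> rintro ⟨h1, h2⟩ <;> exact ⟨h1, by tauto⟩

/-- Contract the edge `{u,v}` (delete `v`, reattach its edges to `u`). -/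
def con (G : SimpleGraph V) (u v : V) : SimpleGraph {x : V // x ≠ v} where
  Adj x y := x ≠ y ∧ (G.Adj ↑x ↑y ∨ ((x : V) = u ∧ G.Adj v ↑y) ∨ ((y : V) = u ∧ G.Adj ↑x v))
  symm := by
    constructor
    rintro x y ⟨h1, h2⟩
    refine ⟨h1.symm, ?_⟩
    rcases h2 with h | ⟨h3, h4⟩ | ⟨h3, h4⟩
    · exact Or.inl h.symm
    · exact Or.inr (Or.inr ⟨h3, h4.symm⟩)
    · exact Or.inr (Or.inl ⟨h3, h4.symm⟩)
  loopless := ⟨fun x h => h.1 rfl⟩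

variable {G : SimpleGraph V} {A : Set V} {c : V → ℕ} {u v : V} {σ : V → V → Prop}

/-- Restricting an orientation to `G - e`. -/
def delO (u v : V) (σ : V → V → Prop) : V → V → Prop :=
  fun x y => σ x y ∧ ¬((x = u ∧ y = v) ∨ (x = v ∧ y = u))

/-- Adding the directed edge `(u,v)` to an orientation. -/
def extO (u v : V) (σ : V → V → Prop) : V → V → Prop :=
  fun x y => σ x y ∨ (x = u ∧ y = v)

theorem no2cycle (hσ : σ ∈ OSet G A c) {x y : V} (h1 : σ x y) (h2 : σ y x) : False :=
  (hσ.2.1 x y (hσ.1 x y h1)).mp h1 h2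

theorem delO_mem (hσ : σ ∈ OSet G A c) : delO u v σ ∈ OSet (del G u v) A c := by
  obtain ⟨p1, p2, p3, p4⟩ := hσ
  refine ⟨fun x y h => ⟨p1 x y h.1, h.2⟩, ?_, ?_, ?_⟩
  · rintro x y ⟨hadj, hne⟩
    constructor
    · rintro ⟨h, -⟩ ⟨h', -⟩
      exact (p2 x y hadj).mp h h'
    · intro h
      refine ⟨(p2 x y hadj).mpr fun h' => h ⟨h', by tauto⟩, hne⟩
  · intro w hw
    exact p3 w (tg_mono (fun x y h => h.1) hw)
  · intro a ha b hb hab hcb hw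
    exact p4 a ha b hb hab hcb (tg_mono (fun x y h => h.1) hw)

theorem extO_self (hσ : σ ∈ OSet G A c) (huv : σ u v) : extO u v (delO u v σ) = σ := by
  funext x y
  refine propext ⟨?_, ?_⟩
  · rintro (⟨h, -⟩ | ⟨rfl, rfl⟩)
    · exact h
    · exact huv
  · intro h
    by_cases hx : x = u ∧ y = v
    · exact Or.inr hx
    · refine Or.inl ⟨h, ?_⟩
      rintro (hp | ⟨rfl, rfl⟩)
      · exact hx hp
      · exact no2cycle hσ h huv


theorem extO_iff {σ : V → V → Prop} {x y : V} :
    extO u v σ x y ↔ σ x y ∨ (x = u ∧ y = v) := Iff.rfl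

theorem extO_mem {σ' : V → V → Prop} (huv : G.Adj u v) (hσ' : σ' ∈ OSet (del G u v) A c)
    (h1 : ¬ TransGen σ' v u)
    (h2 : ∀ a ∈ A, ∀ b ∈ A, a ≠ b → c b ≤ c a →
      ¬(ReflTransGen σ' a u ∧ ReflTransGen σ' v b)) :
    extO u v σ' ∈ OSet G A c := by
  obtain ⟨p1, p2, p3, p4⟩ := hσ'
  have hσvu : ¬ σ' v u := fun h => (p1 v u h).2 (Or.inr ⟨rfl, rfl⟩)
  refine ⟨?_, ?_, ?_, ?_⟩
  · rintro x y (h | ⟨rfl, rfl⟩)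
    · exact (p1 x y h).1
    · exact huv
  · intro x y hadj
    by_cases hp : x = u ∧ y = v
    · obtain ⟨rfl, rfl⟩ := hp
      constructor
      · intro _ h2'
        rcases extO_iff.mp h2' with h | ⟨h', -⟩
        · exact hσvu h
        · exact huv.ne h'.symm
      · intro _; exact Or.inr ⟨rfl, rfl⟩
    · by_cases hq : x = v ∧ y = u
      · obtain ⟨rfl, rfl⟩ := hq
        constructor
        · intro h1'
          rcases extO_iff.mp h1' with h | ⟨h', -⟩
          · exact absurd h hσvu
          · exact absurd h'.symm huv.ne
        · intro h; exact absurd (Or.inr ⟨rfl, rfl⟩) h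
      · have hadj' : (del G u v).Adj x y := ⟨hadj, by tauto⟩
        have hiff := p2 x y hadj'
        constructor
        · intro h h'
          rcases extO_iff.mp h with h | hp'
          · rcases extO_iff.mp h' with h' | hq'
            · exact (hiff.mp h) h'
            · exact hq ⟨hq'.2, hq'.1⟩
          · exact hp hp'
        · intro h
          exact Or.inl (hiff.mpr fun h' => h (Or.inl h'))
  · intro w hw
    rw [show (extO u v σ') = (fun x y => σ' x y ∨ (x = u ∧ y = v)) from rfl,
      transGen_ext_iff] at hw
    rcases hw with hw | ⟨hwu, hvw⟩
    · exact p3 w hw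
    · exact h1 (rtg_ne (hvw.trans hwu) (huv.ne.symm))
  · intro a ha b hb hab hcb hw
    rw [show (extO u v σ') = (fun x y => σ' x y ∨ (x = u ∧ y = v)) from rfl,
      transGen_ext_iff] at hw
    rcases hw with hw | ⟨hau, hvb⟩
    · exact p4 a ha b hb hab hcb hw
    · exact h2 a ha b hb hab hcb ⟨hau, hvb⟩

theorem extO_not_mem {σ' : V → V → Prop} (huv : G.Adj u v) (hσ' : σ' ∈ OSet (del G u v) A c)
    (h : extO u v σ' ∉ OSet G A c) :
    TransGen σ' v u ∨ ∃ a ∈ A, ∃ b ∈ A, a ≠ b ∧ c b ≤ c a ∧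
      ReflTransGen σ' a u ∧ ReflTransGen σ' v b := by
  by_contra hcon
  push_neg at hcon
  obtain ⟨hc1, hc2⟩ := hcon
  exact h (extO_mem huv hσ' hc1 (fun a ha b hb hab hcb hp =>
    hc2 a ha b hb hab hcb hp.1 hp.2))

theorem dichotomy {σ' : V → V → Prop} (huv : G.Adj u v) (hvA : v ∉ A)
    (hσ' : σ' ∈ OSet (del G u v) A c) :
    extO u v σ' ∈ OSet G A c ∨ extO v u σ' ∈ OSet G A c := by
  by_contra hcon
  push_neg at hcon
  obtain ⟨hA, hB⟩ := hcon
  have hσ'' : σ' ∈ OSet (del G v u) A c := by rw [← del_comm]; exact hσ'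
  have P := extO_not_mem huv hσ' hA
  have Q := extO_not_mem huv.symm hσ'' hB
  obtain ⟨p1, p2, p3, p4⟩ := hσ'
  rcases P with P | ⟨a, ha, b, hb, hab, hcba, hau, hvb⟩
  · rcases Q with Q | ⟨a', ha', b', hb', hab', hcb'a', ha'v, hub'⟩
    · exact p3 u (Q.trans P)
    · exact p4 a' ha' b' hb' hab' hcb'a'
        (rtg_ne ((ha'v.trans P.to_reflTransGen).trans hub') hab')
  · rcases Q with Q | ⟨a', ha', b', hb', hab', hcb'a', ha'v, hub'⟩
    · exact p4 a ha b hb hab hcba (rtg_ne ((hau.trans Q.to_reflTransGen).trans hvb) hab)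
    · have hab'' : ReflTransGen σ' a b' := hau.trans hub'
      have ha'b : ReflTransGen σ' a' b := ha'v.trans hvb
      by_cases h1 : c b' ≤ c a
      · by_cases h2 : a = b'
        · subst h2
          by_cases h3 : a = u
          · subst h3
            by_cases h4 : a' = b
            · subst h4
              exact p3 a' (TransGen.trans_left
                (rtg_ne ha'v (fun h => hvA (h ▸ ha'))) hvb)
            · exact p4 a' ha' b hb h4 (hcba.trans hcb'a') (rtg_ne ha'b h4)
          · exact p3 a (TransGen.trans_left (rtg_ne hau h3) hub')
        · exact p4 a ha b' hb' h2 h1 (rtg_ne hab'' h2)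
      · have h6 : a' ≠ b := by
          intro h; rw [h] at hcb'a'
          exact h1 (le_trans hcb'a' hcba)
        have h5 : c b ≤ c a' := le_trans hcba (le_trans (le_of_not_ge h1) hcb'a')
        exact p4 a' ha' b hb h6 h5 (rtg_ne ha'b h6)


theorem delO_extO {σ' : V → V → Prop} (hσ' : σ' ∈ OSet (del G u v) A c) :
    delO u v (extO u v σ') = σ' := by
  funext x y
  refine propext ⟨?_, ?_⟩
  · rintro ⟨h | hp, hne⟩
    · exact h
    · exact absurd (Or.inl hp) hne
  · intro h
    exact ⟨Or.inl h, (hσ'.1 x y h).2⟩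

theorem extO_mem_case2 {σ' : V → V → Prop} (huv : G.Adj u v) (hu : u ∈ A) (hv : v ∈ A)
    (hlt : c u < c v) (hσ' : σ' ∈ OSet (del G u v) A c) :
    extO u v σ' ∈ OSet G A c := by
  obtain ⟨p1, p2, p3, p4⟩ := hσ'
  refine extO_mem huv ⟨p1, p2, p3, p4⟩ ?_ ?_
  · exact p4 v hv u hu huv.ne.symm (le_of_lt hlt)
  · rintro a ha b hb hab hcb ⟨hau, hvb⟩
    have hca : c a ≤ c u := by
      by_cases h : a = u
      · rw [h]
      · by_contra h'
        exact p4 a ha u hu h (le_of_not_ge h') (rtg_ne hau h)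
    have hcv : c v ≤ c b := by
      by_cases h : v = b
      · rw [h]
      · by_contra h'
        exact p4 v hv b hb h (le_of_not_ge h') (rtg_ne hvb h)
    omega

/-- Case 2: both endpoints in `A` with different colors. -/
theorem card_OSet_case2 (huv : G.Adj u v) (hu : u ∈ A) (hv : v ∈ A) (hlt : c u < c v) :
    Nat.card (OSet (del G u v) A c) = Nat.card (OSet G A c) := by
  apply Nat.card_eq_of_bijective
    (fun σ' : OSet (del G u v) A c =>
      (⟨extO u v ↑σ', extO_mem_case2 huv hu hv hlt σ'.2⟩ : OSet G A c))
  constructor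
  · rintro ⟨σ1, h1⟩ ⟨σ2, h2⟩ heq
    have : extO u v σ1 = extO u v σ2 := congrArg Subtype.val heq
    have h12 : delO u v (extO u v σ1) = delO u v (extO u v σ2) := by rw [this]
    rw [delO_extO h1, delO_extO h2] at h12
    exact Subtype.ext h12
  · rintro ⟨σ, hσ⟩
    have hσuv : σ u v := by
      have := (hσ.2.1 u v huv)
      by_contra h
      have hvu : σ v u := by
        by_contra h'
        exact h (this.mpr h')
      exact hσ.2.2.2 v hv u hu huv.ne.symm (le_of_lt hlt) (TransGen.single hvu)
    exact ⟨⟨delO u v σ, delO_mem hσ⟩, Subtype.ext (extO_self hσ hσuv)⟩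

/-- Case 1: both endpoints in `A` with equal colors. -/
theorem OSet_case1 (huv : G.Adj u v) (hu : u ∈ A) (hv : v ∈ A) (heq : c u = c v) :
    OSet G A c = ∅ := by
  rw [Set.eq_empty_iff_forall_notMem]
  intro σ hσ
  by_cases h : σ u v
  · exact hσ.2.2.2 u hu v hv huv.ne heq.ge (TransGen.single h)
  · have hvu : σ v u := by
      by_contra h'
      exact h ((hσ.2.1 u v huv).mpr h')
    exact hσ.2.2.2 v hv u hu huv.ne.symm heq.le (TransGen.single hvu)

theorem CSet_case1 (huv : G.Adj u v) (hu : u ∈ A) (hv : v ∈ A) (heq : c u = c v) (m : ℕ) :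
    CSet G A c m = ∅ := by
  rw [Set.eq_empty_iff_forall_notMem]
  rintro cc ⟨-, h2, h3⟩
  exact h3 u v huv (by rw [h2 u hu, h2 v hv, heq])

theorem CSet_case2 (huv : G.Adj u v) (hu : u ∈ A) (hv : v ∈ A) (hne : c u ≠ c v) (m : ℕ) :
    CSet G A c m = CSet (del G u v) A c m := by
  ext cc
  refine ⟨fun ⟨h1, h2, h3⟩ => ⟨h1, h2, fun x y hadj => h3 x y hadj.1⟩,
    fun ⟨h1, h2, h3⟩ => ⟨h1, h2, fun x y hadj => ?_⟩⟩
  by_cases hp : (x = u ∧ y = v) ∨ (x = v ∧ y = u)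
  · rcases hp with ⟨rfl, rfl⟩ | ⟨rfl, rfl⟩
    · rw [h2 x (by exact hu), h2 y (by exact hv)]; exact hne
    · rw [h2 x (by exact hv), h2 y (by exact hu)]; exact hne.symm
  · exact h3 x y ⟨hadj, hp⟩


open scoped Classical in
/-- Quotient map for contraction. -/
noncomputable def pmap (hu : u ≠ v) : V → {x : V // x ≠ v} :=
  fun x => if h : x = v then ⟨u, hu⟩ else ⟨x, h⟩

theorem pmap_ne (hu : u ≠ v) {x : V} (h : x ≠ v) : pmap hu x = ⟨x, h⟩ := by unfold pmap; rw [dif_neg h]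

theorem pmap_v (hu : u ≠ v) : pmap hu v = ⟨u, hu⟩ := by unfold pmap; rw [dif_pos rfl]

theorem pmap_coe (hu : u ≠ v) (x : {x : V // x ≠ v}) : pmap hu ↑x = x := by
  rw [pmap_ne hu x.2]

/-- Contracted orientation. -/
def conO (u v : V) (σ' : V → V → Prop) :
    {x : V // x ≠ v} → {x : V // x ≠ v} → Prop :=
  fun x y => σ' ↑x ↑y ∨ ((x : V) = u ∧ σ' v ↑y) ∨ ((y : V) = u ∧ σ' ↑x v)

/-- Lifted orientation. -/
def liftO (G : SimpleGraph V) (hu : u ≠ v)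
    (ς : {x : V // x ≠ v} → {x : V // x ≠ v} → Prop) : V → V → Prop :=
  fun x y => (del G u v).Adj x y ∧ ς (pmap hu x) (pmap hu y)

/-- Decomposition of paths in the contracted orientation. -/
theorem conO_path {σ' : V → V → Prop} (H1 : ¬ TransGen σ' u v) (H2 : ¬ TransGen σ' v u)
    (Hac : ∀ w, ¬ TransGen σ' w w) (huv : u ≠ v) {x y : {x : V // x ≠ v}}
    (h : TransGen (conO u v σ') x y) :
    TransGen σ' ↑x ↑y ∨ (ReflTransGen σ' ↑x u ∧ ReflTransGen σ' v ↑y) ∨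
      (ReflTransGen σ' ↑x v ∧ ReflTransGen σ' u ↑y) := by
  induction h with
  | single h =>
    rcases h with h | ⟨hxu, h2⟩ | ⟨hyu, h2⟩
    · exact Or.inl (TransGen.single h)
    · exact Or.inr (Or.inl ⟨hxu ▸ ReflTransGen.refl, ReflTransGen.single h2⟩)
    · exact Or.inr (Or.inr ⟨ReflTransGen.single h2, hyu ▸ ReflTransGen.refl⟩)
  | @tail b cc hxb h ih =>
    rcases h with h | ⟨hbu, h2⟩ | ⟨hcu, h2⟩
    · rcases ih with ih | ⟨ih1, ih2⟩ | ⟨ih1, ih2⟩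
      · exact Or.inl (ih.tail h)
      · exact Or.inr (Or.inl ⟨ih1, ih2.tail h⟩)
      · exact Or.inr (Or.inr ⟨ih1, ih2.tail h⟩)
    · rcases ih with ih | ⟨ih1, ih2⟩ | ⟨ih1, ih2⟩
      · exact Or.inr (Or.inl ⟨(hbu ▸ ih).to_reflTransGen, ReflTransGen.single h2⟩)
      · exact absurd (rtg_ne (hbu ▸ ih2) (Ne.symm huv)) H2
      · exact Or.inl (TransGen.tail' ih1 h2)
    · rcases ih with ih | ⟨ih1, ih2⟩ | ⟨ih1, ih2⟩
      · exact Or.inr (Or.inr ⟨(ih.tail h2).to_reflTransGen, hcu ▸ ReflTransGen.refl⟩)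
      · exact absurd (TransGen.tail' ih2 h2) (Hac v)
      · exact absurd (TransGen.tail' ih2 h2) H1

/-- From membership of both extensions: no path between `u` and `v` in `σ'`. -/
theorem both_ext_no_path {σ' : V → V → Prop}
    (h1 : extO u v σ' ∈ OSet G A c) (h2 : extO v u σ' ∈ OSet G A c) :
    ¬ TransGen σ' u v ∧ ¬ TransGen σ' v u := by
  constructor
  · intro h
    exact h2.2.2.1 u ((tg_mono (fun x y hxy => Or.inl hxy) h).tail (Or.inr ⟨rfl, rfl⟩))
  · intro h
    exact h1.2.2.1 v ((tg_mono (fun x y hxy => Or.inl hxy) h).tail (Or.inr ⟨rfl, rfl⟩))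


theorem no_sigma_uv {σ' : V → V → Prop} (hσ' : σ' ∈ OSet (del G u v) A c) :
    ¬ σ' u v ∧ ¬ σ' v u :=
  ⟨fun h => (hσ'.1 u v h).2 (Or.inl ⟨rfl, rfl⟩),
   fun h => (hσ'.1 v u h).2 (Or.inr ⟨rfl, rfl⟩)⟩

theorem conO_mem {σ' : V → V → Prop} (huv : G.Adj u v)
    (hσ' : σ' ∈ OSet (del G u v) A c)
    (h1 : extO u v σ' ∈ OSet G A c) (h2 : extO v u σ' ∈ OSet G A c) :
    conO u v σ' ∈ OSet (con G u v) {x : {x : V // x ≠ v} | ↑x ∈ A} (fun x => c ↑x) := by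
  obtain ⟨H1, H2⟩ := both_ext_no_path h1 h2
  obtain ⟨p1, p2, p3, p4⟩ := hσ'
  have hσ'' : σ' ∈ OSet (del G u v) A c := ⟨p1, p2, p3, p4⟩
  obtain ⟨hnouv, hnovu⟩ := no_sigma_uv hσ''
  refine ⟨?_, ?_, ?_, ?_⟩
  · rintro x y (h | ⟨hxu, h'⟩ | ⟨hyu, h'⟩)
    · exact ⟨fun he => ((p1 _ _ h).1).ne (congrArg Subtype.val he),
        Or.inl (p1 _ _ h).1⟩
    · refine ⟨fun he => ?_, Or.inr (Or.inl ⟨hxu, (p1 _ _ h').1⟩)⟩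
      rw [he] at hxu; rw [hxu] at h'; exact hnovu h'
    · refine ⟨fun he => ?_, Or.inr (Or.inr ⟨hyu, (p1 _ _ h').1⟩)⟩
      rw [← he] at hyu; rw [hyu] at h'; exact hnouv h'
  · intro x y hadj
    have hnand : ¬ (conO u v σ' x y ∧ conO u v σ' y x) := by
      rintro ⟨ha | ⟨ha1, ha2⟩ | ⟨ha1, ha2⟩, hb | ⟨hb1, hb2⟩ | ⟨hb1, hb2⟩⟩
      · exact no2cycle hσ'' ha hb
      · rw [hb1] at ha
        exact H2 (TransGen.head hb2 (TransGen.single ha))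
      · rw [hb1] at ha
        exact H1 (TransGen.head ha (TransGen.single hb2))
      · rw [ha1] at hb
        exact H2 (TransGen.head ha2 (TransGen.single hb))
      · rw [hb1] at ha2
        exact hnovu ha2
      · exact no2cycle hσ'' ha2 hb2
      · rw [ha1] at hb
        exact H1 (TransGen.head hb (TransGen.single ha2))
      · exact no2cycle hσ'' ha2 hb2
      · rw [ha1] at hb2
        exact hnouv hb2
    have hor : conO u v σ' x y ∨ conO u v σ' y x := by
      obtain ⟨hne', hadj'⟩ := hadj
      rcases hadj' with h | ⟨hxu, h⟩ | ⟨hyu, h⟩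
      · have hd : (del G u v).Adj ↑x ↑y := ⟨h, by
          rintro (⟨-, h2⟩ | ⟨h2, -⟩)
          · exact y.2 h2
          · exact x.2 h2⟩
        by_cases hs : σ' ↑x ↑y
        · exact Or.inl (Or.inl hs)
        · exact Or.inr (Or.inl ((p2 _ _ hd.symm).mpr hs))
      · have hd : (del G u v).Adj v ↑y := ⟨h, by
          rintro (⟨h2, -⟩ | ⟨-, h2⟩)
          · exact (Ne.symm huv.ne) h2
          · exact hne' (Subtype.ext (hxu.trans h2.symm))⟩
        by_cases hs : σ' v ↑y
        · exact Or.inl (Or.inr (Or.inl ⟨hxu, hs⟩))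
        · exact Or.inr (Or.inr (Or.inr ⟨hxu, (p2 _ _ hd.symm).mpr hs⟩))
      · have hd : (del G u v).Adj ↑x v := ⟨h, by
          rintro (⟨h2, -⟩ | ⟨h2, -⟩)
          · exact hne' (Subtype.ext (h2.trans hyu.symm))
          · exact x.2 h2⟩
        by_cases hs : σ' ↑x v
        · exact Or.inl (Or.inr (Or.inr ⟨hyu, hs⟩))
        · exact Or.inr (Or.inr (Or.inl ⟨hyu, (p2 _ _ hd.symm).mpr hs⟩))
    constructor
    · intro ha hb; exact hnand ⟨ha, hb⟩
    · intro hnb; exact hor.resolve_right hnb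
  · intro w hw
    rcases conO_path H1 H2 p3 huv.ne hw with h | ⟨ha, hb⟩ | ⟨ha, hb⟩
    · exact p3 _ h
    · exact H2 (rtg_ne (hb.trans ha) (Ne.symm huv.ne))
    · exact H1 (rtg_ne (hb.trans ha) huv.ne)
  · intro a ha b hb hab hcb hw
    have hab' : (a : V) ≠ (b : V) := fun h => hab (Subtype.ext h)
    rcases conO_path H1 H2 p3 huv.ne hw with h | ⟨hp1, hp2⟩ | ⟨hp1, hp2⟩
    · exact p4 ↑a ha ↑b hb hab' hcb h
    · refine h1.2.2.2 ↑a ha ↑b hb hab' hcb ?_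
      rw [show (extO u v σ') = (fun x y => σ' x y ∨ (x = u ∧ y = v)) from rfl,
        transGen_ext_iff]
      exact Or.inr ⟨hp1, hp2⟩
    · refine h2.2.2.2 ↑a ha ↑b hb hab' hcb ?_
      rw [show (extO v u σ') = (fun x y => σ' x y ∨ (x = v ∧ y = u)) from rfl,
        transGen_ext_iff]
      exact Or.inr ⟨hp1, hp2⟩


theorem del_adj_pmap (hu : u ≠ v) {x y : V} (h : (del G u v).Adj x y) :
    (con G u v).Adj (pmap hu x) (pmap hu y) := by
  by_cases hx : x = v
  · by_cases hy : y = v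
    · exact absurd (hx.trans hy.symm) h.1.ne
    · subst hx
      rw [pmap_v, pmap_ne hu hy]
      have hyu : y ≠ u := by
        intro h'
        exact h.2 (Or.inr ⟨rfl, h'⟩)
      exact ⟨fun he => hyu (congrArg Subtype.val he).symm, Or.inr (Or.inl ⟨rfl, h.1⟩)⟩
  · by_cases hy : y = v
    · subst hy
      rw [pmap_v, pmap_ne hu hx]
      have hxu : x ≠ u := by
        intro h'
        exact h.2 (Or.inl ⟨h', rfl⟩)
      exact ⟨fun he => hxu (congrArg Subtype.val he), Or.inr (Or.inr ⟨rfl, h.1⟩)⟩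
    · rw [pmap_ne hu hx, pmap_ne hu hy]
      exact ⟨fun he => h.1.ne (congrArg Subtype.val he), Or.inl h.1⟩

variable {ς : {x : V // x ≠ v} → {x : V // x ≠ v} → Prop}

theorem liftO_mem (huv : G.Adj u v) (hvA : v ∉ A)
    (hς : ς ∈ OSet (con G u v) {x : {x : V // x ≠ v} | ↑x ∈ A} (fun x => c ↑x)) :
    liftO G huv.ne ς ∈ OSet (del G u v) A c := by
  obtain ⟨q1, q2, q3, q4⟩ := hς
  refine ⟨fun x y h => h.1, ?_, ?_, ?_⟩
  · intro x y hadj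
    have hc := q2 _ _ (del_adj_pmap huv.ne hadj)
    constructor
    · rintro ⟨-, h2⟩ ⟨-, h2'⟩
      exact (hc.mp h2) h2'
    · intro h
      exact ⟨hadj, hc.mpr fun h' => h ⟨hadj.symm, h'⟩⟩
  · intro w hw
    exact q3 (pmap huv.ne w) (tg_lift (pmap huv.ne) (fun a b h => h.2) hw)
  · intro a ha b hb hab hcb hw
    have hA : a ≠ v := fun h => hvA (h ▸ ha)
    have hB : b ≠ v := fun h => hvA (h ▸ hb)
    have h2 := tg_lift (pmap huv.ne) (fun a b h => h.2) hw
    rw [pmap_ne huv.ne hA, pmap_ne huv.ne hB] at h2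
    exact q4 ⟨a, hA⟩ ha ⟨b, hB⟩ hb (fun h => hab (congrArg Subtype.val h)) hcb h2

theorem liftO_no_uv (huv : G.Adj u v) :
    (∀ w, ¬ TransGen ς w w) →
      ¬ TransGen (liftO G huv.ne ς) u v ∧ ¬ TransGen (liftO G huv.ne ς) v u := by
  intro q3
  have hpu : pmap huv.ne u = ⟨u, huv.ne⟩ := pmap_ne huv.ne huv.ne
  constructor
  · intro h
    have := tg_lift (pmap huv.ne) (fun a b h => h.2) h
    rw [hpu, pmap_v] at this
    exact q3 _ this
  · intro h
    have := tg_lift (pmap huv.ne) (fun a b h => h.2) h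
    rw [hpu, pmap_v] at this
    exact q3 _ this

theorem ext_liftO_mem_uv (huv : G.Adj u v) (hvA : v ∉ A)
    (hς : ς ∈ OSet (con G u v) {x : {x : V // x ≠ v} | ↑x ∈ A} (fun x => c ↑x)) :
    extO u v (liftO G huv.ne ς) ∈ OSet G A c := by
  have hmem := liftO_mem huv hvA hς
  obtain ⟨q1, q2, q3, q4⟩ := hς
  refine extO_mem huv hmem ((liftO_no_uv huv q3).2) ?_
  rintro a ha b hb hab hcb ⟨hau, hvb⟩
  have hA : a ≠ v := fun h => hvA (h ▸ ha)
  have hB : b ≠ v := fun h => hvA (h ▸ hb)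
  have h1 := rtg_lift (pmap huv.ne) (fun a b h => h.2) hau
  have h2 := rtg_lift (pmap huv.ne) (fun a b h => h.2) hvb
  rw [pmap_ne huv.ne hA, pmap_ne huv.ne huv.ne] at h1
  rw [pmap_v, pmap_ne huv.ne hB] at h2
  exact q4 ⟨a, hA⟩ ha ⟨b, hB⟩ hb (fun h => hab (congrArg Subtype.val h)) hcb
    (rtg_ne (h1.trans h2) (fun h => hab (congrArg Subtype.val h)))

theorem ext_liftO_mem_vu (huv : G.Adj u v) (hvA : v ∉ A)
    (hς : ς ∈ OSet (con G u v) {x : {x : V // x ≠ v} | ↑x ∈ A} (fun x => c ↑x)) :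
    extO v u (liftO G huv.ne ς) ∈ OSet G A c := by
  have hmem := liftO_mem huv hvA hς
  have hmem' : liftO G huv.ne ς ∈ OSet (del G v u) A c := by
    rw [← del_comm]; exact hmem
  obtain ⟨q1, q2, q3, q4⟩ := hς
  refine extO_mem huv.symm hmem' ((liftO_no_uv huv q3).1) ?_
  rintro a ha b hb hab hcb ⟨hav, hub⟩
  have hA : a ≠ v := fun h => hvA (h ▸ ha)
  have hB : b ≠ v := fun h => hvA (h ▸ hb)
  have h1 := rtg_lift (pmap huv.ne) (fun a b h => h.2) hav
  have h2 := rtg_lift (pmap huv.ne) (fun a b h => h.2) hub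
  rw [pmap_ne huv.ne hA, pmap_v] at h1
  rw [pmap_ne huv.ne huv.ne, pmap_ne huv.ne hB] at h2
  exact q4 ⟨a, hA⟩ ha ⟨b, hB⟩ hb (fun h => hab (congrArg Subtype.val h)) hcb
    (rtg_ne (h1.trans h2) (fun h => hab (congrArg Subtype.val h)))


theorem conO_liftO (huv : G.Adj u v)
    (hς : ς ∈ OSet (con G u v) {x : {x : V // x ≠ v} | ↑x ∈ A} (fun x => c ↑x)) :
    conO u v (liftO G huv.ne ς) = ς := by
  obtain ⟨q1, q2, q3, q4⟩ := hς
  funext x y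
  refine propext ⟨?_, ?_⟩
  · rintro (h | ⟨hxu, h⟩ | ⟨hyu, h⟩)
    · have h2 := h.2
      rwa [pmap_coe, pmap_coe] at h2
    · have h2 := h.2
      rw [pmap_v, pmap_coe] at h2
      have hx' : x = ⟨u, huv.ne⟩ := Subtype.ext hxu
      rwa [hx']
    · have h2 := h.2
      rw [pmap_coe, pmap_v] at h2
      have hy' : y = ⟨u, huv.ne⟩ := Subtype.ext hyu
      rwa [hy']
  · intro h
    obtain ⟨hne', hd⟩ := q1 x y h
    rcases hd with hA | ⟨hxu, hA⟩ | ⟨hyu, hA⟩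
    · refine Or.inl ⟨⟨hA, ?_⟩, ?_⟩
      · rintro (⟨-, h2⟩ | ⟨h2, -⟩)
        · exact y.2 h2
        · exact x.2 h2
      · rwa [pmap_coe, pmap_coe]
    · refine Or.inr (Or.inl ⟨hxu, ⟨hA, ?_⟩, ?_⟩)
      · rintro (⟨h2, -⟩ | ⟨-, h2⟩)
        · exact (Ne.symm huv.ne) h2
        · exact hne' (Subtype.ext (hxu.trans h2.symm))
      · rw [pmap_v, pmap_coe]
        have hx' : x = ⟨u, huv.ne⟩ := Subtype.ext hxu
        rwa [hx'] at h
    · refine Or.inr (Or.inr ⟨hyu, ⟨hA, ?_⟩, ?_⟩)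
      · rintro (⟨h2, -⟩ | ⟨h2, -⟩)
        · exact hne' (Subtype.ext (h2.trans hyu.symm))
        · exact x.2 h2
      · rw [pmap_coe, pmap_v]
        have hy' : y = ⟨u, huv.ne⟩ := Subtype.ext hyu
        rwa [hy'] at h

theorem liftO_conO {σ' : V → V → Prop} (huv : G.Adj u v)
    (hσ' : σ' ∈ OSet (del G u v) A c)
    (H1 : ¬ TransGen σ' u v) (H2 : ¬ TransGen σ' v u) :
    liftO G huv.ne (conO u v σ') = σ' := by
  obtain ⟨p1, p2, p3, p4⟩ := hσ'
  have hσ'' : σ' ∈ OSet (del G u v) A c := ⟨p1, p2, p3, p4⟩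
  obtain ⟨hnouv, hnovu⟩ := no_sigma_uv hσ''
  funext x y
  refine propext ⟨?_, ?_⟩
  · rintro ⟨hadj, hcon⟩
    by_cases hx : x = v
    · by_cases hy : y = v
      · rw [hx, hy] at hadj
        exact absurd rfl hadj.1.ne
      · rw [hx] at hadj hcon ⊢
        rw [pmap_v, pmap_ne huv.ne hy] at hcon
        have hyu : y ≠ u := fun h' => hadj.2 (Or.inr ⟨rfl, h'⟩)
        rcases hcon with h | ⟨-, h⟩ | ⟨h', h⟩
        · by_contra hn
          have hyv : σ' y v := by
            by_contra hn'
            exact hn ((p2 v y hadj).mpr hn')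
          exact H1 (TransGen.head h (TransGen.single hyv))
        · exact h
        · exact absurd h' hyu
    · by_cases hy : y = v
      · rw [hy] at hadj hcon ⊢
        rw [pmap_ne huv.ne hx, pmap_v] at hcon
        have hxu : x ≠ u := fun h' => hadj.2 (Or.inl ⟨h', rfl⟩)
        rcases hcon with h | ⟨h', -⟩ | ⟨-, h⟩
        · by_contra hn
          have hvx : σ' v x := by
            by_contra hn'
            exact hn ((p2 x v hadj).mpr hn')
          exact H2 (TransGen.head hvx (TransGen.single h))
        · exact absurd h' hxu
        · exact h
      · rw [pmap_ne huv.ne hx, pmap_ne huv.ne hy] at hcon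
        rcases hcon with h | ⟨hxu, h⟩ | ⟨hyu, h⟩
        · exact h
        · have hxu' : x = u := hxu
          rw [hxu'] at hadj ⊢
          by_contra hn
          have hyx : σ' y u := by
            by_contra hn'
            exact hn ((p2 u y hadj).mpr hn')
          exact H2 (TransGen.head h (TransGen.single hyx))
        · have hyu' : y = u := hyu
          rw [hyu'] at hadj ⊢
          by_contra hn
          have hyx : σ' u x := by
            by_contra hn'
            exact hn ((p2 x u hadj).mpr hn')
          exact H1 (TransGen.head hyx (TransGen.single h))
  · intro h
    refine ⟨p1 x y h, ?_⟩
    by_cases hx : x = v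
    · have hy : y ≠ v := by
        intro h'
        rw [hx, h'] at h
        exact absurd rfl (p1 _ _ h).1.ne
      rw [hx] at h ⊢
      rw [pmap_v, pmap_ne huv.ne hy]
      exact Or.inr (Or.inl ⟨rfl, h⟩)
    · by_cases hy : y = v
      · rw [hy] at h ⊢
        rw [pmap_ne huv.ne hx, pmap_v]
        exact Or.inr (Or.inr ⟨rfl, h⟩)
      · rw [pmap_ne huv.ne hx, pmap_ne huv.ne hy]
        exact Or.inl h


theorem delO_comm (σ : V → V → Prop) : delO u v σ = delO v u σ := by
  funext x y
  exact propext ⟨fun ⟨h1, h2⟩ => ⟨h1, by tauto⟩, fun ⟨h1, h2⟩ => ⟨h1, by tauto⟩⟩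

theorem delO_extO' {σ' : V → V → Prop} (hσ' : σ' ∈ OSet (del G u v) A c) :
    delO u v (extO v u σ') = σ' := by
  have h : σ' ∈ OSet (del G v u) A c := by rw [← del_comm]; exact hσ'
  rw [delO_comm]
  exact delO_extO h

open scoped Classical in
/-- The bijection for the deletion-contraction recurrence for orientations. -/
noncomputable def caseFun (G : SimpleGraph V) (A : Set V) (c : V → ℕ) (u v : V)
    (huv : G.Adj u v) (hvA : v ∉ A) :
    (OSet (del G u v) A c) ⊕
      (OSet (con G u v) {x : {x : V // x ≠ v} | ↑x ∈ A} (fun x => c ↑x)) →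
      (OSet G A c) := fun z =>
  Sum.rec
    (fun σ' => if h : extO u v ↑σ' ∈ OSet G A c then ⟨extO u v ↑σ', h⟩
      else ⟨extO v u ↑σ', (dichotomy huv hvA σ'.2).resolve_left h⟩)
    (fun ς => ⟨extO v u (liftO G huv.ne ↑ς), ext_liftO_mem_vu huv hvA ς.2⟩) z

theorem extO_uv_ne_extO_vu {σ' τ' : V → V → Prop} (huv : G.Adj u v)
    (hσ' : ¬ τ' u v) :
    extO u v σ' ≠ extO v u τ' := by
  intro h
  have hP : extO u v σ' u v := Or.inr ⟨rfl, rfl⟩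
  rw [h] at hP
  rcases hP with h' | ⟨h', -⟩
  · exact hσ' h'
  · exact huv.ne h'

theorem card_OSet_case3 [Finite V] (huv : G.Adj u v) (hvA : v ∉ A) :
    Nat.card (OSet G A c) =
      Nat.card (OSet (del G u v) A c) +
        Nat.card (OSet (con G u v) {x : {x : V // x ≠ v} | ↑x ∈ A} (fun x => c ↑x)) := by
  classical
  rw [← Nat.card_sum]
  refine (Nat.card_eq_of_bijective (caseFun G A c u v huv hvA) ⟨?_, ?_⟩).symm
  · rintro (⟨σ1, h1⟩ | ⟨ς1, h1⟩) (⟨σ2, h2⟩ | ⟨ς2, h2⟩) heq <;>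
      simp only [caseFun] at heq
    · split_ifs at heq with hA hB hB
      · have hval : extO u v σ1 = extO u v σ2 := congrArg Subtype.val heq
        have := congrArg (delO u v) hval
        rw [delO_extO h1, delO_extO h2] at this
        simp [this]
      · exact absurd (congrArg Subtype.val heq)
          (extO_uv_ne_extO_vu huv (no_sigma_uv h2).1)
      · exact absurd (congrArg Subtype.val heq).symm
          (extO_uv_ne_extO_vu huv (no_sigma_uv h1).1)
      · have hval : extO v u σ1 = extO v u σ2 := congrArg Subtype.val heq
        have := congrArg (delO u v) hval
        rw [delO_extO' h1, delO_extO' h2] at this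
        simp [this]
    · split_ifs at heq with hA
      · exact absurd (congrArg Subtype.val heq)
          (extO_uv_ne_extO_vu huv fun h => ((liftO_mem huv hvA h2).1 u v h).2
            (Or.inl ⟨rfl, rfl⟩))
      · have hval : extO v u σ1 = extO v u (liftO G huv.ne ς2) :=
          congrArg Subtype.val heq
        have hval2 := congrArg (delO u v) hval
        rw [delO_extO' h1, delO_extO' (liftO_mem huv hvA h2)] at hval2
        rw [hval2] at hA
        exact absurd (ext_liftO_mem_uv huv hvA h2) hA
    · split_ifs at heq with hA
      · exact absurd (congrArg Subtype.val heq).symm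
          (extO_uv_ne_extO_vu huv fun h => ((liftO_mem huv hvA h1).1 u v h).2
            (Or.inl ⟨rfl, rfl⟩))
      · have hval : extO v u σ2 = extO v u (liftO G huv.ne ↑ς1) :=
          (congrArg Subtype.val heq).symm
        have hval2 := congrArg (delO u v) hval
        rw [delO_extO' h2, delO_extO' (liftO_mem huv hvA h1)] at hval2
        rw [hval2] at hA
        exact absurd (ext_liftO_mem_uv huv hvA h1) hA
    · have hval : extO v u (liftO G huv.ne ↑ς1) = extO v u (liftO G huv.ne ↑ς2) :=
        congrArg Subtype.val heq
      have hval2 := congrArg (delO u v) hval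
      rw [delO_extO' (liftO_mem huv hvA h1), delO_extO' (liftO_mem huv hvA h2)] at hval2
      have := congrArg (conO u v) hval2
      rw [conO_liftO huv h1, conO_liftO huv h2] at this
      simp [this]
  · rintro ⟨σ, hσ⟩
    have hσ' := delO_mem (u := u) (v := v) hσ
    by_cases hd : σ u v
    · have hval : extO u v (delO u v σ) = σ := extO_self hσ hd
      have hpos : extO u v (delO u v σ) ∈ OSet G A c := by rw [hval]; exact hσ
      refine ⟨Sum.inl ⟨delO u v σ, hσ'⟩, ?_⟩
      simp only [caseFun, dif_pos hpos]
      exact Subtype.ext hval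
    · have hvu : σ v u := by
        by_contra h'
        exact hd ((hσ.2.1 u v huv).mpr h')
      have hval : extO v u (delO v u σ) = σ := extO_self hσ hvu
      have hval' : extO v u (delO u v σ) = σ := by rw [delO_comm]; exact hval
      by_cases hm : extO u v (delO u v σ) ∈ OSet G A c
      · have hm2 : extO v u (delO u v σ) ∈ OSet G A c := by rw [hval']; exact hσ
        have hς := conO_mem huv hσ' hm hm2
        obtain ⟨HH1, HH2⟩ := both_ext_no_path hm hm2
        refine ⟨Sum.inr ⟨conO u v (delO u v σ), hς⟩, ?_⟩
        simp only [caseFun]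
        apply Subtype.ext
        show extO v u (liftO G huv.ne (conO u v (delO u v σ))) = σ
        rw [liftO_conO huv hσ' HH1 HH2, hval']
      · refine ⟨Sum.inl ⟨delO u v σ, hσ'⟩, ?_⟩
        simp only [caseFun, dif_neg hm]
        exact Subtype.ext hval'


theorem CSet_finite [Finite V] (G : SimpleGraph V) (A : Set V) (c : V → ℕ) (m : ℕ) :
    (CSet G A c m).Finite := by
  refine Set.Finite.subset (Set.Finite.pi' (fun _ : V => Set.finite_Icc 1 m)) ?_
  intro cc hcc x
  exact Set.mem_Icc.mpr (hcc.1 x)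

open scoped Classical in
/-- Extension of a coloring of the contraction. -/
noncomputable def extC (hu : u ≠ v) (cc' : {x : V // x ≠ v} → ℕ) : V → ℕ :=
  fun x => if h : x = v then cc' ⟨u, hu⟩ else cc' ⟨x, h⟩

theorem CSet_del_of_CSet {cc : V → ℕ} {m : ℕ} (hc : cc ∈ CSet G A c m) :
    cc ∈ CSet (del G u v) A c m :=
  ⟨hc.1, hc.2.1, fun x y hadj => hc.2.2 x y hadj.1⟩

theorem extC_mem {m : ℕ} (huv : G.Adj u v) (hvA : v ∉ A)
    {cc' : {x : V // x ≠ v} → ℕ}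
    (hc : cc' ∈ CSet (con G u v) {x : {x : V // x ≠ v} | ↑x ∈ A} (fun x => c ↑x) m) :
    extC huv.ne cc' ∈ CSet (del G u v) A c m := by
  obtain ⟨h1, h2, h3⟩ := hc
  refine ⟨?_, ?_, ?_⟩
  · intro x
    unfold extC
    split <;> exact h1 _
  · intro a ha
    have hav : a ≠ v := fun h => hvA (h ▸ ha)
    unfold extC
    rw [dif_neg hav]
    exact h2 ⟨a, hav⟩ ha
  · intro x y hadj
    unfold extC
    by_cases hx : x = v
    · rw [dif_pos hx]
      by_cases hy : y = v
      · exact absurd (hx.trans hy.symm) hadj.1.ne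
      · rw [dif_neg hy]
        refine h3 _ _ ⟨fun he => ?_, Or.inr (Or.inl ⟨rfl, hx ▸ hadj.1⟩)⟩
        have : y = u := (congrArg Subtype.val he).symm
        exact hadj.2 (Or.inr ⟨hx, this⟩)
    · rw [dif_neg hx]
      by_cases hy : y = v
      · rw [dif_pos hy]
        refine h3 _ _ ⟨fun he => ?_, Or.inr (Or.inr ⟨rfl, hy ▸ hadj.1⟩)⟩
        have : x = u := congrArg Subtype.val he
        exact hadj.2 (Or.inl ⟨this, hy⟩)
      · rw [dif_neg hy]
        exact h3 _ _ ⟨fun he => hadj.1.ne (congrArg Subtype.val he), Or.inl hadj.1⟩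

theorem card_CSet_case3 [Finite V] (huv : G.Adj u v) (hvA : v ∉ A) (m : ℕ) :
    Nat.card (CSet (del G u v) A c m) =
      Nat.card (CSet G A c m) +
        Nat.card (CSet (con G u v) {x : {x : V // x ≠ v} | ↑x ∈ A} (fun x => c ↑x) m) := by
  classical
  haveI := (CSet_finite G A c m).to_subtype
  haveI := (CSet_finite (del G u v) A c m).to_subtype
  haveI := (CSet_finite (con G u v) {x : {x : V // x ≠ v} | ↑x ∈ A} (fun x => c ↑x) m).to_subtype
  rw [← Nat.card_sum]
  refine (Nat.card_eq_of_bijective (fun z =>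
    Sum.rec (fun p => ⟨p.1, CSet_del_of_CSet p.2⟩)
      (fun p => ⟨extC huv.ne p.1, extC_mem huv hvA p.2⟩) z) ⟨?_, ?_⟩).symm
  · rintro (⟨cc1, hc1⟩ | ⟨cc1, hc1⟩) (⟨cc2, hc2⟩ | ⟨cc2, hc2⟩) heq
    · have : cc1 = cc2 := congrArg Subtype.val heq
      simp [this]
    · have hval : cc1 = extC huv.ne cc2 := congrArg Subtype.val heq
      have h1 : cc1 u = cc1 v := by
        rw [hval]
        unfold extC
        rw [dif_pos rfl, dif_neg huv.ne]
      exact absurd h1 (hc1.2.2 u v huv)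
    · have hval : cc2 = extC huv.ne cc1 := (congrArg Subtype.val heq).symm
      have h1 : cc2 u = cc2 v := by
        rw [hval]
        unfold extC
        rw [dif_pos rfl, dif_neg huv.ne]
      exact absurd h1 (hc2.2.2 u v huv)
    · have hval : extC huv.ne cc1 = extC huv.ne cc2 := congrArg Subtype.val heq
      have : cc1 = cc2 := by
        funext x
        have hx := congrFun hval ↑x
        unfold extC at hx
        rw [dif_neg x.2, dif_neg x.2] at hx
        exact hx
      simp [this]
  · rintro ⟨cc, h1, h2, h3⟩
    by_cases h : cc u = cc v
    · have hmem : (fun x : {x : V // x ≠ v} => cc ↑x) ∈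
          CSet (con G u v) {x : {x : V // x ≠ v} | ↑x ∈ A} (fun x => c ↑x) m := by
        refine ⟨fun x => h1 ↑x, fun a ha => h2 ↑a ha, ?_⟩
        rintro x y ⟨hne, hd | ⟨hxu, hd⟩ | ⟨hyu, hd⟩⟩
        · refine h3 ↑x ↑y ⟨hd, ?_⟩
          rintro (⟨-, h'⟩ | ⟨h', -⟩)
          · exact y.2 h'
          · exact x.2 h'
        · have hcx : cc ↑x = cc v := by rw [hxu, h]
          show cc ↑x ≠ cc ↑y
          rw [hcx]
          refine h3 v ↑y ⟨hd, ?_⟩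
          rintro (⟨h', -⟩ | ⟨-, h'⟩)
          · exact huv.ne h'.symm
          · exact hne (Subtype.ext (hxu.trans h'.symm))
        · have hcy : cc ↑y = cc v := by rw [hyu, h]
          show cc ↑x ≠ cc ↑y
          rw [hcy]
          refine h3 ↑x v ⟨hd, ?_⟩
          rintro (⟨h'', -⟩ | ⟨h'', -⟩)
          · exact hne (Subtype.ext (h''.trans hyu.symm))
          · exact x.2 h''
      refine ⟨Sum.inr ⟨_, hmem⟩, ?_⟩
      apply Subtype.ext
      show extC huv.ne (fun x : {x : V // x ≠ v} => cc ↑x) = cc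
      funext x
      unfold extC
      by_cases hx : x = v
      · rw [dif_pos hx, hx, ← h]
      · rw [dif_neg hx]
    · have hmem : cc ∈ CSet G A c m := by
        refine ⟨h1, h2, ?_⟩
        intro x y hadj
        by_cases hp : (x = u ∧ y = v) ∨ (x = v ∧ y = u)
        · rcases hp with ⟨rfl, rfl⟩ | ⟨rfl, rfl⟩
          · exact h
          · exact fun h' => h h'.symm
        · exact h3 x y ⟨hadj, hp⟩
      exact ⟨Sum.inl ⟨cc, hmem⟩, rfl⟩


theorem OSet_base (h : ∀ x y : V, ¬ G.Adj x y) :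
    OSet G A c = {fun _ _ => False} := by
  ext σ
  constructor
  · rintro ⟨p1, -, -, -⟩
    have : σ = fun _ _ => False := by
      funext x y
      exact eq_false (fun hs => h x y (p1 x y hs))
    exact this
  · intro hσ
    have hσ' : σ = fun _ _ => False := hσ
    subst hσ'
    refine ⟨fun x y h' => h'.elim, fun x y hadj => absurd hadj (h x y), ?_, ?_⟩
    · intro w hw
      cases hw with
      | single h' => exact h'
      | tail _ h' => exact h'
    · intro a _ b _ _ _ hw
      cases hw with
      | single h' => exact h'
      | tail _ h' => exact h'

theorem card_OSet_base (h : ∀ x y : V, ¬ G.Adj x y) :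
    Nat.card (OSet G A c) = 1 := by
  rw [Nat.card_coe_set_eq, OSet_base h, Set.ncard_singleton]

open scoped Classical in
/-- Extending a coloring of the complement of `A` by `c`. -/
noncomputable def extA (A : Set V) (c : V → ℕ) {m : ℕ} (g : ↑Aᶜ → ↑(Set.Icc 1 m)) : V → ℕ :=
  fun x => if h : x ∈ A then c x else ↑(g ⟨x, h⟩)

open scoped Classical in
theorem card_CSet_base [Finite V] {k : ℕ} (h : ∀ x y : V, ¬ G.Adj x y)
    (hc : ∀ a ∈ A, 1 ≤ c a ∧ c a ≤ k) {m : ℕ} (hm : k ≤ m) :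
    Nat.card (CSet G A c m) = m ^ (Aᶜ.ncard) := by
  have hcard : Nat.card (CSet G A c m) =
      Nat.card ((↑(Aᶜ) : Type _) → ↑(Set.Icc 1 m)) := by
    refine Nat.card_eq_of_bijective
      (fun cc (x : ↑(Aᶜ)) => (⟨cc.1 ↑x, Set.mem_Icc.mpr (cc.2.1 ↑x)⟩ : ↑(Set.Icc 1 m)))
      ⟨?_, ?_⟩
    · rintro ⟨cc1, hc1⟩ ⟨cc2, hc2⟩ heq
      apply Subtype.ext
      funext x
      show cc1 x = cc2 x
      by_cases hx : x ∈ A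
      · rw [hc1.2.1 x hx, hc2.2.1 x hx]
      · have := congrFun heq ⟨x, hx⟩
        exact congrArg Subtype.val this
    · intro g
      have hmem : extA A c g ∈ CSet G A c m := by
        refine ⟨?_, ?_, fun x y hadj => absurd hadj (h x y)⟩
        · intro x
          unfold extA
          by_cases hx : x ∈ A
          · rw [dif_pos hx]
            exact ⟨(hc x hx).1, le_trans (hc x hx).2 hm⟩
          · rw [dif_neg hx]
            exact Set.mem_Icc.mp (g ⟨x, hx⟩).2
        · intro a ha
          unfold extA
          rw [dif_pos ha]
      refine ⟨⟨extA A c g, hmem⟩, ?_⟩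
      funext x
      apply Subtype.ext
      show extA A c g ↑x = ↑(g x)
      unfold extA
      rw [dif_neg x.2]
  have hIcc : Nat.card ↑(Set.Icc 1 m) = m := by
    rw [Nat.card_coe_set_eq, ← Finset.coe_Icc, Set.ncard_coe_finset, Nat.card_Icc]
    omega
  rw [hcard, Nat.card_fun, hIcc, Nat.card_coe_set_eq]

/-- The number of ordered adjacent pairs. -/
noncomputable def msr (G : SimpleGraph V) : ℕ := {p : V × V | G.Adj p.1 p.2}.ncard

theorem msr_eq_zero [Finite V] (h : msr G = 0) : ∀ x y : V, ¬ G.Adj x y := by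
  intro x y hadj
  have := (Set.ncard_eq_zero (Set.toFinite _)).mp h
  exact absurd this (Set.nonempty_iff_ne_empty.mp ⟨(x, y), hadj⟩)

theorem msr_pos [Finite V] (h : msr G ≠ 0) : ∃ u v : V, G.Adj u v := by
  obtain ⟨⟨x, y⟩, hxy⟩ := Set.nonempty_of_ncard_ne_zero h
  exact ⟨x, y, hxy⟩

theorem msr_del_lt [Finite V] (huv : G.Adj u v) : msr (del G u v) < msr G := by
  refine Set.ncard_lt_ncard ?_ (Set.toFinite _)
  constructor
  · rintro ⟨x, y⟩ h
    exact h.1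
  · intro hsub
    have : (u, v) ∈ {p : V × V | (del G u v).Adj p.1 p.2} := hsub huv
    exact this.2 (Or.inl ⟨rfl, rfl⟩)

open scoped Classical in
theorem msr_con_le [Finite V] (huv : G.Adj u v) : msr (con G u v) ≤ msr (del G u v) := by
  have key : ∀ (x y : {x : V // x ≠ v}), (con G u v).Adj x y → ¬ G.Adj ↑x ↑y →
      (x : V) ≠ u → (y : V) = u := by
    intro x y hxy hA hxu
    rcases hxy.2 with hd | ⟨hxu', -⟩ | ⟨hyu, -⟩
    · exact absurd hd hA
    · exact absurd hxu' hxu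
    · exact hyu
  refine Set.ncard_le_ncard_of_injOn
    (fun p : {x : V // x ≠ v} × {x : V // x ≠ v} =>
      if G.Adj ↑p.1 ↑p.2 then ((↑p.1 : V), (↑p.2 : V))
      else if (p.1 : V) = u then (v, ↑p.2) else (↑p.1, v)) ?_ ?_ (Set.toFinite _)
  · rintro ⟨x, y⟩ hp
    dsimp only at hp ⊢
    obtain ⟨hne, hd⟩ := hp
    by_cases hA : G.Adj ↑x ↑y
    · rw [if_pos hA]
      refine ⟨hA, ?_⟩
      rintro (⟨-, h'⟩ | ⟨h', -⟩)
      · exact y.2 h'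
      · exact x.2 h'
    · rw [if_neg hA]
      by_cases hxu : (x : V) = u
      · rw [if_pos hxu]
        rcases hd with hd | ⟨-, hd⟩ | ⟨hyu, hd⟩
        · exact absurd hd hA
        · refine ⟨hd, ?_⟩
          rintro (⟨h', -⟩ | ⟨-, h'⟩)
          · exact huv.ne h'.symm
          · exact hne (Subtype.ext (hxu.trans h'.symm))
        · exact absurd (Subtype.ext (hxu.trans hyu.symm)) hne
      · rw [if_neg hxu]
        rcases hd with hd | ⟨hxu', -⟩ | ⟨hyu, hd⟩
        · exact absurd hd hA
        · exact absurd hxu' hxu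
        · refine ⟨hd, ?_⟩
          rintro (⟨h', -⟩ | ⟨h', -⟩)
          · exact hxu h'
          · exact x.2 h'
  · rintro ⟨x1, y1⟩ hp1 ⟨x2, y2⟩ hp2 heq
    dsimp only at hp1 hp2 heq
    by_cases a1 : G.Adj ↑x1 ↑y1 <;> by_cases a2 : G.Adj ↑x2 ↑y2
    · rw [if_pos a1, if_pos a2, Prod.mk.injEq] at heq
      exact Prod.ext (Subtype.ext heq.1) (Subtype.ext heq.2)
    · rw [if_pos a1, if_neg a2] at heq
      by_cases b2 : (x2 : V) = u
      · rw [if_pos b2, Prod.mk.injEq] at heq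
        exact absurd heq.1 x1.2
      · rw [if_neg b2, Prod.mk.injEq] at heq
        exact absurd heq.2 y1.2
    · rw [if_neg a1, if_pos a2] at heq
      by_cases b1 : (x1 : V) = u
      · rw [if_pos b1, Prod.mk.injEq] at heq
        exact absurd heq.1.symm x2.2
      · rw [if_neg b1, Prod.mk.injEq] at heq
        exact absurd heq.2.symm y2.2
    · rw [if_neg a1, if_neg a2] at heq
      by_cases b1 : (x1 : V) = u <;> by_cases b2 : (x2 : V) = u
      · rw [if_pos b1, if_pos b2, Prod.mk.injEq] at heq
        exact Prod.ext (Subtype.ext (b1.trans b2.symm)) (Subtype.ext heq.2)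
      · rw [if_pos b1, if_neg b2, Prod.mk.injEq] at heq
        exact absurd heq.1.symm x2.2
      · rw [if_neg b1, if_pos b2, Prod.mk.injEq] at heq
        exact absurd heq.1 x1.2
      · rw [if_neg b1, if_neg b2, Prod.mk.injEq] at heq
        exact Prod.ext (Subtype.ext heq.1)
          (Subtype.ext ((key x1 y1 hp1 a1 b1).trans (key x2 y2 hp2 a2 b2).symm))


theorem ncard_compl_con [Finite V] (hvA : v ∉ A) :
    ({x : {x : V // x ≠ v} | ↑x ∈ A}ᶜ).ncard + 1 = Aᶜ.ncard := by
  have h1 : Subtype.val '' ({x : {x : V // x ≠ v} | ↑x ∈ A}ᶜ) = Aᶜ \ {v} := by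
    ext x
    constructor
    · rintro ⟨y, hy, rfl⟩
      exact ⟨hy, y.2⟩
    · rintro ⟨hxa, hxv⟩
      exact ⟨⟨x, hxv⟩, hxa, rfl⟩
  have h2 := Set.ncard_image_of_injective ({x : {x : V // x ≠ v} | ↑x ∈ A}ᶜ)
    (Subtype.val_injective)
  rw [h1] at h2
  rw [← h2]
  exact Set.ncard_diff_singleton_add_one hvA (Set.toFinite _)

universe u

/-- The deletion-contraction induction. -/
theorem key (n : ℕ) : ∀ (V : Type u) [Finite V] (G : SimpleGraph V) (A : Set V)
    (c : V → ℕ) (k : ℕ), 1 ≤ k → (∀ a ∈ A, 1 ≤ c a ∧ c a ≤ k) → msr G ≤ n →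
    ∃ χ : Polynomial ℝ, (∀ m : ℕ, k ≤ m → χ.eval (m : ℝ) = Nat.card (CSet G A c m)) ∧
      χ.eval (-1) = (-1) ^ (Aᶜ.ncard) * Nat.card (OSet G A c) := by
  induction n with
  | zero =>
    intro V _ G A c k hk hc hm
    have hbase := msr_eq_zero (Nat.le_zero.mp hm)
    refine ⟨Polynomial.X ^ (Aᶜ.ncard), ?_, ?_⟩
    · intro m hm'
      rw [card_CSet_base hbase hc hm']
      push_cast
      simp
    · rw [card_OSet_base hbase]
      push_cast
      simp
  | succ n ih =>
    intro V _ G A c k hk hc hm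
    by_cases h0 : msr G ≤ n
    · exact ih V G A c k hk hc h0
    · obtain ⟨u, v, huv⟩ := msr_pos (V := V) (fun h => h0 (by rw [h]; exact Nat.zero_le n))
      -- the main deletion-contraction step, assuming `v ∉ A`
      have step : ∀ (u v : V), G.Adj u v → v ∉ A →
          ∃ χ : Polynomial ℝ,
            (∀ m : ℕ, k ≤ m → χ.eval (m : ℝ) = Nat.card (CSet G A c m)) ∧
            χ.eval (-1) = (-1) ^ (Aᶜ.ncard) * Nat.card (OSet G A c) := by
        clear huv u v
        intro u v huv hvA
        have hmd : msr (del G u v) ≤ n := by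
          have : msr (del G u v) < msr G := msr_del_lt huv
          omega
        have hmc : msr (con G u v) ≤ n := le_trans (msr_con_le huv) hmd
        obtain ⟨χd, hd1, hd2⟩ := ih V (del G u v) A c k hk hc hmd
        obtain ⟨χc, hc1, hc2⟩ := ih {x : V // x ≠ v} (con G u v)
          {x : {x : V // x ≠ v} | ↑x ∈ A} (fun x => c ↑x) k hk
          (fun a ha => hc ↑a (by exact ha)) hmc
        refine ⟨χd - χc, ?_, ?_⟩
        · intro m hm'
          rw [Polynomial.eval_sub, hd1 m hm', hc1 m hm', card_CSet_case3 huv hvA m]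
          push_cast
          ring
        · rw [Polynomial.eval_sub, hd2, hc2, card_OSet_case3 huv hvA,
            ← ncard_compl_con hvA]
          push_cast [pow_succ]
          ring
      by_cases huA : u ∈ A <;> by_cases hvA : v ∈ A
      · -- both endpoints precolored
        rcases lt_trichotomy (c u) (c v) with hlt | heq | hgt
        · have hmd : msr (del G u v) ≤ n := by
            have := msr_del_lt (u := u) (v := v) huv
            omega
          obtain ⟨χ, h1, h2⟩ := ih V (del G u v) A c k hk hc hmd
          refine ⟨χ, ?_, ?_⟩
          · intro m hm'
            rw [h1 m hm', CSet_case2 huv huA hvA (ne_of_lt hlt) m]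
          · rw [h2, card_OSet_case2 huv huA hvA hlt]
        · refine ⟨0, ?_, ?_⟩
          · intro m hm'
            rw [CSet_case1 huv huA hvA heq m]
            simp
          · rw [OSet_case1 huv huA hvA heq]
            simp
        · have hmd : msr (del G v u) ≤ n := by
            have := msr_del_lt (u := v) (v := u) huv.symm
            omega
          obtain ⟨χ, h1, h2⟩ := ih V (del G v u) A c k hk hc hmd
          refine ⟨χ, ?_, ?_⟩
          · intro m hm'
            rw [h1 m hm', CSet_case2 huv.symm hvA huA (ne_of_lt hgt) m]
          · rw [h2, card_OSet_case2 huv.symm hvA huA hgt]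
      · exact step u v huv hvA
      · exact step v u huv.symm huA
      · exact step u v huv hvA


end Stmt19

/-- `|χ_{G,c}(-1)|` counts the acyclic orientations `σ` of `G` with no
directed path from `a` to `b` for distinct `a, b ∈ A` with `c(a) ≥ c(b)`. -/
theorem stmt19 (V : Type*) [Fintype V] (G : SimpleGraph V) (A : Set V)
    (k : ℕ) (hk : 1 ≤ k) (c : V → ℕ) (hc : ∀ a ∈ A, 1 ≤ c a ∧ c a ≤ k)
    (χ : Polynomial ℝ)
    (hχ : ∀ m : ℕ, k ≤ m →
      χ.eval (m : ℝ) =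
        Nat.card {cc : V → ℕ | (∀ v, 1 ≤ cc v ∧ cc v ≤ m) ∧ (∀ a ∈ A, cc a = c a) ∧
          ∀ u v : V, G.Adj u v → cc u ≠ cc v}) :
    |χ.eval (-1 : ℝ)| =
      Nat.card {σ : V → V → Prop |
        (∀ u v : V, σ u v → G.Adj u v) ∧
        (∀ u v : V, G.Adj u v → (σ u v ↔ ¬ σ v u)) ∧
        (∀ v : V, ¬ Relation.TransGen σ v v) ∧
        (∀ a ∈ A, ∀ b ∈ A, a ≠ b → c b ≤ c a → ¬ Relation.TransGen σ a b)} := by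
  obtain ⟨χ₀, h1, h2⟩ := Stmt19.key (Stmt19.msr G) V G A c k hk hc le_rfl
  have hset : ∀ m : ℕ, k ≤ m → χ.eval (m : ℝ) = χ₀.eval (m : ℝ) := by
    intro m hm
    exact (hχ m hm).trans (h1 m hm).symm
  have heq : χ = χ₀ := by
    have hroot : {x : ℝ | (χ - χ₀).IsRoot x}.Infinite := by
      apply Set.infinite_of_injective_forall_mem (f := fun i : ℕ => ((i + k : ℕ) : ℝ))
      · intro a b hab
        simp only [Nat.cast_inj] at hab
        omega
      · intro i
        simp only [Set.mem_setOf_eq, Polynomial.IsRoot, Polynomial.eval_sub]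
        rw [sub_eq_zero]
        exact hset (i + k) (by omega)
    exact sub_eq_zero.mp (Polynomial.eq_zero_of_infinite_isRoot _ hroot)
  rw [heq, h2, abs_mul, abs_pow, abs_neg, abs_one, one_pow, one_mul, Nat.abs_cast]
  rfl
end
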